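/- arXiv:2510.11571 — 9 statements merged into one kernel-verified Lean document; each statement's English description precedes it below -/
import Mathlib

section
/- Let n ≥ 1 and let 0 ≤ x_1 ≤ x_2 ≤ … ≤ x_n ≤ 1. Then there exists k ∈ {1, …, n+1} such that the point x* = k/(n+1) minimizes the function x ↦ E(x_1, …, x_n, x) over x ∈ [0,1]; moreover, if 2 ≤ k ≤ n, then x_{k−1} ≤ k/(n+1) ≤ x_k. -/
/-- The energy of a configuration of `N` points in `[0,1]`:
`E(x_1, …, x_N) = min_{π ∈ S_N} ∑_{i=1}^N |x_{π(i)} − i/N|`. -/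
noncomputable def energy {N : ℕ} (x : Fin N → ℝ) : ℝ :=
  Finset.univ.inf' Finset.univ_nonempty
    (fun π : Equiv.Perm (Fin N) => ∑ i : Fin N, |x (π i) - (((i : ℕ) : ℝ) + 1) / (N : ℝ)|)



lemma four_pt {A B C D : ℝ} (hAB : A ≤ B) (hCD : C ≤ D) :
    |A - C| + |B - D| ≤ |A - D| + |B - C| := by
  rcases abs_cases (A - C) with ⟨h1, _⟩ | ⟨h1, _⟩ <;>
  rcases abs_cases (B - D) with ⟨h2, _⟩ | ⟨h2, _⟩ <;>
  rcases abs_cases (A - D) with ⟨h3, _⟩ | ⟨h3, _⟩ <;>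
  rcases abs_cases (B - C) with ⟨h4, _⟩ | ⟨h4, _⟩ <;>
  linarith

lemma rearr {N : ℕ} (a t : Fin N → ℝ) (ha : Monotone a) (ht : Monotone t) :
    ∀ (c : ℕ) (σ : Equiv.Perm (Fin N)), σ.support.card ≤ c →
      ∑ i, |a i - t i| ≤ ∑ i, |a i - t (σ i)| := by
  intro c
  induction c with
  | zero =>
    intro σ hσ
    have : σ = 1 := by
      rw [← Equiv.Perm.support_eq_empty_iff]
      exact Finset.card_eq_zero.mp (Nat.le_zero.mp hσ)
    simp [this]
  | succ c ih =>
    intro σ hσ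
    by_cases h1 : σ = 1
    · simp [h1]
    · have hne : σ.support.Nonempty := by
        rwa [Finset.nonempty_iff_ne_empty, ne_eq, Equiv.Perm.support_eq_empty_iff]
      set m := σ.support.max' hne with hm
      have hmS : m ∈ σ.support := Finset.max'_mem _ _
      have hσm : σ m ≠ m := Equiv.Perm.mem_support.mp hmS
      have hp : σ m < m := by
        rcases lt_trichotomy (σ m) m with h | h | h
        · exact h
        · exact absurd h hσm
        · exfalso
          have hmem : σ m ∉ σ.support := fun hc => absurd (Finset.le_max' _ _ hc) (not_le.mpr h)
          have : σ (σ m) = σ m := Equiv.Perm.notMem_support.mp hmem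
          exact hσm (σ.injective this)
      set q := σ⁻¹ m with hqdef
      have hσq : σ q = m := σ.apply_symm_apply m
      have hqS : q ∈ σ.support := by
        rw [Equiv.Perm.mem_support, hσq]
        intro h
        exact hσm (by rw [h, hσq]; exact h)
      have hq : q < m := lt_of_le_of_ne (Finset.le_max' _ _ hqS)
        (fun h => hσm (by rw [← h, hσq]; exact h.symm))
      set σ' := σ * Equiv.swap q m with hσ'def
      have hσ'q : σ' q = σ m := by
        simp [hσ'def, Equiv.Perm.mul_apply, Equiv.swap_apply_left]
      have hσ'm : σ' m = m := by
        simp [hσ'def, Equiv.Perm.mul_apply, Equiv.swap_apply_right, hσq]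
      have hσ'other : ∀ i, i ≠ q → i ≠ m → σ' i = σ i := by
        intro i hiq him
        simp [hσ'def, Equiv.Perm.mul_apply, Equiv.swap_apply_of_ne_of_ne hiq him]
      have hsub : σ'.support ⊆ σ.support.erase m := by
        intro i hi
        rw [Equiv.Perm.mem_support] at hi
        rw [Finset.mem_erase]
        constructor
        · intro h; rw [h] at hi; exact hi hσ'm
        · rw [Equiv.Perm.mem_support]
          by_cases hiq : i = q
          · rw [hiq, hσq]; exact ne_of_gt hq
          · by_cases him : i = m
            · rw [him]; exact hσm
            · rwa [← hσ'other i hiq him]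
      have hcard : σ'.support.card ≤ c := by
        have h1 := Finset.card_le_card hsub
        have h2 := Finset.card_erase_of_mem hmS
        have h3 : 1 ≤ σ.support.card := Finset.card_pos.mpr ⟨m, hmS⟩
        omega
      have hstep : ∑ i, |a i - t (σ' i)| ≤ ∑ i, |a i - t (σ i)| := by
        have hqm : q ≠ m := ne_of_lt hq
        have hsplit : ∀ H : Fin N → ℝ,
            ∑ i, H i = H q + (H m + ∑ i ∈ (Finset.univ.erase q).erase m, H i) := by
          intro H
          rw [Finset.add_sum_erase _ H (Finset.mem_erase.mpr ⟨(Ne.symm hqm), Finset.mem_univ m⟩),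
            Finset.add_sum_erase _ H (Finset.mem_univ q)]
        rw [hsplit (fun i => |a i - t (σ' i)|), hsplit (fun i => |a i - t (σ i)|)]
        have hrest : ∑ i ∈ (Finset.univ.erase q).erase m, |a i - t (σ' i)|
            = ∑ i ∈ (Finset.univ.erase q).erase m, |a i - t (σ i)| := by
          refine Finset.sum_congr rfl fun i hi => ?_
          rw [Finset.mem_erase, Finset.mem_erase] at hi
          rw [hσ'other i hi.2.1 hi.1]
        have h4 := four_pt (ha hq.le) (ht hp.le) (A := a q) (B := a m) (C := t (σ m)) (D := t m)
        rw [hσ'q, hσ'm, hσq]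
        linarith
      exact le_trans (ih σ' hcard) hstep

/-- for sorted points `0 ≤ x_1 ≤ … ≤ x_n ≤ 1`, some `x* = k/(n+1)` with
`1 ≤ k ≤ n+1` minimizes `x ↦ E(x_1,…,x_n,x)` over `[0,1]`; moreover if `2 ≤ k ≤ n` then
`x_{k−1} ≤ k/(n+1) ≤ x_k`. -/
theorem stmt_0 (n : ℕ) (hn : 1 ≤ n) (x : Fin n → ℝ)
    (hmono : Monotone x) (hx : ∀ i, x i ∈ Set.Icc (0 : ℝ) 1) :
    ∃ k : ℕ, 1 ≤ k ∧ k ≤ n + 1 ∧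
      (∀ y ∈ Set.Icc (0 : ℝ) 1,
        energy (Fin.snoc x ((k : ℝ) / ((n : ℝ) + 1))) ≤ energy (Fin.snoc x y)) ∧
      (∀ (h2 : 2 ≤ k) (hkn : k ≤ n),
        x ⟨k - 2, by omega⟩ ≤ (k : ℝ) / ((n : ℝ) + 1) ∧
        (k : ℝ) / ((n : ℝ) + 1) ≤ x ⟨k - 1, by omega⟩) := by
  classical
  have hnpos : (0 : ℝ) < (n : ℝ) + 1 := by positivity
  set t : Fin (n + 1) → ℝ := fun i => (((i : ℕ) : ℝ) + 1) / ((n : ℝ) + 1) with ht_def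
  have htmono : Monotone t := by
    intro i j hij
    have h : ((i : ℕ) : ℝ) ≤ ((j : ℕ) : ℝ) := Nat.cast_le.mpr hij
    simp only [ht_def]
    exact div_le_div_of_nonneg_right (by linarith) hnpos.le
  set g : Fin (n + 1) → ℝ := fun k => ∑ j, |x j - t (k.succAbove j)| with hg_def
  -- energy rewritten with t
  have henergy : ∀ y : ℝ, energy (Fin.snoc x y) = Finset.univ.inf' Finset.univ_nonempty
      (fun π : Equiv.Perm (Fin (n + 1)) => ∑ i, |(Fin.snoc x y : Fin (n+1) → ℝ) (π i) - t i|) := by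
    intro y
    unfold energy
    congr 1
    funext π
    refine Finset.sum_congr rfl fun i _ => ?_
    rw [ht_def]
    push_cast
    ring_nf
  -- upper bound
  have hub : ∀ (k : Fin (n + 1)) (y : ℝ), energy (Fin.snoc x y) ≤ |y - t k| + g k := by
    intro k y
    rw [henergy]
    set π : Equiv.Perm (Fin (n + 1)) :=
      (finSuccEquiv' k).trans (finSuccEquiv' (Fin.last n)).symm with hπ
    refine le_trans (Finset.inf'_le _ (Finset.mem_univ π)) ?_
    rw [Fin.sum_univ_succAbove (fun i => |(Fin.snoc x y : Fin (n+1) → ℝ) (π i) - t i|) k]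
    have h1 : π k = Fin.last n := by
      simp [hπ, Equiv.trans_apply]
    have h2 : ∀ j : Fin n, π (k.succAbove j) = Fin.castSucc j := by
      intro j
      simp [hπ, Equiv.trans_apply, ← Fin.succAbove_last]
    rw [h1]
    simp only [Fin.snoc_last]
    refine add_le_add le_rfl ?_
    refine le_of_eq (Finset.sum_congr rfl fun j _ => ?_)
    rw [h2 j, Fin.snoc_castSucc]
  -- minimizer of g
  obtain ⟨k0, -, hk0⟩ := Finset.exists_min_image Finset.univ g Finset.univ_nonempty
  -- lower bound
  have hlb : ∀ y : ℝ, g k0 ≤ energy (Fin.snoc x y) := by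
    intro y
    rw [henergy]
    refine Finset.le_inf' _ _ fun π _ => ?_
    set k := π⁻¹ (Fin.last n) with hk
    have hπk : π k = Fin.last n := π.apply_symm_apply _
    have hne2 : ∀ j : Fin n, π (k.succAbove j) ≠ Fin.last n := by
      intro j h
      exact Fin.succAbove_ne k j (π.injective (h.trans hπk.symm))
    set τ : Fin n → Fin n := fun j => (π (k.succAbove j)).castPred (hne2 j) with hτ
    have hτc : ∀ j, Fin.castSucc (τ j) = π (k.succAbove j) := by
      intro j; rw [hτ]; exact Fin.castSucc_castPred _ _
    have hτinj : Function.Injective τ := by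
      intro j1 j2 h
      have h' : π (k.succAbove j1) = π (k.succAbove j2) := by
        rw [← hτc, ← hτc, h]
      exact Fin.succAbove_right_injective (π.injective h')
    let τe : Equiv.Perm (Fin n) := Equiv.ofBijective τ (Finite.injective_iff_bijective.mp hτinj)
    rw [Fin.sum_univ_succAbove (fun i => |(Fin.snoc x y : Fin (n+1) → ℝ) (π i) - t i|) k]
    have hrest : ∑ j, |(Fin.snoc x y : Fin (n+1) → ℝ) (π (k.succAbove j)) - t (k.succAbove j)|
        = ∑ j, |x (τ j) - t (k.succAbove j)| := by
      refine Finset.sum_congr rfl fun j _ => ?_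
      rw [← hτc j, Fin.snoc_castSucc]
    have hre : g k ≤ ∑ j, |x (τ j) - t (k.succAbove j)| := by
      have hu : Monotone (fun j : Fin n => t (k.succAbove j)) :=
        htmono.comp (Fin.strictMono_succAbove k).monotone
      set σ0 : Equiv.Perm (Fin n) := τe⁻¹ with hσ0
      have h1 := rearr x (fun j => t (k.succAbove j)) hmono hu σ0.support.card σ0 le_rfl
      have h2 : ∑ j, |x j - t (k.succAbove (σ0 j))|
          = ∑ j, |x (τ j) - t (k.succAbove j)| := by
        rw [← Equiv.sum_comp τe (fun j => |x j - t (k.succAbove (σ0 j))|)]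
        refine Finset.sum_congr rfl fun j _ => ?_
        have : σ0 (τe j) = j := by rw [hσ0]; exact τe.symm_apply_apply j
        rw [this]
        rfl
      rw [hg_def]
      calc ∑ j, |x j - t (k.succAbove j)| ≤ _ := h1
        _ = _ := h2
    calc g k0 ≤ g k := hk0 k (Finset.mem_univ k)
      _ ≤ ∑ j, |x (τ j) - t (k.succAbove j)| := hre
      _ ≤ |(Fin.snoc x y : Fin (n+1) → ℝ) (π k) - t k| + ∑ j, |(Fin.snoc x y : Fin (n+1) → ℝ) (π (k.succAbove j)) - t (k.succAbove j)| := by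
          rw [hrest]
          have : (0:ℝ) ≤ |(Fin.snoc x y : Fin (n+1) → ℝ) (π k) - t k| := abs_nonneg _
          linarith
  -- the answer
  refine ⟨k0.val + 1, by omega, by omega, ?_, ?_⟩
  · intro y _
    have hcast : ((↑(k0.val + 1) : ℝ)) / ((n : ℝ) + 1) = t k0 := by
      simp only [ht_def]; push_cast; ring
    rw [hcast]
    refine le_trans (le_trans (hub k0 (t k0)) ?_) (hlb y)
    simp
  · intro h2 hkn
    have hk1 : 1 ≤ k0.val := by omega
    have hkn' : k0.val < n := by omega
    -- upper neighbor comparison gives t k0 ≤ x ⟨k0.val⟩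
    have hright : t k0 ≤ x ⟨k0.val, hkn'⟩ := by
      set js : Fin n := ⟨k0.val, hkn'⟩ with hjs
      set k1 : Fin (n + 1) := ⟨k0.val + 1, by omega⟩ with hk1'
      have hA : ∀ j : Fin n, j ≠ js → k1.succAbove j = k0.succAbove j := by
        intro j hj
        have hjval : j.val ≠ k0.val := fun h => hj (Fin.ext h)
        rcases lt_or_gt_of_ne hjval with h | h
        · rw [Fin.succAbove_of_castSucc_lt k0 j (by rw [Fin.lt_def]; simpa using h),
            Fin.succAbove_of_castSucc_lt k1 j (by rw [Fin.lt_def]; simp [hk1']; omega)]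
        · rw [Fin.succAbove_of_le_castSucc k0 j (by rw [Fin.le_def]; simpa using h.le),
            Fin.succAbove_of_le_castSucc k1 j (by rw [Fin.le_def]; simp [hk1']; omega)]
      have hd : g k1 - g k0
          = |x js - t (k1.succAbove js)| - |x js - t (k0.succAbove js)| := by
        rw [hg_def]
        rw [← Finset.sum_sub_distrib]
        refine Finset.sum_eq_single_of_mem js (Finset.mem_univ js) fun j _ hj => ?_
        rw [hA j hj, sub_self]
      have e1 : k1.succAbove js = k0 := by
        rw [Fin.succAbove_of_castSucc_lt k1 js (by rw [Fin.lt_def]; simp [hk1', hjs])]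
        exact Fin.ext (by simp [hjs])
      have e2 : (k0.succAbove js : Fin (n+1)).val = k0.val + 1 := by
        rw [Fin.succAbove_of_le_castSucc k0 js (by rw [Fin.le_def]; simp [hjs])]
        simp [hjs]
      have hts : t (k0.succAbove js) = (((k0.val : ℝ)) + 2) / ((n : ℝ) + 1) := by
        simp only [ht_def]; rw [e2]; push_cast; ring
      have hglee : 0 ≤ g k1 - g k0 := by
        have := hk0 k1 (Finset.mem_univ k1)
        linarith
      rw [hd, e1, hts] at hglee
      by_contra hcon
      push_neg at hcon
      have hlt : ((k0.val : ℝ) + 1) / ((n : ℝ) + 1) < ((k0.val : ℝ) + 2) / ((n : ℝ) + 1) :=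
        div_lt_div_of_pos_right (by linarith) hnpos
      have ht0 : t k0 = ((k0.val : ℝ) + 1) / ((n : ℝ) + 1) := rfl
      rw [ht0] at hcon hglee
      rw [abs_of_neg (by linarith), abs_of_neg (by linarith)] at hglee
      linarith
    -- lower neighbor comparison gives x ⟨k0.val - 1⟩ ≤ t k0
    have hleft : x ⟨k0.val - 1, by omega⟩ ≤ t k0 := by
      set jb : Fin n := ⟨k0.val - 1, by omega⟩ with hjb
      set km : Fin (n + 1) := ⟨k0.val - 1, by omega⟩ with hkm
      have hA : ∀ j : Fin n, j ≠ jb → km.succAbove j = k0.succAbove j := by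
        intro j hj
        have hjval : j.val ≠ k0.val - 1 := fun h => hj (Fin.ext (by simp [hjb]; omega))
        rcases lt_or_gt_of_ne hjval with h | h
        · rw [Fin.succAbove_of_castSucc_lt k0 j (by rw [Fin.lt_def]; simp; omega),
            Fin.succAbove_of_castSucc_lt km j (by rw [Fin.lt_def]; simp [hkm]; omega)]
        · rw [Fin.succAbove_of_le_castSucc k0 j (by rw [Fin.le_def]; simp; omega),
            Fin.succAbove_of_le_castSucc km j (by rw [Fin.le_def]; simp [hkm]; omega)]
      have hd : g km - g k0
          = |x jb - t (km.succAbove jb)| - |x jb - t (k0.succAbove jb)| := by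
        rw [hg_def]
        rw [← Finset.sum_sub_distrib]
        refine Finset.sum_eq_single_of_mem jb (Finset.mem_univ jb) fun j _ hj => ?_
        rw [hA j hj, sub_self]
      have e1 : km.succAbove jb = k0 := by
        rw [Fin.succAbove_of_le_castSucc km jb (by rw [Fin.le_def]; simp [hkm, hjb])]
        exact Fin.ext (by simp [hjb]; omega)
      have e2 : (k0.succAbove jb : Fin (n+1)).val = k0.val - 1 := by
        rw [Fin.succAbove_of_castSucc_lt k0 jb (by rw [Fin.lt_def]; show k0.val - 1 < k0.val; omega)]
        simp [hjb]
      have hts : t (k0.succAbove jb) = ((k0.val : ℝ)) / ((n : ℝ) + 1) := by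
        simp only [ht_def]; rw [e2]
        have : ((k0.val - 1 : ℕ) : ℝ) = (k0.val : ℝ) - 1 := by
          rw [Nat.cast_sub hk1]; norm_num
        rw [this]; ring_nf
      have hglee : 0 ≤ g km - g k0 := by
        have := hk0 km (Finset.mem_univ km)
        linarith
      rw [hd, e1, hts] at hglee
      by_contra hcon
      push_neg at hcon
      have hlt : ((k0.val : ℝ)) / ((n : ℝ) + 1) < ((k0.val : ℝ) + 1) / ((n : ℝ) + 1) :=
        div_lt_div_of_pos_right (by linarith) hnpos
      have ht0 : t k0 = ((k0.val : ℝ) + 1) / ((n : ℝ) + 1) := rfl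
      rw [ht0] at hcon hglee
      rw [abs_of_pos (by linarith), abs_of_pos (by linarith)] at hglee
      linarith
    have hcast : ((↑(k0.val + 1) : ℝ)) / ((n : ℝ) + 1) = t k0 := by
      simp only [ht_def]; push_cast; ring
    constructor
    · rw [hcast]
      convert hleft using 2
      exact Fin.ext (by show k0.val + 1 - 2 = k0.val - 1; omega)
    · rw [hcast]
      convert hright using 2
      exact Fin.ext (by show k0.val + 1 - 1 = k0.val; omega)
end

section
/- Let n ≥ 1, let x_1, …, x_n ∈ [0,1] and let x ∈ [0,1]. Then E(x_1, …, x_n) + E(x_1, …, x_n, x) ≥ (1/(n(n+1))) · ∑_{i=1}^{n} min(i, n−i). -/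
lemma keyZ (n a b : ℤ) (h1 : 1 ≤ a) (h2 : a ≤ n) (h3 : 1 ≤ b) (h4 : b ≤ n + 1) :
    min a (n - a) ≤ |a * (n + 1) - b * n| := by
  rcases le_or_gt b a with h | h
  · have hh : a ≤ a * (n + 1) - b * n := by nlinarith [mul_nonneg (sub_nonneg.2 h) (by linarith : (0:ℤ) ≤ n)]
    exact le_trans (min_le_left _ _) (le_trans hh (le_abs_self _))
  · have hh : n - a ≤ -(a * (n + 1) - b * n) := by
      nlinarith [mul_nonneg (by linarith : (0:ℤ) ≤ b - a - 1) (by linarith : (0:ℤ) ≤ n)]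
    exact le_trans (min_le_right _ _) (le_trans hh (neg_le_abs _))

lemma keyR (n a b : ℕ) (h1 : 1 ≤ a) (h2 : a ≤ n) (h3 : 1 ≤ b) (h4 : b ≤ n + 1) :
    ((min a (n - a) : ℕ) : ℝ) / ((n : ℝ) * ((n : ℝ) + 1)) ≤ |(a : ℝ) / n - (b : ℝ) / ((n : ℝ) + 1)| := by
  have hn : (0:ℝ) < n := by exact_mod_cast Nat.lt_of_lt_of_le Nat.zero_lt_one (h1.trans h2)
  have hD : (0:ℝ) < (n:ℝ) * ((n:ℝ) + 1) := by positivity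
  have heq : (a : ℝ) / n - (b : ℝ) / ((n:ℝ) + 1)
      = ((a:ℝ) * ((n:ℝ) + 1) - (b:ℝ) * n) / ((n:ℝ) * ((n:ℝ) + 1)) := by
    field_simp
  rw [heq, abs_div, abs_of_pos hD, div_le_div_iff_of_pos_right hD]
  have hz := keyZ n a b (by exact_mod_cast h1) (by exact_mod_cast h2)
    (by exact_mod_cast h3) (by exact_mod_cast h4)
  have hc : ((min a (n - a) : ℕ) : ℝ) = ((min (a:ℤ) ((n:ℤ) - a) : ℤ) : ℝ) := by
    push_cast [Nat.cast_sub h2]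
    ring_nf
  rw [hc]
  calc ((min (a:ℤ) ((n:ℤ) - a) : ℤ) : ℝ) ≤ ((|(a:ℤ) * ((n:ℤ)+1) - (b:ℤ) * n| : ℤ) : ℝ) := by
        exact_mod_cast hz
    _ = |(a:ℝ) * ((n:ℝ) + 1) - (b:ℝ) * n| := by push_cast; ring_nf

/-- `E(x_1,…,x_n) + E(x_1,…,x_n,x) ≥ (1/(n(n+1))) ∑_{i=1}^n min(i, n−i)`. -/
theorem stmt_1 (n : ℕ) (hn : 1 ≤ n) (x : Fin n → ℝ) (hx : ∀ i, x i ∈ Set.Icc (0 : ℝ) 1)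
    (y : ℝ) (hy : y ∈ Set.Icc (0 : ℝ) 1) :
    energy x + energy (Fin.snoc x y) ≥
      (1 / ((n : ℝ) * ((n : ℝ) + 1))) * ∑ i ∈ Finset.Icc 1 n, ((min i (n - i) : ℕ) : ℝ) := by
  have hnpos : 0 < n := hn
  haveI : NeZero n := ⟨by omega⟩
  obtain ⟨π, -, hπ⟩ := Finset.exists_mem_eq_inf' (Finset.univ_nonempty)
    (fun π : Equiv.Perm (Fin n) => ∑ i : Fin n, |x (π i) - (((i : ℕ) : ℝ) + 1) / (n : ℝ)|)
  obtain ⟨σ, -, hσ⟩ := Finset.exists_mem_eq_inf' (Finset.univ_nonempty)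
    (fun σ : Equiv.Perm (Fin (n+1)) =>
      ∑ i : Fin (n+1), |(Fin.snoc x y : Fin (n+1) → ℝ) (σ i) - (((i : ℕ) : ℝ) + 1) / ((n+1 : ℕ) : ℝ)|)
  have e1 : energy x = ∑ k : Fin n, |x k - (((π⁻¹ k : Fin n) : ℕ) + 1 : ℝ) / (n : ℝ)| := by
    rw [energy, hπ]
    rw [← Equiv.sum_comp π (fun k : Fin n => |x k - (((π⁻¹ k : Fin n) : ℕ) + 1 : ℝ) / (n : ℝ)|)]
    simp
  have e2 : energy (Fin.snoc x y)
      = ∑ m : Fin (n+1), |(Fin.snoc x y : Fin (n+1) → ℝ) m - (((σ⁻¹ m : Fin (n+1)) : ℕ) + 1 : ℝ) / ((n+1 : ℕ) : ℝ)| := by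
    rw [energy, hσ]
    rw [← Equiv.sum_comp σ (fun m : Fin (n+1) =>
      |(Fin.snoc x y : Fin (n+1) → ℝ) m - (((σ⁻¹ m : Fin (n+1)) : ℕ) + 1 : ℝ) / ((n+1 : ℕ) : ℝ)|)]
    simp
  rw [ge_iff_le, e1, e2]
  rw [Fin.sum_univ_castSucc]
  set A : Fin n → ℝ := fun k => (((π⁻¹ k : Fin n) : ℕ) + 1 : ℝ) / (n : ℝ) with hA
  set B : Fin n → ℝ := fun k =>
    (((σ⁻¹ (Fin.castSucc k) : Fin (n+1)) : ℕ) + 1 : ℝ) / ((n+1 : ℕ) : ℝ) with hB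
  have step1 : ∑ k : Fin n, |A k - B k|
      ≤ ∑ k : Fin n, |x k - A k|
        + (∑ k : Fin n, |(Fin.snoc x y : Fin (n+1) → ℝ) (Fin.castSucc k) - B k|
          + |(Fin.snoc x y : Fin (n+1) → ℝ) (Fin.last n) - (((σ⁻¹ (Fin.last n) : Fin (n+1)) : ℕ) + 1 : ℝ) / ((n+1:ℕ):ℝ)|) := by
    have h0 : (0:ℝ) ≤ |(Fin.snoc x y : Fin (n+1) → ℝ) (Fin.last n) - (((σ⁻¹ (Fin.last n) : Fin (n+1)) : ℕ) + 1 : ℝ) / ((n+1:ℕ):ℝ)| :=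
      abs_nonneg _
    have : ∑ k : Fin n, |A k - B k|
        ≤ ∑ k : Fin n, |x k - A k| + ∑ k : Fin n, |x k - B k| := by
      rw [← Finset.sum_add_distrib]
      refine Finset.sum_le_sum fun k _ => ?_
      have := abs_sub (A k - x k) (B k - x k)
      calc |A k - B k| = |(A k - x k) - (B k - x k)| := by ring_nf
        _ ≤ |A k - x k| + |B k - x k| := abs_sub _ _
        _ = |x k - A k| + |x k - B k| := by rw [abs_sub_comm (A k), abs_sub_comm (B k)]
    refine this.trans ?_
    have hsnoc : ∀ k : Fin n, (Fin.snoc x y : Fin (n+1) → ℝ) (Fin.castSucc k) = x k := fun k => by simp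
    simp only [hsnoc]
    linarith
  have step2 : (1 / ((n : ℝ) * ((n : ℝ) + 1))) * ∑ i ∈ Finset.Icc 1 n, ((min i (n - i) : ℕ) : ℝ)
      ≤ ∑ k : Fin n, |A k - B k| := by
    have hper : ∀ k : Fin n,
        ((min (((π⁻¹ k : Fin n) : ℕ) + 1) (n - (((π⁻¹ k : Fin n) : ℕ) + 1)) : ℕ) : ℝ)
          / ((n : ℝ) * ((n : ℝ) + 1)) ≤ |A k - B k| := by
      intro k
      have hb := keyR n (((π⁻¹ k : Fin n) : ℕ) + 1) (((σ⁻¹ (Fin.castSucc k) : Fin (n+1)) : ℕ) + 1)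
        (by omega) (by exact (π⁻¹ k).is_lt) (by omega)
        (by have := (σ⁻¹ (Fin.castSucc k)).is_lt; omega)
      simp only [hA, hB]
      push_cast at hb ⊢
      convert hb using 3 <;> push_cast <;> ring
    calc (1 / ((n : ℝ) * ((n : ℝ) + 1))) * ∑ i ∈ Finset.Icc 1 n, ((min i (n - i) : ℕ) : ℝ)
        = ∑ k : Fin n, ((min (((π⁻¹ k : Fin n) : ℕ) + 1) (n - (((π⁻¹ k : Fin n) : ℕ) + 1)) : ℕ) : ℝ)
          / ((n : ℝ) * ((n : ℝ) + 1)) := by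
          rw [← Finset.sum_div, Equiv.sum_comp π⁻¹
            (fun i : Fin n => ((min (((i : Fin n) : ℕ) + 1) (n - (((i : Fin n) : ℕ) + 1)) : ℕ) : ℝ))]
          rw [Fin.sum_univ_eq_sum_range (fun i => ((min (i + 1) (n - (i + 1)) : ℕ) : ℝ))]
          rw [← Finset.Ico_add_one_right_eq_Icc, Finset.sum_Ico_eq_sum_range]
          have hone : n + 1 - 1 = n := by omega
          rw [hone, one_div, inv_mul_eq_div]
          congr 1
          exact Finset.sum_congr rfl fun i _ => by rw [add_comm 1 i]
      _ ≤ ∑ k : Fin n, |A k - B k| := Finset.sum_le_sum fun k _ => hper k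
  exact step2.trans step1
end

section
/- There exists a constant c > 0 such that for every infinite sequence (x_k)_{k=1}^∞ of points in [0,1] there are infinitely many n ∈ ℕ with min over permutations π of {1, …, n} of ∑_{i=1}^{n} |x_{π(i)} − i/n| ≥ c·√(log n). Equivalently: for every N ∈ ℕ there exists n ≥ N with E(x_1, …, x_n) ≥ c·√(log n). -/
open Finset

namespace S2

open scoped Classical

noncomputable section

variable (m : ℕ) (x : ℕ → ℝ)

def M : ℕ := 2 ^ m
def K : ℕ := 2 ^ (m + 2)

def rad (i u : ℕ) : ℝ := if u / 2 ^ i % 2 = 1 then 1 else -1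

def lam (t : ℝ) (u : ℕ) : ℝ := min t (((u : ℝ) + 1) / K m) - min t ((u : ℝ) / K m)

def ell (t : ℝ) (u : ℕ) : ℝ := 1 / K m - lam m t u

def w (u : ℕ) : ℝ := (2 * (u : ℝ) + 1) / (2 * (K m : ℝ) ^ 2)

def pt (k : ℕ) : ℝ := ((k : ℝ) + 1) / M m

def dd (u v : ℕ) : ℝ :=
  (∑ k ∈ range (M m), ell m (x k) u * ell m (pt m k) v) - (M m : ℝ) * (w m u * w m v)

def pear (g : ℕ → ℕ → ℝ) : ℝ := ∑ u ∈ range (K m), ∑ v ∈ range (K m), dd m x u v * g u v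

def Q (α β c c' : ℕ) : ℝ :=
  ∑ t ∈ range (2 ^ α), ∑ s ∈ range (2 ^ β),
    dd m x (c * 2 ^ α + t) (c' * 2 ^ β + s) *
      (rad (α - 1) (c * 2 ^ α + t) * rad (β - 1) (c' * 2 ^ β + s))

def eps (j c c' : ℕ) : ℝ := if Q m x (m + 2 - j) (j + 1) c c' < 0 then -1 else 1

def ff (j u v : ℕ) : ℝ :=
  eps m x j (u / 2 ^ (m + 2 - j)) (v / 2 ^ (j + 1)) * (rad (m + 1 - j) u * rad j v)

def gam : ℝ := 1 / Real.sqrt ((m : ℝ) + 2)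

def G (u v : ℕ) : ℝ :=
  (∏ j ∈ range (m + 2), (1 + (gam m : ℂ) * Complex.I * (ff m x j u v : ℝ))).im

def gg (n u : ℕ) : ℝ := ∑ s ∈ range 4, G m x u (4 * n + s)

def B (n : ℕ) : ℝ :=
  ∑ u ∈ range (K m), ∑ s ∈ range 4, dd m x u (4 * n + s) * G m x u (4 * n + s)

def Lam (n u : ℕ) : ℝ := ∑ k ∈ range n, ell m (x k) u

def Mid (n : ℕ) : ℝ := ∑ u ∈ range (K m), gg m x n u * (Lam m x n u - (n : ℝ) * w m u)

def f0 (n : ℕ) (t : ℝ) : ℝ := -∑ u ∈ range (K m), gg m x n u * lam m t u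

def inside (α β c c' : ℕ) : Finset ℕ :=
  (range (M m)).filter (fun k =>
    ((c * 2 ^ α : ℕ) : ℝ) / K m < x k ∧ x k < (((c + 1) * 2 ^ α : ℕ) : ℝ) / K m ∧
    ((c' * 2 ^ β : ℕ) : ℝ) / K m < pt m k ∧ pt m k < (((c' + 1) * 2 ^ β : ℕ) : ℝ) / K m)



/-! ### basic facts -/

lemma Kr_pos : (0 : ℝ) < K m := by
  have : (0:ℕ) < K m := Nat.pow_pos (by norm_num)
  exact_mod_cast this

lemma Mr_pos : (0 : ℝ) < M m := by
  have : (0:ℕ) < M m := Nat.pow_pos (by norm_num)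
  exact_mod_cast this

lemma K_eq : (K m : ℝ) = 4 * M m := by
  unfold K M; push_cast [pow_add]; ring

lemma cell_mono (u : ℕ) : (u : ℝ) / K m ≤ ((u : ℝ) + 1) / K m := by
  have hK := Kr_pos m
  gcongr
  linarith

lemma cell_len (u : ℕ) : ((u : ℝ) + 1) / K m - (u : ℝ) / K m = 1 / K m := by
  rw [div_sub_div_same]; norm_num

lemma lam_nonneg (t : ℝ) (u : ℕ) : 0 ≤ lam m t u := by
  have h1 := cell_mono m u
  have h2 := cell_len m u
  have h3 := Kr_pos m
  unfold lam; simp only [min_def]; split_ifs <;> linarith [one_div_pos.mpr h3]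

lemma lam_le (t : ℝ) (u : ℕ) : lam m t u ≤ 1 / K m := by
  have h1 := cell_mono m u
  have h2 := cell_len m u
  have h3 := Kr_pos m
  unfold lam; simp only [min_def]; split_ifs <;> linarith [one_div_pos.mpr h3]

lemma lam_mono (u : ℕ) {t t' : ℝ} (h : t ≤ t') : lam m t u ≤ lam m t' u := by
  have h1 := cell_mono m u
  unfold lam; simp only [min_def]; split_ifs <;> linarith

lemma ell_nonneg (t : ℝ) (u : ℕ) : 0 ≤ ell m t u := by
  unfold ell; linarith [lam_le m t u]

lemma ell_le (t : ℝ) (u : ℕ) : ell m t u ≤ 1 / K m := by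
  unfold ell; linarith [lam_nonneg m t u]

lemma ell_full {t : ℝ} {u : ℕ} (h : t ≤ (u : ℝ) / K m) : ell m t u = 1 / K m := by
  unfold ell lam
  rw [min_eq_left (h.trans (cell_mono m u)), min_eq_left h]; ring

lemma ell_zero {t : ℝ} {u : ℕ} (h : ((u : ℝ) + 1) / K m ≤ t) : ell m t u = 0 := by
  have h2 := cell_len m u
  unfold ell lam
  rw [min_eq_right h, min_eq_right ((cell_mono m u).trans h)]
  linarith

lemma ell_abs_sub (t : ℝ) (u u' : ℕ) : |ell m t u - ell m t u'| ≤ 1 / K m := by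
  have h1 := ell_nonneg m t u
  have h2 := ell_le m t u
  have h3 := ell_nonneg m t u'
  have h4 := ell_le m t u'
  rw [abs_le]; constructor <;> linarith

lemma sum_lam_sub {t t' : ℝ} (h : t ≤ t') :
    ∑ u ∈ range (K m), (lam m t' u - lam m t u) ≤ t' - t := by
  set F : ℕ → ℝ := fun v : ℕ => min t' ((v : ℝ) / K m) - min t ((v : ℝ) / K m) with hF
  have key : ∀ u ∈ range (K m), lam m t' u - lam m t u = F (u+1) - F u := by
    intro u _; simp only [hF, lam]; push_cast; ring
  calc ∑ u ∈ range (K m), (lam m t' u - lam m t u)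
      = ∑ u ∈ range (K m), (F (u+1) - F u) := Finset.sum_congr rfl key
    _ = F (K m) - F 0 := Finset.sum_range_sub F (K m)
    _ ≤ t' - t := by
        have hK := Kr_pos m
        simp only [hF, Nat.cast_zero, zero_div]
        have h1 : min t' ((K m : ℝ) / K m) - min t ((K m : ℝ) / K m) ≤ t' - t := by
          simp only [min_def]; split_ifs <;> linarith
        have h2 : 0 ≤ min t' (0:ℝ) - min t (0:ℝ) := by
          simp only [min_def]; split_ifs <;> linarith
        linarith

/-! ### nat / Rademacher lemmas -/

lemma two_pow_pos (α : ℕ) : 0 < 2^α := Nat.pow_pos (by norm_num)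

lemma div_key {α i t : ℕ} (hαi : α ≤ i) (ht : t < 2^α) (c : ℕ) :
    (c * 2^α + t) / 2^i = c / 2^(i-α) := by
  have h2 : (2:ℕ)^i = 2^α * 2^(i-α) := by rw [← pow_add]; congr 1; omega
  rw [h2, ← Nat.div_div_eq_div_mul]
  congr 1
  rw [mul_comm c, Nat.mul_add_div (two_pow_pos α), Nat.div_eq_of_lt ht, add_zero]

lemma rad_high {α i t : ℕ} (hαi : α ≤ i) (ht : t < 2^α) (c : ℕ) :
    rad i (c * 2^α + t) = rad (i-α) c := by
  unfold rad; rw [div_key hαi ht]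

lemma rad_block {α t : ℕ} (hα : 1 ≤ α) (ht : t < 2^α) (c : ℕ) :
    rad (α-1) (c * 2^α + t) = if t < 2^(α-1) then -1 else 1 := by
  unfold rad
  have hpow : (2:ℕ)^α = 2^(α-1) * 2 := by rw [← pow_succ]; congr 1; omega
  have h2 : c * 2^α + t = t + 2^(α-1) * (c * 2) := by rw [hpow]; ring
  rw [h2, Nat.add_mul_div_left _ _ (two_pow_pos _), Nat.add_mul_mod_self_right]
  rcases lt_or_ge t (2^(α-1)) with h | h
  · rw [Nat.div_eq_of_lt h]
    simp [h]
  · have hdiv : t / 2^(α-1) = 1 := by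
      apply Nat.div_eq_of_lt_le (by omega)
      rw [hpow] at ht; omega
    rw [hdiv]
    simp [not_lt.mpr h]

lemma rad_sq (i u : ℕ) : rad i u * rad i u = 1 := by
  unfold rad; split_ifs <;> norm_num

lemma rad_abs (i u : ℕ) : |rad i u| = 1 := by
  unfold rad; split_ifs <;> norm_num

lemma sum_range_add' (F : ℕ → ℝ) (a b : ℕ) :
    ∑ i ∈ range (a+b), F i = (∑ i ∈ range a, F i) + ∑ i ∈ range b, F (a+i) := by
  induction b with
  | zero => simp
  | succ n ih =>
      rw [show a + (n+1) = (a+n)+1 from rfl, Finset.sum_range_succ, ih, Finset.sum_range_succ]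
      ring

lemma sum_block (C D : ℕ) (F : ℕ → ℝ) :
    ∑ u ∈ range (C*D), F u = ∑ c ∈ range C, ∑ t ∈ range D, F (c*D + t) := by
  induction C with
  | zero => simp
  | succ n ih =>
      rw [show (n+1)*D = n*D + D by ring, sum_range_add', ih, Finset.sum_range_succ]

lemma pow_split {α : ℕ} (hα : 1 ≤ α) : (2:ℕ)^α = 2^(α-1) + 2^(α-1) := by
  have : (2:ℕ)^α = 2^(α-1) * 2 := by rw [← pow_succ]; congr 1; omega
  omega

lemma sum_pair {α : ℕ} (hα : 1 ≤ α) (F : ℕ → ℝ) (c : ℕ) :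
    ∑ t ∈ range (2^α), F (c * 2^α + t) * rad (α-1) (c * 2^α + t)
      = ∑ t ∈ range (2^(α-1)), (F (c * 2^α + (2^(α-1) + t)) - F (c * 2^α + t)) := by
  rw [show range (2^α) = range (2^(α-1) + 2^(α-1)) by rw [← pow_split hα],
    sum_range_add', ← Finset.sum_add_distrib]
  apply Finset.sum_congr rfl
  intro t ht
  have ht' := Finset.mem_range.mp ht
  have h1 : t < 2^α := by rw [pow_split hα]; omega
  have h2 : 2^(α-1) + t < 2^α := by rw [pow_split hα]; omega
  rw [rad_block hα h1, rad_block hα h2]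
  rw [if_pos ht', if_neg (by omega)]
  ring

lemma sum_rad {α : ℕ} (hα : 1 ≤ α) (c : ℕ) :
    ∑ t ∈ range (2^α), rad (α-1) (c * 2^α + t) = 0 := by
  have h := sum_pair hα (fun _ => (1:ℝ)) c
  simp only [one_mul, sub_self, Finset.sum_const_zero] at h
  exact h

lemma sum_w_rad {α : ℕ} (hα : 1 ≤ α) (c : ℕ) :
    ∑ t ∈ range (2^α), w m (c * 2^α + t) * rad (α-1) (c * 2^α + t)
      = ((2:ℝ)^(α-1))^2 / (K m : ℝ)^2 := by
  rw [sum_pair hα (w m) c]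
  have key : ∀ t ∈ range (2^(α-1)),
      w m (c * 2^α + (2^(α-1) + t)) - w m (c * 2^α + t) = (2:ℝ)^(α-1) / (K m : ℝ)^2 := by
    intro t _
    unfold w
    push_cast
    have hK2 : (0:ℝ) < (K m : ℝ)^2 := pow_pos (Kr_pos m) 2
    field_simp
    ring
  rw [Finset.sum_congr rfl key, Finset.sum_const, Finset.card_range, nsmul_eq_mul]
  push_cast
  ring

lemma sum_ell_rad_bound {α : ℕ} (hα : 1 ≤ α) (p : ℝ) (c : ℕ) :
    |∑ t ∈ range (2^α), ell m p (c * 2^α + t) * rad (α-1) (c * 2^α + t)|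
      ≤ (2:ℝ)^(α-1) / K m := by
  rw [sum_pair hα (ell m p) c]
  calc |∑ t ∈ range (2^(α-1)), (ell m p (c * 2^α + (2^(α-1) + t)) - ell m p (c * 2^α + t))|
      ≤ ∑ t ∈ range (2^(α-1)), |ell m p (c * 2^α + (2^(α-1) + t)) - ell m p (c * 2^α + t)| :=
        Finset.abs_sum_le_sum_abs _ _
    _ ≤ ∑ t ∈ range (2^(α-1)), 1 / (K m : ℝ) := by
        apply Finset.sum_le_sum
        intro t _
        exact ell_abs_sub m _ _ _
    _ = (2:ℝ)^(α-1) / K m := by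
        rw [Finset.sum_const, Finset.card_range, nsmul_eq_mul]
        push_cast; ring

lemma sum_ell_rad_left {α : ℕ} (hα : 1 ≤ α) {p : ℝ} {c : ℕ}
    (hp : p ≤ ((c * 2^α : ℕ) : ℝ) / K m) :
    ∑ t ∈ range (2^α), ell m p (c * 2^α + t) * rad (α-1) (c * 2^α + t) = 0 := by
  have key : ∀ t ∈ range (2^α), ell m p (c * 2^α + t) * rad (α-1) (c * 2^α + t)
      = (1 / K m) * rad (α-1) (c * 2^α + t) := by
    intro t _
    rw [ell_full]
    apply hp.trans
    gcongr
    exact Nat.le_add_right _ t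
  rw [Finset.sum_congr rfl key, ← Finset.mul_sum, sum_rad hα, mul_zero]

lemma sum_ell_rad_right {α : ℕ} (hα : 1 ≤ α) {p : ℝ} {c : ℕ}
    (hp : (((c+1) * 2^α : ℕ) : ℝ) / K m ≤ p) :
    ∑ t ∈ range (2^α), ell m p (c * 2^α + t) * rad (α-1) (c * 2^α + t) = 0 := by
  apply Finset.sum_eq_zero
  intro t ht
  have ht' := Finset.mem_range.mp ht
  rw [ell_zero, zero_mul]
  refine le_trans ?_ hp
  have h1 : ((c * 2^α + t : ℕ) : ℝ) + 1 ≤ (((c+1) * 2^α : ℕ) : ℝ) := by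
    push_cast
    have : (t:ℝ) + 1 ≤ (2:ℝ)^α := by exact_mod_cast Nat.succ_le_of_lt ht'
    nlinarith [two_pow_pos α]
  gcongr

/-! ### rectangle pairing Q -/

lemma Q_eq {α β : ℕ} (hα : 1 ≤ α) (hβ : 1 ≤ β) (c c' : ℕ) :
    Q m x α β c c' =
      (∑ k ∈ range (M m),
        (∑ t ∈ range (2^α), ell m (x k) (c * 2^α + t) * rad (α-1) (c * 2^α + t)) *
        (∑ s ∈ range (2^β), ell m (pt m k) (c' * 2^β + s) * rad (β-1) (c' * 2^β + s)))
      - (M m : ℝ) * (((2:ℝ)^(α-1))^2 / (K m:ℝ)^2 * (((2:ℝ)^(β-1))^2 / (K m:ℝ)^2)) := by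
  have step1 : Q m x α β c c' =
      (∑ t ∈ range (2^α), ∑ s ∈ range (2^β), ∑ k ∈ range (M m),
        (ell m (x k) (c*2^α+t) * rad (α-1) (c*2^α+t)) *
          (ell m (pt m k) (c'*2^β+s) * rad (β-1) (c'*2^β+s)))
      - (M m:ℝ) * ((∑ t ∈ range (2^α), w m (c*2^α+t) * rad (α-1) (c*2^α+t)) *
          (∑ s ∈ range (2^β), w m (c'*2^β+s) * rad (β-1) (c'*2^β+s))) := by
    unfold Q dd
    conv_rhs => rw [Finset.sum_mul_sum, Finset.mul_sum]
    simp only [Finset.mul_sum]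
    rw [← Finset.sum_sub_distrib]
    apply Finset.sum_congr rfl; intro t _
    rw [← Finset.sum_sub_distrib]
    apply Finset.sum_congr rfl; intro s _
    rw [sub_mul, Finset.sum_mul]
    congr 1
    · apply Finset.sum_congr rfl; intro k _; ring
    · ring
  rw [step1, sum_w_rad m hα, sum_w_rad m hβ]
  congr 1
  calc ∑ t ∈ range (2^α), ∑ s ∈ range (2^β), ∑ k ∈ range (M m),
        (ell m (x k) (c*2^α+t) * rad (α-1) (c*2^α+t)) *
          (ell m (pt m k) (c'*2^β+s) * rad (β-1) (c'*2^β+s))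
      = ∑ t ∈ range (2^α), ∑ k ∈ range (M m), ∑ s ∈ range (2^β),
        (ell m (x k) (c*2^α+t) * rad (α-1) (c*2^α+t)) *
          (ell m (pt m k) (c'*2^β+s) * rad (β-1) (c'*2^β+s)) := by
        apply Finset.sum_congr rfl; intro t _; exact Finset.sum_comm
    _ = ∑ k ∈ range (M m), ∑ t ∈ range (2^α), ∑ s ∈ range (2^β),
        (ell m (x k) (c*2^α+t) * rad (α-1) (c*2^α+t)) *
          (ell m (pt m k) (c'*2^β+s) * rad (β-1) (c'*2^β+s)) := Finset.sum_comm
    _ = _ := by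
        apply Finset.sum_congr rfl; intro k _
        exact (Finset.sum_mul_sum _ _ _ _).symm

lemma Q_bound {α β : ℕ} (hα : 1 ≤ α) (hβ : 1 ≤ β) (c c' : ℕ) :
    |Q m x α β c c'| ≤
      ((inside m x α β c c').card : ℝ) * ((2:ℝ)^(α-1)/K m * ((2:ℝ)^(β-1)/K m))
      + (M m : ℝ) * (((2:ℝ)^(α-1))^2/(K m:ℝ)^2 * (((2:ℝ)^(β-1))^2/(K m:ℝ)^2)) := by
  rw [Q_eq m x hα hβ]
  refine (abs_sub _ _).trans ?_
  gcongr
  · -- point part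
    have hzero : ∀ k ∈ range (M m), k ∉ inside m x α β c c' →
        (∑ t ∈ range (2^α), ell m (x k) (c * 2^α + t) * rad (α-1) (c * 2^α + t)) *
        (∑ s ∈ range (2^β), ell m (pt m k) (c' * 2^β + s) * rad (β-1) (c' * 2^β + s)) = 0 := by
      intro k hk hk'
      unfold inside at hk'
      simp only [Finset.mem_filter, hk, true_and, not_and_or, not_lt] at hk'
      rcases hk' with h | h | h | h
      · rw [sum_ell_rad_left m hα h, zero_mul]
      · rw [sum_ell_rad_right m hα h, zero_mul]
      · rw [sum_ell_rad_left m hβ h, mul_zero]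
      · rw [sum_ell_rad_right m hβ h, mul_zero]
    rw [← Finset.sum_subset (Finset.filter_subset _ _) hzero]
    calc |∑ k ∈ inside m x α β c c', _| ≤ ∑ k ∈ inside m x α β c c',
          |(∑ t ∈ range (2^α), ell m (x k) (c * 2^α + t) * rad (α-1) (c * 2^α + t)) *
           (∑ s ∈ range (2^β), ell m (pt m k) (c' * 2^β + s) * rad (β-1) (c' * 2^β + s))| :=
        Finset.abs_sum_le_sum_abs _ _
      _ ≤ ∑ k ∈ inside m x α β c c', ((2:ℝ)^(α-1)/K m * ((2:ℝ)^(β-1)/K m)) := by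
          apply Finset.sum_le_sum
          intro k _
          rw [abs_mul]
          have b1 := sum_ell_rad_bound m hα (x k) c
          have b2 := sum_ell_rad_bound m hβ (pt m k) c'
          have n1 : (0:ℝ) ≤ (2:ℝ)^(α-1)/K m := by positivity
          exact mul_le_mul b1 b2 (abs_nonneg _) n1
      _ = ((inside m x α β c c').card : ℝ) * ((2:ℝ)^(α-1)/K m * ((2:ℝ)^(β-1)/K m)) := by
          rw [Finset.sum_const, nsmul_eq_mul]
  · -- linear part
    rw [abs_mul]
    have h1 : |(M m : ℝ)| = M m := abs_of_pos (Mr_pos m)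
    have h2 : |((2:ℝ)^(α-1))^2/(K m:ℝ)^2 * (((2:ℝ)^(β-1))^2/(K m:ℝ)^2)|
        = ((2:ℝ)^(α-1))^2/(K m:ℝ)^2 * (((2:ℝ)^(β-1))^2/(K m:ℝ)^2) := by
      apply abs_of_pos
      have := Kr_pos m
      positivity
    rw [h1, h2]

lemma Q_empty {α β : ℕ} (hα : 1 ≤ α) (hβ : 1 ≤ β) {c c' : ℕ}
    (h : inside m x α β c c' = ∅) :
    Q m x α β c c' =
      -((M m : ℝ) * (((2:ℝ)^(α-1))^2/(K m:ℝ)^2 * (((2:ℝ)^(β-1))^2/(K m:ℝ)^2))) := by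
  rw [Q_eq m x hα hβ]
  have hzero : ∀ k ∈ range (M m),
      (∑ t ∈ range (2^α), ell m (x k) (c * 2^α + t) * rad (α-1) (c * 2^α + t)) *
      (∑ s ∈ range (2^β), ell m (pt m k) (c' * 2^β + s) * rad (β-1) (c' * 2^β + s)) = 0 := by
    intro k hk
    have hk' : k ∉ inside m x α β c c' := by rw [h]; exact Finset.notMem_empty k
    unfold inside at hk'
    simp only [Finset.mem_filter, hk, true_and, not_and_or, not_lt] at hk'
    rcases hk' with h | h | h | h
    · rw [sum_ell_rad_left m hα h, zero_mul]
    · rw [sum_ell_rad_right m hα h, zero_mul]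
    · rw [sum_ell_rad_left m hβ h, mul_zero]
    · rw [sum_ell_rad_right m hβ h, mul_zero]
  rw [Finset.sum_eq_zero hzero]
  ring

lemma interval_disj {α c e : ℕ} {y : ℝ} (hce : c < e)
    (h1 : y < (((c+1) * 2^α : ℕ):ℝ)/K m) (h2 : ((e * 2^α : ℕ):ℝ)/K m < y) : False := by
  have hle : ((c+1) * 2^α : ℕ) ≤ (e * 2^α : ℕ) := Nat.mul_le_mul_right _ hce
  have hc : (((c+1) * 2^α : ℕ):ℝ)/K m ≤ ((e * 2^α : ℕ):ℝ)/K m := by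
    gcongr
  linarith

lemma sum_inside_card (α β A B' : ℕ) :
    ∑ p ∈ range A ×ˢ range B', (inside m x α β p.1 p.2).card ≤ M m := by
  have hdisj : ∀ p ∈ range A ×ˢ range B', ∀ q ∈ range A ×ˢ range B', p ≠ q →
      Disjoint (inside m x α β p.1 p.2) (inside m x α β q.1 q.2) := by
    intro p _ q _ hpq
    rw [Finset.disjoint_left]
    intro k hk hk'
    unfold inside at hk hk'
    simp only [Finset.mem_filter] at hk hk'
    obtain ⟨-, a1, a2, a3, a4⟩ := hk
    obtain ⟨-, b1, b2, b3, b4⟩ := hk'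
    have hne : p.1 ≠ q.1 ∨ p.2 ≠ q.2 := by
      by_contra hcon
      push_neg at hcon
      exact hpq (Prod.ext hcon.1 hcon.2)
    rcases hne with h | h
    · rcases Nat.lt_or_ge p.1 q.1 with hlt | hge
      · exact interval_disj m hlt a2 b1
      · exact interval_disj m (by omega) b2 a1
    · rcases Nat.lt_or_ge p.2 q.2 with hlt | hge
      · exact interval_disj m hlt a4 b3
      · exact interval_disj m (by omega) b4 a3
  calc ∑ p ∈ range A ×ˢ range B', (inside m x α β p.1 p.2).card
      = ((range A ×ˢ range B').biUnion (fun p => inside m x α β p.1 p.2)).card :=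
        (Finset.card_biUnion hdisj).symm
    _ ≤ (range (M m)).card := by
        apply Finset.card_le_card
        intro k hk
        rw [Finset.mem_biUnion] at hk
        obtain ⟨p, -, hp⟩ := hk
        exact Finset.filter_subset _ _ hp
    _ = M m := Finset.card_range _

lemma Qsum_bound {α β : ℕ} (hα : 1 ≤ α) (hβ : 1 ≤ β) (A B' : ℕ)
    (σ : ℕ → ℕ → ℝ) (hσ : ∀ c c', |σ c c'| ≤ 1) :
    |∑ p ∈ range A ×ˢ range B', σ p.1 p.2 * Q m x α β p.1 p.2|
      ≤ (M m:ℝ) * ((2:ℝ)^(α-1)/K m * ((2:ℝ)^(β-1)/K m))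
        + ((A*B' : ℕ) : ℝ) * ((M m:ℝ) * (((2:ℝ)^(α-1))^2/(K m:ℝ)^2 * (((2:ℝ)^(β-1))^2/(K m:ℝ)^2))) := by
  have hK := Kr_pos m
  calc |∑ p ∈ range A ×ˢ range B', σ p.1 p.2 * Q m x α β p.1 p.2|
      ≤ ∑ p ∈ range A ×ˢ range B', |σ p.1 p.2 * Q m x α β p.1 p.2| :=
        Finset.abs_sum_le_sum_abs _ _
    _ ≤ ∑ p ∈ range A ×ˢ range B', |Q m x α β p.1 p.2| := by
        apply Finset.sum_le_sum
        intro p _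
        rw [abs_mul]
        calc |σ p.1 p.2| * |Q m x α β p.1 p.2| ≤ 1 * |Q m x α β p.1 p.2| := by
              apply mul_le_mul_of_nonneg_right (hσ _ _) (abs_nonneg _)
          _ = |Q m x α β p.1 p.2| := one_mul _
    _ ≤ ∑ p ∈ range A ×ˢ range B',
          (((inside m x α β p.1 p.2).card : ℝ) * ((2:ℝ)^(α-1)/K m * ((2:ℝ)^(β-1)/K m))
            + (M m : ℝ) * (((2:ℝ)^(α-1))^2/(K m:ℝ)^2 * (((2:ℝ)^(β-1))^2/(K m:ℝ)^2))) := by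
        apply Finset.sum_le_sum
        intro p _
        exact Q_bound m x hα hβ p.1 p.2
    _ = (∑ p ∈ range A ×ˢ range B', ((inside m x α β p.1 p.2).card : ℝ))
          * ((2:ℝ)^(α-1)/K m * ((2:ℝ)^(β-1)/K m))
        + ((A*B' : ℕ) : ℝ) * ((M m:ℝ) * (((2:ℝ)^(α-1))^2/(K m:ℝ)^2 * (((2:ℝ)^(β-1))^2/(K m:ℝ)^2))) := by
        rw [Finset.sum_add_distrib, ← Finset.sum_mul, Finset.sum_const, nsmul_eq_mul]
        congr 2
        rw [Finset.card_product, Finset.card_range, Finset.card_range]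
    _ ≤ _ := by
        have hcast : (∑ p ∈ range A ×ˢ range B', ((inside m x α β p.1 p.2).card : ℝ))
            ≤ (M m : ℝ) := by
          have := sum_inside_card m x α β A B'
          exact_mod_cast this
        exact add_le_add_left (mul_le_mul_of_nonneg_right hcast (by positivity)) _

/-! ### the scale functions ff -/

lemma ff_abs (j u v : ℕ) : |ff m x j u v| = 1 := by
  unfold ff eps
  rw [abs_mul, abs_mul, rad_abs, rad_abs]
  split_ifs <;> norm_num

lemma pear_block {α β : ℕ} (hα : α ≤ m+2) (hβ : β ≤ m+2) (g : ℕ → ℕ → ℝ) :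
    pear m x g = ∑ c ∈ range (2^(m+2-α)), ∑ c' ∈ range (2^(m+2-β)),
      ∑ t ∈ range (2^α), ∑ s ∈ range (2^β),
        dd m x (c * 2^α + t) (c' * 2^β + s) * g (c * 2^α + t) (c' * 2^β + s) := by
  have hK1 : K m = 2^(m+2-α) * 2^α := by unfold K; rw [← pow_add]; congr 1; omega
  have hK2 : K m = 2^(m+2-β) * 2^β := by unfold K; rw [← pow_add]; congr 1; omega
  unfold pear
  calc ∑ u ∈ range (K m), ∑ v ∈ range (K m), dd m x u v * g u v
      = ∑ c ∈ range (2^(m+2-α)), ∑ t ∈ range (2^α), ∑ v ∈ range (K m),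
          dd m x (c*2^α+t) v * g (c*2^α+t) v := by
        rw [show range (K m) = range (2^(m+2-α) * 2^α) by rw [← hK1]]
        exact sum_block _ _ _
    _ = ∑ c ∈ range (2^(m+2-α)), ∑ t ∈ range (2^α), ∑ c' ∈ range (2^(m+2-β)),
          ∑ s ∈ range (2^β), dd m x (c*2^α+t) (c'*2^β+s) * g (c*2^α+t) (c'*2^β+s) := by
        apply Finset.sum_congr rfl; intro c _
        apply Finset.sum_congr rfl; intro t _
        rw [show range (K m) = range (2^(m+2-β) * 2^β) by rw [← hK2]]
        exact sum_block _ _ _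
    _ = _ := by
        apply Finset.sum_congr rfl; intro c _
        exact Finset.sum_comm

lemma ff_on_block {j : ℕ} (hj : j ≤ m+1) {t s : ℕ} (ht : t < 2^(m+2-j)) (hs : s < 2^(j+1))
    (c c' : ℕ) :
    ff m x j (c * 2^(m+2-j) + t) (c' * 2^(j+1) + s)
      = eps m x j c c' * (rad (m+1-j) (c * 2^(m+2-j) + t) * rad j (c' * 2^(j+1) + s)) := by
  unfold ff
  congr 2
  · rw [div_key le_rfl ht, Nat.sub_self, pow_zero, Nat.div_one]
  · rw [div_key le_rfl hs, Nat.sub_self, pow_zero, Nat.div_one]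

lemma pear_ff {j : ℕ} (hj : j ≤ m+1) :
    pear m x (ff m x j)
      = ∑ p ∈ range (2^j) ×ˢ range (2^(m+1-j)), |Q m x (m+2-j) (j+1) p.1 p.2| := by
  have e1 : m+2-(m+2-j) = j := by omega
  have e2 : m+2-(j+1) = m+1-j := by omega
  rw [pear_block m x (show m+2-j ≤ m+2 by omega) (show j+1 ≤ m+2 by omega), Finset.sum_product]
  rw [e1, e2]
  apply Finset.sum_congr rfl; intro c _
  apply Finset.sum_congr rfl; intro c' _
  have inner : ∑ t ∈ range (2^(m+2-j)), ∑ s ∈ range (2^(j+1)),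
      dd m x (c * 2^(m+2-j) + t) (c' * 2^(j+1) + s) *
        ff m x j (c * 2^(m+2-j) + t) (c' * 2^(j+1) + s)
      = eps m x j c c' * Q m x (m+2-j) (j+1) c c' := by
    unfold Q
    rw [Finset.mul_sum]
    apply Finset.sum_congr rfl; intro t ht
    rw [Finset.mul_sum]
    apply Finset.sum_congr rfl; intro s hs
    rw [ff_on_block m x hj (Finset.mem_range.mp ht) (Finset.mem_range.mp hs)]
    have hα1 : (m+2-j) - 1 = m+1-j := by omega
    have hβ1 : (j+1) - 1 = j := by omega
    rw [hα1, hβ1]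
    ring
  rw [inner]
  unfold eps
  split_ifs with h
  · rw [abs_of_neg h]; ring
  · rw [abs_of_nonneg (not_lt.mp h)]; ring

lemma pow_div_64 (A : ℕ) : (2:ℝ)^A / (2:ℝ)^(A+6) = 1/64 := by
  rw [pow_add, div_mul_eq_div_div, div_self (by positivity : ((2:ℝ)^A) ≠ 0)]
  norm_num

lemma pow_cancel_64 {j : ℕ} (hj : j ≤ m+1) :
    (M m:ℝ) * ((M m:ℝ) * (((2:ℝ)^(m+2-j-1))^2/(K m:ℝ)^2 * (((2:ℝ)^(j+1-1))^2/(K m:ℝ)^2)))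
      = 1/64 := by
  have hα1 : (m+2-j) - 1 = m+1-j := by omega
  have hβ1 : (j+1) - 1 = j := by omega
  rw [hα1, hβ1]
  have hmul : (2:ℝ)^(m+1-j) * (2:ℝ)^j = 2^(m+1) := by
    rw [← pow_add]; congr 1; omega
  have hM : (M m : ℝ) = 2^m := by unfold M; push_cast; rfl
  have hK : (K m : ℝ) = 2^(m+2) := by unfold K; push_cast; rfl
  have h2 : (0:ℝ) < 2 := two_pos
  rw [hM, hK, div_mul_div_comm, ← mul_pow, hmul, ← pow_mul, ← pow_mul]
  calc (2:ℝ)^m * (2^m * ((2:ℝ)^((m+1)*2) / ((2:ℝ)^((m+2)*2) * (2:ℝ)^((m+2)*2))))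
      = (2:ℝ)^(m + (m + (m+1)*2)) / (2:ℝ)^((m+2)*2 + (m+2)*2) := by
        rw [pow_add, pow_add, pow_add]; ring
    _ = 1/64 := by
        rw [show (m+2)*2 + (m+2)*2 = (m + (m + (m+1)*2)) + 6 by ring]
        exact pow_div_64 _

lemma pear_ff_lower {j : ℕ} (hj : j ≤ m+1) : 1/64 ≤ pear m x (ff m x j) := by
  rw [pear_ff m x hj]
  set α := m+2-j with hα
  set β := j+1 with hβ
  have hα1 : 1 ≤ α := by omega
  have hβ1 : 1 ≤ β := by omega
  set rects := range (2^j) ×ˢ range (2^(m+1-j)) with hrects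
  set Emp := rects.filter (fun p => inside m x α β p.1 p.2 = ∅) with hEmp
  have hval : ∀ p ∈ Emp, |Q m x α β p.1 p.2|
      = (M m:ℝ) * (((2:ℝ)^(α-1))^2/(K m:ℝ)^2 * (((2:ℝ)^(β-1))^2/(K m:ℝ)^2)) := by
    intro p hp
    rw [Q_empty m x hα1 hβ1 (Finset.mem_filter.mp hp).2, abs_neg, abs_of_nonneg]
    have := Kr_pos m
    positivity
  have hcard : M m ≤ Emp.card := by
    have hcr : rects.card = 2 * M m := by
      rw [hrects, Finset.card_product, Finset.card_range, Finset.card_range, ← pow_add]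
      unfold M
      rw [show j + (m+1-j) = m+1 by omega, pow_succ]
      ring
    set NE := rects.filter (fun p => ¬ (inside m x α β p.1 p.2 = ∅)) with hNE
    have hne_card : NE.card ≤ M m := by
      calc NE.card = ∑ p ∈ NE, 1 := by rw [Finset.sum_const, smul_eq_mul, mul_one]
        _ ≤ ∑ p ∈ NE, (inside m x α β p.1 p.2).card := by
            apply Finset.sum_le_sum
            intro p hp
            have := (Finset.mem_filter.mp hp).2
            exact Nat.one_le_iff_ne_zero.mpr (fun hc => this (Finset.card_eq_zero.mp hc))
        _ ≤ ∑ p ∈ rects, (inside m x α β p.1 p.2).card := by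
            apply Finset.sum_le_sum_of_subset (Finset.filter_subset _ _)
        _ ≤ M m := sum_inside_card m x α β _ _
    have hsplit : Emp.card + NE.card = rects.card := Finset.card_filter_add_card_filter_not _
    omega
  calc (1:ℝ)/64
      = (M m : ℝ) * ((M m:ℝ) * (((2:ℝ)^(α-1))^2/(K m:ℝ)^2 * (((2:ℝ)^(β-1))^2/(K m:ℝ)^2))) :=
        (pow_cancel_64 m hj).symm
    _ ≤ (Emp.card : ℝ) * ((M m:ℝ) * (((2:ℝ)^(α-1))^2/(K m:ℝ)^2 * (((2:ℝ)^(β-1))^2/(K m:ℝ)^2))) := by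
        have h1 : (M m : ℝ) ≤ (Emp.card : ℝ) := by exact_mod_cast hcard
        have := Kr_pos m
        apply mul_le_mul_of_nonneg_right h1
        positivity
    _ = ∑ p ∈ Emp, |Q m x α β p.1 p.2| := by
        rw [Finset.sum_congr rfl hval, Finset.sum_const, nsmul_eq_mul]
    _ ≤ ∑ p ∈ rects, |Q m x α β p.1 p.2| := by
        apply Finset.sum_le_sum_of_subset_of_nonneg (Finset.filter_subset _ _)
        intro p _ _
        exact abs_nonneg _

/-! ### products of scale functions -/

lemma div_const {i α c t : ℕ} (hi : α ≤ i) (ht : t < 2^α) :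
    (c * 2^α + t) / 2^i = (c * 2^α) / 2^i := by
  have h0 := div_key hi (two_pow_pos α) c
  rw [Nat.add_zero] at h0
  rw [div_key hi ht, h0]

lemma rad_const {i α c t : ℕ} (hi : α ≤ i) (ht : t < 2^α) :
    rad i (c * 2^α + t) = rad i (c * 2^α) := by
  unfold rad
  rw [div_const hi ht]

lemma cancel_aux (E Y R : ℝ) (hR : R * R = 1) : E * (R * Y) * (R * 1) = E * Y := by
  calc E * (R * Y) * (R * 1) = E * Y * (R * R) := by ring
    _ = E * Y := by rw [hR, mul_one]

lemma cancel_aux2 (E Y R : ℝ) (hR : R * R = 1) : E * (Y * R) * (1 * R) = E * Y := by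
  calc E * (Y * R) * (1 * R) = E * Y * (R * R) := by ring
    _ = E * Y := by rw [hR, mul_one]

lemma prod_eq_sigma {S : Finset ℕ} (hS : S ⊆ range (m+2)) (hcard : 2 ≤ S.card)
    (hne : S.Nonempty) {c c' t s : ℕ}
    (ht : t < 2^(m+2-S.max' hne)) (hs : s < 2^(S.min' hne + 1)) :
    (∏ j ∈ S, ff m x j (c * 2^(m+2-S.max' hne) + t) (c' * 2^(S.min' hne + 1) + s))
    = ((∏ j ∈ S, ff m x j (c * 2^(m+2-S.max' hne)) (c' * 2^(S.min' hne + 1)))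
        * rad (m+1-S.max' hne) (c * 2^(m+2-S.max' hne))
        * rad (S.min' hne) (c' * 2^(S.min' hne + 1)))
      * (rad (m+1-S.max' hne) (c * 2^(m+2-S.max' hne) + t)
        * rad (S.min' hne) (c' * 2^(S.min' hne + 1) + s)) := by
  set a := S.min' hne with hadef
  set b := S.max' hne with hbdef
  have hab : a < b := Finset.min'_lt_max'_of_card S (by omega)
  have hbm : b < m+2 := Finset.mem_range.mp (hS (S.max'_mem hne))
  set u := c * 2^(m+2-b) + t with hu
  set u0 := c * 2^(m+2-b) with hu0
  set v := c' * 2^(a+1) + s with hv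
  set v0 := c' * 2^(a+1) with hv0
  have key : (∏ j ∈ S, ff m x j u v) * (rad (m+1-b) u * rad a v)
      = (∏ j ∈ S, ff m x j u0 v0) * (rad (m+1-b) u0 * rad a v0) := by
    have hmain : ∀ j ∈ S,
        ff m x j u v * ((if j = b then rad (m+1-b) u else 1) * (if j = a then rad a v else 1))
        = ff m x j u0 v0 *
            ((if j = b then rad (m+1-b) u0 else 1) * (if j = a then rad a v0 else 1)) := by
      intro j hj
      have hja : a ≤ j := S.min'_le j hj
      have hjb : j ≤ b := S.le_max' j hj
      have e1 : u / 2^(m+2-j) = u0 / 2^(m+2-j) := div_const (by omega) ht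
      have e2 : v / 2^(j+1) = v0 / 2^(j+1) := div_const (by omega) hs
      by_cases hjb' : j = b
      · have hja' : ¬ (j = a) := by omega
        rw [if_pos hjb', if_pos hjb', if_neg hja', if_neg hja']
        subst hjb'
        unfold ff
        rw [e1, e2]
        have ebv : rad b v = rad b v0 := rad_const (by omega) hs
        rw [ebv]
        rw [cancel_aux _ _ _ (rad_sq (m+1-b) u), cancel_aux _ _ _ (rad_sq (m+1-b) u0)]
      · by_cases hja' : j = a
        · rw [if_neg hjb', if_neg hjb', if_pos hja', if_pos hja']
          subst hja'
          unfold ff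
          rw [e1, e2]
          have ebu : rad (m+1-a) u = rad (m+1-a) u0 := rad_const (by omega) ht
          rw [ebu]
          rw [cancel_aux2 _ _ _ (rad_sq a v), cancel_aux2 _ _ _ (rad_sq a v0)]
        · rw [if_neg hjb', if_neg hjb', if_neg hja', if_neg hja']
          unfold ff
          rw [e1, e2, rad_const (show m+2-b ≤ m+1-j by omega) ht,
            rad_const (show a+1 ≤ j by omega) hs]
    have expand : ∀ (uu vv : ℕ),
        (∏ j ∈ S, ff m x j uu vv) * (rad (m+1-b) uu * rad a vv)
        = ∏ j ∈ S, (ff m x j uu vv *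
            ((if j = b then rad (m+1-b) uu else 1) * (if j = a then rad a vv else 1))) := by
      intro uu vv
      rw [Finset.prod_mul_distrib, Finset.prod_mul_distrib,
        Finset.prod_ite_eq' S b (fun _ => rad (m+1-b) uu),
        Finset.prod_ite_eq' S a (fun _ => rad a vv),
        if_pos (S.max'_mem hne), if_pos (S.min'_mem hne)]
    rw [expand u v, expand u0 v0]
    exact Finset.prod_congr rfl hmain
  calc (∏ j ∈ S, ff m x j u v)
      = ((∏ j ∈ S, ff m x j u v) * (rad (m+1-b) u * rad a v)) * (rad (m+1-b) u * rad a v) := by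
        have step : ((∏ j ∈ S, ff m x j u v) * (rad (m+1-b) u * rad a v)) * (rad (m+1-b) u * rad a v)
            = (∏ j ∈ S, ff m x j u v) * ((rad (m+1-b) u * rad (m+1-b) u) * (rad a v * rad a v)) := by
          ring
        rw [step, rad_sq, rad_sq, mul_one, mul_one]
    _ = ((∏ j ∈ S, ff m x j u0 v0) * (rad (m+1-b) u0 * rad a v0)) * (rad (m+1-b) u * rad a v) := by
        rw [key]
    _ = _ := by ring

lemma pear_prod_bound {S : Finset ℕ} (hS : S ⊆ range (m+2)) (hcard : 2 ≤ S.card)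
    (hne : S.Nonempty) :
    |pear m x (fun u v => ∏ j ∈ S, ff m x j u v)|
      ≤ 5/32 * ((2:ℝ)^(S.min' hne) / (2:ℝ)^(S.max' hne)) := by
  set a := S.min' hne with hadef
  set b := S.max' hne with hbdef
  have hab : a < b := Finset.min'_lt_max'_of_card S (by omega)
  have hbm : b < m+2 := Finset.mem_range.mp (hS (S.max'_mem hne))
  set α := m+2-b with hα
  set β := a+1 with hβ
  have hα1 : 1 ≤ α := by omega
  have hβ1 : 1 ≤ β := by omega
  have hmb : m+2-α = b := by omega
  have hma : m+2-β = m+1-a := by omega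
  -- the sign function
  set σ : ℕ → ℕ → ℝ := fun c c' =>
    (∏ j ∈ S, ff m x j (c * 2^α) (c' * 2^β)) * rad (m+1-b) (c * 2^α) * rad a (c' * 2^β)
    with hσdef
  have hσ : ∀ c c', |σ c c'| ≤ 1 := by
    intro c c'
    rw [hσdef]
    simp only
    rw [abs_mul, abs_mul, rad_abs, rad_abs]
    have : |∏ j ∈ S, ff m x j (c * 2^α) (c' * 2^β)| = 1 := by
      rw [Finset.abs_prod]
      apply Finset.prod_eq_one
      intro j _
      exact ff_abs m x j _ _
    rw [this]; norm_num
  have hdecomp : pear m x (fun u v => ∏ j ∈ S, ff m x j u v)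
      = ∑ p ∈ range (2^b) ×ˢ range (2^(m+1-a)), σ p.1 p.2 * Q m x α β p.1 p.2 := by
    rw [pear_block m x (show α ≤ m+2 by omega) (show β ≤ m+2 by omega), hmb, hma,
      Finset.sum_product]
    apply Finset.sum_congr rfl; intro c _
    apply Finset.sum_congr rfl; intro c' _
    unfold Q
    rw [Finset.mul_sum]
    apply Finset.sum_congr rfl; intro t ht
    rw [Finset.mul_sum]
    apply Finset.sum_congr rfl; intro s hs
    have hα2 : α - 1 = m+1-b := by omega
    have hβ2 : β - 1 = a := by omega
    rw [prod_eq_sigma m x hS hcard hne (Finset.mem_range.mp ht) (Finset.mem_range.mp hs),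
      hα2, hβ2, hσdef]
    ring
  rw [hdecomp]
  refine (Qsum_bound m x hα1 hβ1 (2^b) (2^(m+1-a)) σ hσ).trans ?_
  -- numeric evaluation
  have hM : (M m : ℝ) = 2^m := by unfold M; push_cast; rfl
  have hK : (K m : ℝ) = 2^(m+2) := by unfold K; push_cast; rfl
  have hα2 : α - 1 = m+1-b := by omega
  have hβ2 : β - 1 = a := by omega
  have hterm1 : (M m:ℝ) * ((2:ℝ)^(α-1)/K m * ((2:ℝ)^(β-1)/K m))
      = (2:ℝ)^(2*m+1+a-b) / (2:ℝ)^(2*m+4) := by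
    rw [hα2, hβ2, hM, hK, div_mul_div_comm, ← mul_div_assoc,
      div_eq_div_iff (by positivity) (by positivity)]
    simp only [← pow_add]
    congr 1
    omega
  have hterm2 : ((2^b * 2^(m+1-a) : ℕ) : ℝ) *
      ((M m:ℝ) * (((2:ℝ)^(α-1))^2/(K m:ℝ)^2 * (((2:ℝ)^(β-1))^2/(K m:ℝ)^2)))
      = (2:ℝ)^(4*m+3+a-b) / (2:ℝ)^(4*m+8) := by
    rw [hα2, hβ2, hM, hK]
    push_cast
    rw [div_mul_div_comm, ← mul_div_assoc, ← mul_div_assoc,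
      div_eq_div_iff (by positivity) (by positivity)]
    simp only [← pow_mul, ← pow_add]
    congr 1
    omega
  rw [hterm1, hterm2]
  have hf1 : (2:ℝ)^(2*m+1+a-b) / (2:ℝ)^(2*m+4) = (2:ℝ)^a/(2:ℝ)^b/8 := by
    rw [div_div, show ((2:ℝ)^b * 8) = 2^(b+3) by rw [pow_add]; norm_num,
      div_eq_div_iff (by positivity) (by positivity), ← pow_add, ← pow_add]
    congr 1
    omega
  have hf2 : (2:ℝ)^(4*m+3+a-b) / (2:ℝ)^(4*m+8) = (2:ℝ)^a/(2:ℝ)^b/32 := by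
    rw [div_div, show ((2:ℝ)^b * 32) = 2^(b+5) by rw [pow_add]; norm_num,
      div_eq_div_iff (by positivity) (by positivity), ← pow_add, ← pow_add]
    congr 1
    omega
  rw [hf1, hf2]
  have hpos : (0:ℝ) < (2:ℝ)^a/(2:ℝ)^b := by positivity
  linarith

/-! ### the Riesz product G -/

lemma gam_pos : 0 < gam m := by
  unfold gam
  have : (0:ℝ) < Real.sqrt ((m:ℝ)+2) := Real.sqrt_pos.mpr (by positivity)
  positivity

lemma gam_sq : gam m ^ 2 = 1/((m:ℝ)+2) := by
  unfold gam
  rw [div_pow, one_pow, Real.sq_sqrt (by positivity)]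

lemma gam_le_half (hm : 2 ≤ m) : gam m ≤ 1/2 := by
  unfold gam
  have h4 : Real.sqrt 4 = 2 := by
    rw [show (4:ℝ) = 2^2 by norm_num, Real.sqrt_sq (by norm_num)]
  have h2 : (2:ℝ) ≤ Real.sqrt ((m:ℝ)+2) := by
    rw [← h4]
    apply Real.sqrt_le_sqrt
    have : (2:ℝ) ≤ (m:ℝ) := by exact_mod_cast hm
    linarith
  rw [div_le_div_iff₀ (by linarith) (by norm_num)]
  linarith

lemma ff_mul_self (j u v : ℕ) : ff m x j u v * ff m x j u v = 1 := by
  have h := ff_abs m x j u v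
  rw [← abs_mul_abs_self, h]; norm_num

lemma G_abs (u v : ℕ) : |G m x u v| ≤ 2 := by
  unfold G
  refine (Complex.abs_im_le_norm _).trans ?_
  rw [norm_prod]
  have habs : ∀ j ∈ range (m+2),
      ‖(1 + (gam m : ℂ) * Complex.I * ((ff m x j u v : ℝ) : ℂ))‖
        = Real.sqrt (1 + gam m ^ 2) := by
    intro j _
    have hz : (1 + (gam m:ℂ) * Complex.I * ((ff m x j u v : ℝ) : ℂ))
        = Complex.mk 1 (gam m * ff m x j u v) := by
      apply Complex.ext <;> simp
    rw [hz, Complex.norm_def, Complex.normSq_mk]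
    congr 1
    have := ff_mul_self m x j u v
    nlinarith [this]
  rw [Finset.prod_congr rfl habs, Finset.prod_const, Finset.card_range]
  set r := Real.sqrt (1 + gam m ^ 2) with hr
  have hrpos : 0 ≤ r := Real.sqrt_nonneg _
  have hsq : (r^(m+2))^2 = (1 + gam m^2)^(m+2) := by
    rw [← pow_mul, mul_comm (m+2) 2, pow_mul, Real.sq_sqrt (by positivity)]
  have hexp : (1 + gam m^2)^(m+2) ≤ 4 := by
    have e1 : 1 + gam m^2 ≤ Real.exp (gam m^2) := by
      have := Real.add_one_le_exp (gam m^2)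
      linarith
    have e2 : (1 + gam m^2)^(m+2) ≤ (Real.exp (gam m^2))^(m+2) := by
      apply pow_le_pow_left₀ (by positivity) e1
    have e3 : (Real.exp (gam m^2))^(m+2) = Real.exp (((m:ℝ)+2) * gam m^2) := by
      rw [← Real.exp_nat_mul]
      congr 1
      push_cast; ring
    have e4 : ((m:ℝ)+2) * gam m^2 = 1 := by
      rw [gam_sq]
      field_simp
    rw [e3, e4] at e2
    have := Real.exp_one_lt_d9
    linarith
  nlinarith [pow_nonneg hrpos (m+2)]

lemma G_expand (u v : ℕ) : G m x u v
    = ∑ S ∈ (range (m+2)).powerset,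
        ((Complex.I ^ S.card).im * gam m ^ S.card) * ∏ j ∈ S, ff m x j u v := by
  unfold G
  have hexp : (∏ j ∈ range (m+2), (1 + (gam m : ℂ) * Complex.I * ((ff m x j u v : ℝ) : ℂ)))
      = ∑ S ∈ (range (m+2)).powerset,
          ((gam m : ℂ) * Complex.I)^S.card * (((∏ j ∈ S, ff m x j u v : ℝ)) : ℂ) := by
    have h := Finset.prod_add (fun j => (gam m : ℂ) * Complex.I * ((ff m x j u v : ℝ) : ℂ))
      (fun _ => (1:ℂ)) (range (m+2))
    simp only [Finset.prod_const_one, mul_one] at h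
    rw [show (∏ j ∈ range (m+2), (1 + (gam m : ℂ) * Complex.I * ((ff m x j u v : ℝ) : ℂ)))
        = ∏ j ∈ range (m+2), ((gam m : ℂ) * Complex.I * ((ff m x j u v : ℝ) : ℂ) + 1) by
      apply Finset.prod_congr rfl; intro j _; ring]
    rw [h]
    apply Finset.sum_congr rfl
    intro S _
    rw [Finset.prod_mul_distrib, Finset.prod_const, Complex.ofReal_prod]
  rw [hexp, Complex.im_sum]
  apply Finset.sum_congr rfl
  intro S _
  rw [mul_pow, ← Complex.ofReal_pow]
  set r := S.card
  set P := (∏ j ∈ S, ff m x j u v) with hP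
  have : ((gam m ^ r : ℝ) : ℂ) * Complex.I ^ r * ((P : ℝ) : ℂ)
      = ((gam m ^ r * P : ℝ) : ℂ) * Complex.I ^ r := by
    push_cast; ring
  rw [this, Complex.mul_im, Complex.ofReal_re, Complex.ofReal_im]
  ring

lemma pear_linear {ι : Type*} (F : Finset ι) (coef : ι → ℝ) (gfun : ι → ℕ → ℕ → ℝ) :
    pear m x (fun u v => ∑ S ∈ F, coef S * gfun S u v)
      = ∑ S ∈ F, coef S * pear m x (gfun S) := by
  unfold pear
  calc ∑ u ∈ range (K m), ∑ v ∈ range (K m), dd m x u v * ∑ S ∈ F, coef S * gfun S u v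
      = ∑ u ∈ range (K m), ∑ v ∈ range (K m), ∑ S ∈ F, dd m x u v * (coef S * gfun S u v) := by
        apply Finset.sum_congr rfl; intro u _
        apply Finset.sum_congr rfl; intro v _
        rw [Finset.mul_sum]
    _ = ∑ u ∈ range (K m), ∑ S ∈ F, ∑ v ∈ range (K m), dd m x u v * (coef S * gfun S u v) := by
        apply Finset.sum_congr rfl; intro u _
        exact Finset.sum_comm
    _ = ∑ S ∈ F, ∑ u ∈ range (K m), ∑ v ∈ range (K m), dd m x u v * (coef S * gfun S u v) :=
        Finset.sum_comm
    _ = _ := by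
        apply Finset.sum_congr rfl; intro S _
        rw [Finset.mul_sum]
        apply Finset.sum_congr rfl; intro u _
        rw [Finset.mul_sum]
        apply Finset.sum_congr rfl; intro v _
        ring

/-! ### combinatorial bound for higher order terms -/

lemma sum_powerset_pow (A : Finset ℕ) (y : ℝ) :
    ∑ T ∈ A.powerset, y^T.card = (1+y)^A.card := by
  have h := Finset.prod_add (fun _ => y) (fun _ => (1:ℝ)) A
  simp only [Finset.prod_const_one, mul_one, Finset.prod_const] at h
  rw [add_comm 1 y, ← h]

lemma nmin_eq {S : Finset ℕ} (hne : S.Nonempty) : S.min.untopD 0 = S.min' hne := by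
  rw [← Finset.coe_min' hne]
  rfl

lemma nmax_eq {S : Finset ℕ} (hne : S.Nonempty) : S.max.unbotD 0 = S.max' hne := by
  rw [← Finset.coe_max' hne]
  rfl

lemma geom_bound {ρ : ℝ} (h0 : 0 ≤ ρ) (h1 : ρ < 1) (D : ℕ) :
    ∑ i ∈ range D, ρ^i ≤ 1/(1-ρ) := by
  rw [geom_sum_eq (by linarith : ρ ≠ 1) D]
  have heq : (ρ^D - 1)/(ρ - 1) = (1 - ρ^D)/(1 - ρ) := by
    rw [← neg_sub (1:ℝ) (ρ^D), ← neg_sub (1:ℝ) ρ, neg_div_neg_eq]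
  rw [heq, div_le_div_iff₀ (by linarith) (by linarith)]
  nlinarith [pow_nonneg h0 D]

lemma comb_bound (hm : 2 ≤ m) :
    ∑ S ∈ ((range (m+2)).powerset).filter (fun S => ¬ S.card ≤ 1),
      gam m ^ S.card * (5/32 * ((2:ℝ)^(S.min.untopD 0) / (2:ℝ)^(S.max.unbotD 0)))
      ≤ 5/16 := by
  have hγ0 := gam_pos m
  have hγh := gam_le_half m hm
  set γ := gam m with hγ
  set P2 := ((range (m+2)).powerset).filter (fun S => ¬ S.card ≤ 1) with hP2
  set Gfun : (Σ _ : ℕ × ℕ, Finset ℕ) → ℝ :=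
    fun y => γ^(y.2.card+2) * (5/32 * ((2:ℝ)^(y.1.1) / (2:ℝ)^(y.1.2))) with hGfun
  set emap : Finset ℕ → (Σ _ : ℕ × ℕ, Finset ℕ) :=
    fun S => ⟨(S.min.untopD 0, S.max.unbotD 0), S \ {S.min.untopD 0, S.max.unbotD 0}⟩
    with hemap
  set big := ((range (m+2) ×ˢ range (m+2)).filter (fun p => p.1 < p.2)).sigma
      (fun p => (Finset.Ioo p.1 p.2).powerset) with hbig
  -- facts about S ∈ P2
  have hfacts : ∀ S ∈ P2, S.Nonempty ∧ S ⊆ range (m+2) ∧ 2 ≤ S.card := by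
    intro S hS
    rw [hP2, Finset.mem_filter, Finset.mem_powerset] at hS
    obtain ⟨h1, h2⟩ := hS
    have hc : 2 ≤ S.card := by omega
    exact ⟨Finset.card_pos.mp (by omega), h1, hc⟩
  have step1 : ∀ S ∈ P2,
      γ ^ S.card * (5/32 * ((2:ℝ)^(S.min.untopD 0) / (2:ℝ)^(S.max.unbotD 0)))
      = Gfun (emap S) := by
    intro S hS
    obtain ⟨hne, hsub, hcard⟩ := hfacts S hS
    simp only [hGfun, hemap]
    have hab : S.min' hne < S.max' hne := Finset.min'_lt_max'_of_card S (by omega)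
    have hsubab : {S.min.untopD 0, S.max.unbotD 0} ⊆ S := by
      rw [nmin_eq hne, nmax_eq hne]
      intro z hz
      simp only [Finset.mem_insert, Finset.mem_singleton] at hz
      rcases hz with rfl | rfl
      · exact S.min'_mem hne
      · exact S.max'_mem hne
    have hcard2 : ({S.min.untopD 0, S.max.unbotD 0} : Finset ℕ).card = 2 := by
      rw [Finset.card_insert_of_notMem, Finset.card_singleton]
      rw [nmin_eq hne, nmax_eq hne]
      simp only [Finset.mem_singleton]
      omega
    have hTcard : (S \ {S.min.untopD 0, S.max.unbotD 0}).card + 2 = S.card := by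
      rw [Finset.card_sdiff_of_subset hsubab, hcard2]
      omega
    rw [hTcard]
  rw [Finset.sum_congr rfl step1]
  have hinj : ∀ S ∈ P2, ∀ S' ∈ P2, emap S = emap S' → S = S' := by
    intro S hS S' hS' heq
    obtain ⟨hne, hsub, hcard⟩ := hfacts S hS
    obtain ⟨hne', hsub', hcard'⟩ := hfacts S' hS'
    have hrec : ∀ T : Finset ℕ, T.Nonempty → 2 ≤ T.card →
        T = (T \ {T.min.untopD 0, T.max.unbotD 0}) ∪ {T.min.untopD 0, T.max.unbotD 0} := by
      intro T hTne hTc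
      rw [Finset.sdiff_union_of_subset]
      rw [nmin_eq hTne, nmax_eq hTne]
      intro z hz
      simp only [Finset.mem_insert, Finset.mem_singleton] at hz
      rcases hz with rfl | rfl
      · exact T.min'_mem hTne
      · exact T.max'_mem hTne
    rw [hemap] at heq
    simp only [Sigma.mk.inj_iff, Prod.mk.injEq, heq_eq_eq] at heq
    obtain ⟨⟨e1, e2⟩, e3⟩ := heq
    have hstart := hrec S hne hcard
    rw [hstart, e3, e1, e2, ← hrec S' hne' hcard']
  rw [← Finset.sum_image hinj]
  have himg : P2.image emap ⊆ big := by
    intro y hy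
    rw [Finset.mem_image] at hy
    obtain ⟨S, hS, rfl⟩ := hy
    obtain ⟨hne, hsub, hcard⟩ := hfacts S hS
    rw [hbig, Finset.mem_sigma]
    constructor
    · rw [Finset.mem_filter, Finset.mem_product]
      have h1 : S.min' hne ∈ range (m+2) := hsub (S.min'_mem hne)
      have h2 : S.max' hne ∈ range (m+2) := hsub (S.max'_mem hne)
      have hab : S.min' hne < S.max' hne := Finset.min'_lt_max'_of_card S (by omega)
      simp only [hemap]
      rw [nmin_eq hne, nmax_eq hne]
      exact ⟨⟨h1, h2⟩, hab⟩
    · rw [Finset.mem_powerset]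
      simp only [hemap]
      intro z hz
      rw [Finset.mem_sdiff] at hz
      obtain ⟨hzS, hzne⟩ := hz
      simp only [Finset.mem_insert, Finset.mem_singleton, not_or] at hzne
      rw [nmin_eq hne, nmax_eq hne] at hzne ⊢
      rw [Finset.mem_Ioo]
      have l1 := S.min'_le z hzS
      have l2 := S.le_max' z hzS
      omega
  have hnonneg : ∀ y ∈ big, 0 ≤ Gfun y := by
    intro y _
    rw [hGfun]
    positivity
  refine (Finset.sum_le_sum_of_subset_of_nonneg himg (fun y hy _ => hnonneg y hy)).trans ?_
  -- now evaluate the sum over big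
  rw [hbig, Finset.sum_sigma]
  set ρ := (1+γ)/2 with hρ
  have hρ0 : 0 ≤ ρ := by rw [hρ]; linarith
  have hρ1 : ρ < 1 := by rw [hρ]; linarith
  have hinner : ∀ p ∈ (range (m+2) ×ˢ range (m+2)).filter (fun p => p.1 < p.2),
      ∑ T ∈ (Finset.Ioo p.1 p.2).powerset, Gfun ⟨p, T⟩
        = (5/64) * γ^2 * ρ^(p.2 - p.1 - 1) := by
    intro p hp
    rw [Finset.mem_filter] at hp
    obtain ⟨-, hab⟩ := hp
    rw [hGfun]
    simp only
    calc ∑ T ∈ (Finset.Ioo p.1 p.2).powerset,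
          γ^(T.card+2) * (5/32 * ((2:ℝ)^(p.1) / (2:ℝ)^(p.2)))
        = (γ^2 * (5/32 * ((2:ℝ)^(p.1) / (2:ℝ)^(p.2)))) *
            ∑ T ∈ (Finset.Ioo p.1 p.2).powerset, γ^T.card := by
          rw [Finset.mul_sum]
          apply Finset.sum_congr rfl; intro T _
          rw [pow_add]
          ring
      _ = (γ^2 * (5/32 * ((2:ℝ)^(p.1) / (2:ℝ)^(p.2)))) * (1+γ)^(p.2 - p.1 - 1) := by
          rw [sum_powerset_pow, Nat.card_Ioo]
      _ = (5/64) * γ^2 * ρ^(p.2 - p.1 - 1) := by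
          have hsplit : (2:ℝ)^(p.2) = 2^(p.1) * 2^(p.2-p.1-1) * 2 := by
            rw [← pow_add, ← pow_succ]
            congr 1
            omega
          rw [hρ, div_pow, hsplit]
          have h1 : (0:ℝ) < 2^(p.1) := by positivity
          have h2 : (0:ℝ) < 2^(p.2-p.1-1) := by positivity
          field_simp
          ring
  rw [Finset.sum_congr rfl hinner, Finset.sum_filter, Finset.sum_product]
  have hfix : ∀ a ∈ range (m+2),
      (∑ b ∈ range (m+2), if a < b then (5/64) * γ^2 * ρ^(b - a - 1) else 0)
        ≤ (5/64) * γ^2 * (1/(1-ρ)) := by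
    intro a _
    rw [← Finset.sum_filter]
    have hfe : (range (m+2)).filter (fun b => a < b) = Finset.Ico (a+1) (m+2) := by
      ext b
      simp only [Finset.mem_filter, Finset.mem_range, Finset.mem_Ico]
      omega
    rw [hfe, Finset.sum_Ico_eq_sum_range]
    have hre : ∀ i ∈ range (m+2-(a+1)), (5/64) * γ^2 * ρ^(a+1+i-a-1) = (5/64) * γ^2 * ρ^i := by
      intro i _
      congr 2
      omega
    rw [Finset.sum_congr rfl hre, ← Finset.mul_sum]
    apply mul_le_mul_of_nonneg_left (geom_bound hρ0 hρ1 _) (by positivity)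
  calc ∑ a ∈ range (m+2), ∑ b ∈ range (m+2), (if a < b then (5/64) * γ^2 * ρ^(b-a-1) else 0)
      ≤ ∑ a ∈ range (m+2), (5/64) * γ^2 * (1/(1-ρ)) := Finset.sum_le_sum hfix
    _ = ((m:ℝ)+2) * ((5/64) * γ^2 * (1/(1-ρ))) := by
        rw [Finset.sum_const, Finset.card_range, nsmul_eq_mul]
        push_cast; ring
    _ ≤ 5/16 := by
        have hg2 : γ^2 = 1/((m:ℝ)+2) := gam_sq m
        have h1ρ : 1 - ρ = (1-γ)/2 := by rw [hρ]; ring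
        rw [hg2, h1ρ]
        have hm2 : (0:ℝ) < (m:ℝ)+2 := by positivity
        have hγ1 : 1 - γ ≥ 1/2 := by linarith
        rw [div_div_eq_mul_div, one_mul]
        have : ((m:ℝ)+2) * (5/64 * (1/((m:ℝ)+2)) * (2/(1-γ))) = (5/32) * (1/(1-γ)) := by
          field_simp
          ring
        rw [this]
        have : 1/(1-γ) ≤ 2 := by
          rw [div_le_iff₀ (by linarith)]
          linarith
        linarith

lemma pear_G_lower (hm : 2 ≤ m) :
    Real.sqrt ((m:ℝ)+2)/64 - 5/16 ≤ pear m x (G m x) := by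
  have hGfun : G m x = fun u v => ∑ S ∈ (range (m+2)).powerset,
      ((Complex.I ^ S.card).im * gam m ^ S.card) * ∏ j ∈ S, ff m x j u v := by
    funext u v
    exact G_expand m x u v
  have hlin : pear m x (G m x) = ∑ S ∈ (range (m+2)).powerset,
      ((Complex.I ^ S.card).im * gam m ^ S.card) *
        pear m x (fun u v => ∏ j ∈ S, ff m x j u v) := by
    rw [hGfun]
    exact pear_linear m x _ _ _
  rw [hlin]
  set h : Finset ℕ → ℝ := fun S => ((Complex.I ^ S.card).im * gam m ^ S.card) *
    pear m x (fun u v => ∏ j ∈ S, ff m x j u v) with hh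
  rw [← Finset.sum_filter_add_sum_filter_not ((range (m+2)).powerset)
    (fun S => S.card ≤ 1) h]
  have hfacts : ∀ S ∈ ((range (m+2)).powerset).filter (fun S => ¬ S.card ≤ 1),
      S.Nonempty ∧ S ⊆ range (m+2) ∧ 2 ≤ S.card := by
    intro S hS
    rw [Finset.mem_filter, Finset.mem_powerset] at hS
    obtain ⟨h1, h2⟩ := hS
    have hc : 2 ≤ S.card := by omega
    exact ⟨Finset.card_pos.mp (by omega), h1, hc⟩
  have hsmall : ∑ S ∈ ((range (m+2)).powerset).filter (fun S => S.card ≤ 1), h S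
      = gam m * ∑ j ∈ range (m+2), pear m x (ff m x j) := by
    have hset : ((range (m+2)).powerset).filter (fun S => S.card ≤ 1)
        = insert ∅ ((range (m+2)).image (fun j => ({j} : Finset ℕ))) := by
      ext S
      simp only [Finset.mem_filter, Finset.mem_powerset, Finset.mem_insert, Finset.mem_image]
      constructor
      · rintro ⟨hsub, hc⟩
        rcases Nat.le_one_iff_eq_zero_or_eq_one.mp hc with h0 | h1
        · exact Or.inl (Finset.card_eq_zero.mp h0)
        · obtain ⟨a, rfl⟩ := Finset.card_eq_one.mp h1
          exact Or.inr ⟨a, hsub (Finset.mem_singleton_self a), rfl⟩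
      · rintro (rfl | ⟨a, ha, rfl⟩)
        · exact ⟨Finset.empty_subset _, by simp⟩
        · constructor
          · intro z hz
            rw [Finset.mem_singleton] at hz
            subst hz
            exact ha
          · simp
    rw [hset, Finset.sum_insert (by simp)]
    have h0 : h ∅ = 0 := by
      rw [hh]
      simp
    rw [h0, zero_add,
      Finset.sum_image (fun a _ b _ hab => Finset.singleton_injective hab), Finset.mul_sum]
    apply Finset.sum_congr rfl
    intro j _
    rw [hh]
    simp only [Finset.card_singleton, pow_one, Complex.I_im, Finset.prod_singleton, one_mul]
  rw [hsmall]
  have hmain : ((m:ℝ)+2)/64 ≤ ∑ j ∈ range (m+2), pear m x (ff m x j) := by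
    calc ((m:ℝ)+2)/64 = ∑ j ∈ range (m+2), (1:ℝ)/64 := by
          rw [Finset.sum_const, Finset.card_range, nsmul_eq_mul]
          push_cast; ring
      _ ≤ _ := by
          apply Finset.sum_le_sum
          intro j hj
          have hj' : j ≤ m+1 := by
            have := Finset.mem_range.mp hj
            omega
          exact pear_ff_lower m x hj'
  have hγmain : Real.sqrt ((m:ℝ)+2)/64 ≤ gam m * ∑ j ∈ range (m+2), pear m x (ff m x j) := by
    have h1 : gam m * (((m:ℝ)+2)/64) ≤ gam m * ∑ j ∈ range (m+2), pear m x (ff m x j) :=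
      mul_le_mul_of_nonneg_left hmain (gam_pos m).le
    have hs0 : (0:ℝ) < Real.sqrt ((m:ℝ)+2) := Real.sqrt_pos.mpr (by positivity)
    have hss : Real.sqrt ((m:ℝ)+2) * Real.sqrt ((m:ℝ)+2) = (m:ℝ)+2 :=
      Real.mul_self_sqrt (by positivity)
    have h2 : gam m * (((m:ℝ)+2)/64) = Real.sqrt ((m:ℝ)+2)/64 := by
      unfold gam
      rw [div_mul_div_comm, one_mul, div_eq_div_iff (by positivity) (by norm_num)]
      nlinarith [hss]
    linarith
  have hbig : -(5/16) ≤ ∑ S ∈ ((range (m+2)).powerset).filter (fun S => ¬ S.card ≤ 1), h S := by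
    have habs : |∑ S ∈ ((range (m+2)).powerset).filter (fun S => ¬ S.card ≤ 1), h S| ≤ 5/16 := by
      refine (Finset.abs_sum_le_sum_abs _ _).trans ?_
      refine le_trans (Finset.sum_le_sum ?_) (comb_bound m hm)
      intro S hS
      obtain ⟨hne, hsub, hcard⟩ := hfacts S hS
      have h1 : |(Complex.I ^ S.card).im| ≤ 1 := by
        refine (Complex.abs_im_le_norm _).trans ?_
        rw [norm_pow, Complex.norm_I, one_pow]
      have h2 : |gam m ^ S.card| = gam m ^ S.card := abs_of_pos (pow_pos (gam_pos m) _)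
      have h3 := pear_prod_bound m x hsub hcard hne
      rw [hh]
      simp only
      rw [abs_mul, abs_mul, h2, nmin_eq hne, nmax_eq hne]
      calc |(Complex.I ^ S.card).im| * gam m ^ S.card *
            |pear m x (fun u v => ∏ j ∈ S, ff m x j u v)|
          ≤ 1 * gam m ^ S.card * (5/32 * ((2:ℝ)^(S.min' hne) / (2:ℝ)^(S.max' hne))) := by
            apply mul_le_mul
            · exact mul_le_mul_of_nonneg_right h1 (pow_nonneg (gam_pos m).le _)
            · exact h3
            · exact abs_nonneg _
            · have := gam_pos m
              positivity
        _ = gam m ^ S.card * (5/32 * ((2:ℝ)^(S.min' hne) / (2:ℝ)^(S.max' hne))) := by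
            rw [one_mul]
    have := (abs_le.mp habs).1
    linarith
  linarith

/-! ### time blocks -/

lemma sum_B : ∑ n ∈ range (M m), B m x n = pear m x (G m x) := by
  unfold B pear
  rw [Finset.sum_comm]
  apply Finset.sum_congr rfl; intro u _
  have hK4 : K m = M m * 4 := by unfold K M; rw [pow_add]; norm_num
  rw [show range (K m) = range (M m * 4) by rw [← hK4], sum_block]
  apply Finset.sum_congr rfl; intro n _
  apply Finset.sum_congr rfl; intro s _
  rw [mul_comm n 4]

lemma exists_good : ∃ n, n < M m ∧ pear m x (G m x) ≤ (M m : ℝ) * B m x n := by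
  have hne : (range (M m)).Nonempty :=
    ⟨0, Finset.mem_range.mpr (Nat.pow_pos (by norm_num))⟩
  have hsum : ∑ n ∈ range (M m), (pear m x (G m x) / M m) ≤ ∑ n ∈ range (M m), B m x n := by
    rw [sum_B, Finset.sum_const, Finset.card_range, nsmul_eq_mul,
      mul_div_cancel₀ _ (ne_of_gt (Mr_pos m))]
  obtain ⟨n, hn, hle⟩ := Finset.exists_le_of_sum_le hne hsum
  refine ⟨n, Finset.mem_range.mp hn, ?_⟩
  rw [div_le_iff₀ (Mr_pos m)] at hle
  linarith

lemma ell_pt_block (k n s : ℕ) (hs : s < 4) :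
    ell m (pt m k) (4*n+s) = if k < n then 1/(K m:ℝ) else 0 := by
  have hM := Mr_pos m
  have hK := Kr_pos m
  have hKM := K_eq m
  have hs3 : (s:ℝ) ≤ 3 := by exact_mod_cast Nat.lt_succ_iff.mp hs
  split_ifs with h
  · apply ell_full
    unfold pt
    rw [div_le_div_iff₀ hM hK]
    push_cast
    have hkn : ((k:ℝ)+1) ≤ (n:ℝ) := by exact_mod_cast h
    rw [hKM]
    nlinarith [mul_le_mul_of_nonneg_right (show 4*((k:ℝ)+1) ≤ 4*(n:ℝ) by linarith) hM.le]
  · apply ell_zero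
    unfold pt
    rw [div_le_div_iff₀ hK hM]
    push_cast
    have hnk : (n:ℝ) ≤ (k:ℝ) := by exact_mod_cast (not_lt.mp h)
    rw [hKM]
    nlinarith [mul_le_mul_of_nonneg_right
      (show 4*(n:ℝ)+(s:ℝ)+1 ≤ 4*((k:ℝ)+1) by linarith) hM.le]

lemma sum_w : ∑ u ∈ range (K m), w m u = 1/2 := by
  unfold w
  have hK := Kr_pos m
  have hK1 : 1 ≤ K m := Nat.pow_pos (by norm_num)
  have hgauss : (∑ u ∈ range (K m), (u:ℝ)) = (K m : ℝ) * ((K m : ℝ) - 1)/2 := by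
    have h := Finset.sum_range_id_mul_two (K m)
    have hcast : ((∑ i ∈ range (K m), i : ℕ) : ℝ) * 2 = (K m : ℝ) * ((K m : ℝ) - 1) := by
      rw [show ((∑ i ∈ range (K m), i : ℕ) : ℝ) * 2 = (((∑ i ∈ range (K m), i) * 2 : ℕ) : ℝ) by
        push_cast; ring, h]
      push_cast [Nat.cast_sub hK1]
      ring
    rw [Nat.cast_sum] at hcast
    linarith
  rw [← Finset.sum_div]
  rw [Finset.sum_add_distrib, ← Finset.mul_sum, hgauss, Finset.sum_const, Finset.card_range,
    nsmul_eq_mul, mul_one]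
  field_simp
  ring

lemma gg_abs (n u : ℕ) : |gg m x n u| ≤ 8 := by
  unfold gg
  refine (Finset.abs_sum_le_sum_abs _ _).trans ?_
  calc ∑ s ∈ range 4, |G m x u (4*n+s)| ≤ ∑ s ∈ range 4, 2 :=
        Finset.sum_le_sum (fun s _ => G_abs m x u _)
    _ = 8 := by norm_num

lemma B_le {n : ℕ} (hn : n ≤ M m) : (K m:ℝ) * B m x n ≤ Mid m x n + 4 := by
  have hK := Kr_pos m
  have hM := Mr_pos m
  have hKM := K_eq m
  set hh : ℕ → ℝ := fun u => ∑ s ∈ range 4, w m (4*n+s) * G m x u (4*n+s) with hhh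
  have hBn : B m x n = ∑ u ∈ range (K m),
      (Lam m x n u * gg m x n u / K m - (M m:ℝ) * (w m u * hh u)) := by
    unfold B
    apply Finset.sum_congr rfl; intro u _
    have hinner : ∀ s ∈ range 4, dd m x u (4*n+s) * G m x u (4*n+s)
        = Lam m x n u / K m * G m x u (4*n+s)
          - (M m:ℝ) * (w m u * (w m (4*n+s) * G m x u (4*n+s))) := by
      intro s hs
      unfold dd
      have hpt : ∑ k ∈ range (M m), ell m (x k) u * ell m (pt m k) (4*n+s)
          = Lam m x n u / K m := by
        rw [show ∑ k ∈ range (M m), ell m (x k) u * ell m (pt m k) (4*n+s)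
            = ∑ k ∈ range (M m), ell m (x k) u * (if k < n then 1/(K m:ℝ) else 0) by
          apply Finset.sum_congr rfl; intro k _
          rw [ell_pt_block m k n s (Finset.mem_range.mp hs)]]
        rw [← Finset.sum_subset (Finset.range_subset_range.mpr hn)
          (fun k _ hk => by
            rw [if_neg (fun hlt => hk (Finset.mem_range.mpr hlt)), mul_zero])]
        unfold Lam
        rw [Finset.sum_div]
        apply Finset.sum_congr rfl; intro k hk
        rw [if_pos (Finset.mem_range.mp hk)]
        ring
      rw [hpt]
      ring
    calc ∑ s ∈ range 4, dd m x u (4*n+s) * G m x u (4*n+s)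
        = ∑ s ∈ range 4, (Lam m x n u / K m * G m x u (4*n+s)
            - (M m:ℝ) * (w m u * (w m (4*n+s) * G m x u (4*n+s)))) :=
          Finset.sum_congr rfl hinner
      _ = (∑ s ∈ range 4, Lam m x n u / K m * G m x u (4*n+s))
            - ∑ s ∈ range 4, (M m:ℝ) * (w m u * (w m (4*n+s) * G m x u (4*n+s))) :=
          Finset.sum_sub_distrib _ _
      _ = Lam m x n u * gg m x n u / K m - (M m:ℝ) * (w m u * hh u) := by
          unfold gg
          rw [hhh]
          simp only
          rw [← Finset.mul_sum, ← Finset.mul_sum, ← Finset.mul_sum]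
          ring
  have herr : ∀ u ∈ range (K m), - (hh u) ≤ -((4*n:ℝ)/(K m:ℝ)^2 * gg m x n u) + 32/(K m:ℝ)^2 := by
    intro u _
    have hexp : hh u - (4*n:ℝ)/(K m:ℝ)^2 * gg m x n u
        = ∑ s ∈ range 4, (w m (4*n+s) - (4*n:ℝ)/(K m:ℝ)^2) * G m x u (4*n+s) := by
      rw [hhh]
      simp only
      unfold gg
      rw [Finset.mul_sum, ← Finset.sum_sub_distrib]
      apply Finset.sum_congr rfl; intro s _
      ring
    have hb : |hh u - (4*n:ℝ)/(K m:ℝ)^2 * gg m x n u| ≤ 32/(K m:ℝ)^2 := by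
      rw [hexp]
      refine (Finset.abs_sum_le_sum_abs _ _).trans ?_
      have hterm : ∀ s ∈ range 4, |(w m (4*n+s) - (4*n:ℝ)/(K m:ℝ)^2) * G m x u (4*n+s)|
          ≤ 8/(K m:ℝ)^2 := by
        intro s hs
        rw [abs_mul]
        have h1 : |w m (4*n+s) - (4*n:ℝ)/(K m:ℝ)^2| ≤ 4/(K m:ℝ)^2 := by
          unfold w
          have hs4 := Finset.mem_range.mp hs
          have hval : (2 * ((4*n+s:ℕ):ℝ) + 1) / (2 * (K m:ℝ)^2) - (4*n:ℝ)/(K m:ℝ)^2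
              = (2*(s:ℝ)+1)/(2*(K m:ℝ)^2) := by
            push_cast
            field_simp
            ring
          rw [hval, abs_of_pos (by positivity)]
          rw [div_le_div_iff₀ (by positivity) (by positivity)]
          have : (s:ℝ) ≤ 3 := by exact_mod_cast Nat.lt_succ_iff.mp hs4
          nlinarith [sq_nonneg (K m:ℝ)]
        have h2 : |G m x u (4*n+s)| ≤ 2 := G_abs m x u _
        calc |w m (4*n+s) - (4*n:ℝ)/(K m:ℝ)^2| * |G m x u (4*n+s)|
            ≤ (4/(K m:ℝ)^2) * 2 := by
              apply mul_le_mul h1 h2 (abs_nonneg _) (by positivity)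
          _ = 8/(K m:ℝ)^2 := by ring
      refine (Finset.sum_le_sum hterm).trans ?_
      rw [Finset.sum_const, Finset.card_range, nsmul_eq_mul]
      apply le_of_eq
      ring
    have := (abs_le.mp hb).1
    linarith
  -- assemble
  rw [hBn, Finset.mul_sum]
  unfold Mid
  have hstep : ∀ u ∈ range (K m),
      (K m:ℝ) * (Lam m x n u * gg m x n u / K m - (M m:ℝ) * (w m u * hh u))
      ≤ gg m x n u * (Lam m x n u - (n:ℝ) * w m u)
        + (K m:ℝ) * (M m:ℝ) * (32/(K m:ℝ)^2) * w m u := by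
    intro u hu
    have h1 := herr u hu
    have hw : 0 ≤ w m u := by
      unfold w
      positivity
    have hmul := mul_le_mul_of_nonneg_left h1 (mul_nonneg (mul_nonneg hK.le hM.le) hw)
    have hKn : (K m:ℝ) * (Lam m x n u * gg m x n u / K m) = Lam m x n u * gg m x n u := by
      field_simp
    have hgoal : (K m:ℝ) * (M m:ℝ) * w m u * ((4*n:ℝ)/(K m:ℝ)^2 * gg m x n u)
        = (n:ℝ) * w m u * gg m x n u := by
      rw [hKM]
      have hM0 : (M m:ℝ) ≠ 0 := ne_of_gt hM
      field_simp
    calc (K m:ℝ) * (Lam m x n u * gg m x n u / K m - (M m:ℝ) * (w m u * hh u))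
        = (K m:ℝ) * (Lam m x n u * gg m x n u / K m)
            + ((K m:ℝ) * (M m:ℝ) * w m u) * (- hh u) := by ring
      _ ≤ (K m:ℝ) * (Lam m x n u * gg m x n u / K m)
            + ((K m:ℝ) * (M m:ℝ) * w m u) *
              (-((4*n:ℝ)/(K m:ℝ)^2 * gg m x n u) + 32/(K m:ℝ)^2) := by
          linarith [hmul]
      _ = Lam m x n u * gg m x n u
            - (K m:ℝ) * (M m:ℝ) * w m u * ((4*n:ℝ)/(K m:ℝ)^2 * gg m x n u)
            + (K m:ℝ) * (M m:ℝ) * (32/(K m:ℝ)^2) * w m u := by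
          rw [hKn]; ring
      _ = gg m x n u * (Lam m x n u - (n:ℝ) * w m u)
            + (K m:ℝ) * (M m:ℝ) * (32/(K m:ℝ)^2) * w m u := by
          rw [hgoal]; ring
  refine (Finset.sum_le_sum hstep).trans ?_
  rw [Finset.sum_add_distrib, ← Finset.mul_sum, sum_w]
  have hconst : (K m:ℝ) * (M m:ℝ) * (32/(K m:ℝ)^2) * (1/2) = 4 := by
    rw [hKM]
    have hM0 : (M m:ℝ) ≠ 0 := ne_of_gt hM
    field_simp
    ring
  rw [hconst]

/-! ### the target sum estimate -/

lemma gauss_real (F : ℕ) : (∑ i ∈ range F, ((i:ℝ)+1)) = (F:ℝ)*((F:ℝ)+1)/2 := by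
  induction F with
  | zero => simp
  | succ k ih =>
      rw [Finset.sum_range_succ, ih]
      push_cast
      ring

set_option maxHeartbeats 1000000 in
lemma Smin_formula (n : ℕ) (hn : 1 ≤ n) {y : ℝ} (h0 : 0 ≤ y) (h1 : y ≤ 1) :
    ∑ i ∈ range n, min (((i:ℝ)+1)/n) y
      = (n:ℝ)*(y - y^2/2) + y/2
        - ((n:ℝ)*y - (⌊(n:ℝ)*y⌋₊ : ℝ)) * (1 - ((n:ℝ)*y - (⌊(n:ℝ)*y⌋₊:ℝ)))/(2*n) := by
  have hnr : (0:ℝ) < n := by exact_mod_cast hn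
  set F := ⌊(n:ℝ)*y⌋₊ with hF
  have hFle : (F:ℝ) ≤ (n:ℝ)*y := Nat.floor_le (by positivity)
  have hFlt : (n:ℝ)*y < (F:ℝ) + 1 := Nat.lt_floor_add_one _
  have hFn : F ≤ n := by
    have h2 : (F:ℝ) ≤ (n:ℝ) := by nlinarith
    exact_mod_cast h2
  have hsplit : ∑ i ∈ range n, min (((i:ℝ)+1)/n) y
      = (∑ i ∈ range F, (((i:ℝ)+1)/n)) + (∑ i ∈ range (n-F), y) := by
    rw [show range n = range (F + (n-F)) by congr 1; omega, sum_range_add']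
    congr 1
    · apply Finset.sum_congr rfl
      intro i hi
      have hi' := Finset.mem_range.mp hi
      apply min_eq_left
      rw [div_le_iff₀ hnr]
      have h3 : ((i:ℝ)+1) ≤ (F:ℝ) := by exact_mod_cast hi'
      nlinarith
    · apply Finset.sum_congr rfl
      intro i _
      apply min_eq_right
      rw [le_div_iff₀ hnr]
      have h3 : (F:ℝ) ≤ ((F+i:ℕ):ℝ) := by exact_mod_cast Nat.le_add_right F i
      push_cast at h3 ⊢
      nlinarith
  rw [hsplit]
  have hgauss : (∑ i ∈ range F, (((i:ℝ)+1)/n)) = ((F:ℝ)*((F:ℝ)+1)/2)/n := by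
    rw [← Finset.sum_div, gauss_real]
  rw [hgauss, Finset.sum_const, Finset.card_range, nsmul_eq_mul]
  have hcast : ((n - F : ℕ):ℝ) = (n:ℝ) - (F:ℝ) := by
    push_cast [Nat.cast_sub hFn]
    ring
  rw [hcast]
  field_simp
  try ring

set_option maxHeartbeats 1000000 in
lemma Sl_bound (n u : ℕ) (hu : u < K m) :
    |(∑ i ∈ range n, ell m (((i:ℝ)+1)/n) u) - (n:ℝ) * w m u| ≤ 1/(K m:ℝ) := by
  have hK := Kr_pos m
  rcases Nat.eq_zero_or_pos n with rfl | hn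
  · simp
  have hnr : (0:ℝ) < n := by exact_mod_cast hn
  set A := (u:ℝ)/(K m:ℝ) with hA
  set Bv := ((u:ℝ)+1)/(K m:ℝ) with hB
  have hA0 : 0 ≤ A := by rw [hA]; positivity
  have hAB : A ≤ Bv := cell_mono m u
  have hB1 : Bv ≤ 1 := by
    rw [hB, div_le_one hK]
    have : (u:ℝ)+1 ≤ (K m:ℝ) := by exact_mod_cast Nat.succ_le_of_lt hu
    linarith
  have hBA : Bv - A = 1/(K m:ℝ) := cell_len m u
  have hells : (∑ i ∈ range n, ell m (((i:ℝ)+1)/n) u)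
      = (n:ℝ)*(1/(K m:ℝ)) - (∑ i ∈ range n, min (((i:ℝ)+1)/n) Bv)
        + (∑ i ∈ range n, min (((i:ℝ)+1)/n) A) := by
    unfold ell lam
    rw [Finset.sum_sub_distrib, Finset.sum_sub_distrib, Finset.sum_const, Finset.card_range,
      nsmul_eq_mul]
    rw [← hA, ← hB]
    ring
  have hw : w m u = (Bv^2 - A^2)/2 := by
    rw [hA, hB]
    unfold w
    field_simp
    ring
  have hfa := Smin_formula n hn hA0 (hAB.trans hB1)
  have hfb := Smin_formula n hn (hA0.trans hAB) hB1
  set θA := (n:ℝ)*A - (⌊(n:ℝ)*A⌋₊:ℝ) with hθA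
  set θB := (n:ℝ)*Bv - (⌊(n:ℝ)*Bv⌋₊:ℝ) with hθB
  have hθA0 : 0 ≤ θA := by
    rw [hθA]
    linarith [Nat.floor_le (show (0:ℝ) ≤ (n:ℝ)*A by positivity)]
  have hθA1 : θA < 1 := by
    rw [hθA]
    linarith [Nat.lt_floor_add_one ((n:ℝ)*A)]
  have hθB0 : 0 ≤ θB := by
    rw [hθB]
    linarith [Nat.floor_le (show (0:ℝ) ≤ (n:ℝ)*Bv by positivity)]
  have hθB1 : θB < 1 := by
    rw [hθB]
    linarith [Nat.lt_floor_add_one ((n:ℝ)*Bv)]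
  have hmono : (n:ℝ)*A ≤ (n:ℝ)*Bv := by nlinarith
  have hFle : ⌊(n:ℝ)*A⌋₊ ≤ ⌊(n:ℝ)*Bv⌋₊ := Nat.floor_le_floor hmono
  have hkey : |θA*(1-θA) - θB*(1-θB)| ≤ (n:ℝ)*(Bv - A) := by
    rcases eq_or_lt_of_le hFle with heq | hlt
    · have hdiff : θB - θA = (n:ℝ)*(Bv - A) := by
        rw [hθA, hθB, heq]
        ring
      have habs : |θA*(1-θA) - θB*(1-θB)| = |θA - θB| * |1 - θA - θB| := by
        rw [← abs_mul]
        congr 1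
        ring
      rw [habs]
      have h1 : |θA - θB| = (n:ℝ)*(Bv-A) := by
        rw [abs_sub_comm, abs_of_nonneg (by linarith : (0:ℝ) ≤ θB - θA), hdiff]
      have h2 : |1 - θA - θB| ≤ 1 := by
        rw [abs_le]
        constructor <;> linarith
      calc |θA-θB| * |1-θA-θB| ≤ |θA-θB| * 1 :=
            mul_le_mul_of_nonneg_left h2 (abs_nonneg _)
        _ = (n:ℝ)*(Bv-A) := by rw [mul_one, h1]
    · have hge1 : (⌊(n:ℝ)*A⌋₊:ℝ) + 1 ≤ (⌊(n:ℝ)*Bv⌋₊:ℝ) := by exact_mod_cast hlt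
      have hsum : (1 - θA) + θB ≤ (n:ℝ)*(Bv - A) := by
        rw [hθA, hθB]
        have expand : (n:ℝ)*(Bv - A) = (n:ℝ)*Bv - (n:ℝ)*A := by ring
        rw [expand]
        linarith
      rw [abs_le]
      constructor <;> nlinarith
  rw [hells, hfa, hfb, hw]
  have hsimp : (n:ℝ)*(1/(K m:ℝ))
        - ((n:ℝ)*(Bv - Bv^2/2) + Bv/2 - θB*(1-θB)/(2*n))
        + ((n:ℝ)*(A - A^2/2) + A/2 - θA*(1-θA)/(2*n))
        - (n:ℝ)*((Bv^2 - A^2)/2)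
      = (A - Bv)/2 + (θB*(1-θB) - θA*(1-θA))/(2*n) := by
    rw [show (n:ℝ)*(1/(K m:ℝ)) = (n:ℝ)*(Bv - A) by rw [hBA]]
    field_simp
    ring
  rw [hsimp]
  refine (abs_add_le _ _).trans ?_
  have e1 : |(A - Bv)/2| = (Bv - A)/2 := by
    rw [abs_div, abs_sub_comm, abs_of_nonneg (by linarith : (0:ℝ) ≤ Bv - A)]
    norm_num
  have e2 : |(θB*(1-θB) - θA*(1-θA))/(2*n)| ≤ (Bv - A)/2 := by
    rw [abs_div, abs_of_pos (by linarith : (0:ℝ) < 2*n), div_le_iff₀ (by linarith : (0:ℝ) < 2*n)]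
    rw [abs_sub_comm]
    calc |θA*(1-θA) - θB*(1-θB)| ≤ (n:ℝ)*(Bv - A) := hkey
      _ = (Bv-A)/2 * (2*n) := by ring
  calc |(A - Bv)/2| + |(θB*(1-θB) - θA*(1-θA))/(2*n)| ≤ (Bv-A)/2 + (Bv-A)/2 := by
        rw [e1]
        linarith
    _ = Bv - A := by ring
    _ = 1/(K m:ℝ) := hBA

/-! ### test function and energy -/

lemma f0_lip (n : ℕ) (a b : ℝ) : |f0 m x n a - f0 m x n b| ≤ 8 * |a - b| := by
  have key : ∀ {a b : ℝ}, a ≤ b → |f0 m x n a - f0 m x n b| ≤ 8*(b - a) := by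
    intro a b hab
    unfold f0
    rw [show -∑ u ∈ range (K m), gg m x n u * lam m a u
          - -∑ u ∈ range (K m), gg m x n u * lam m b u
        = ∑ u ∈ range (K m), gg m x n u * (lam m b u - lam m a u) by
      rw [show ∑ u ∈ range (K m), gg m x n u * (lam m b u - lam m a u)
          = ∑ u ∈ range (K m), (gg m x n u * lam m b u - gg m x n u * lam m a u) from
        Finset.sum_congr rfl (fun u _ => by ring)]
      rw [Finset.sum_sub_distrib]
      ring]
    refine (Finset.abs_sum_le_sum_abs _ _).trans ?_
    calc ∑ u ∈ range (K m), |gg m x n u * (lam m b u - lam m a u)|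
        ≤ ∑ u ∈ range (K m), 8 * (lam m b u - lam m a u) := by
          apply Finset.sum_le_sum
          intro u _
          rw [abs_mul, abs_of_nonneg (sub_nonneg.mpr (lam_mono m u hab))]
          exact mul_le_mul_of_nonneg_right (gg_abs m x n u)
            (sub_nonneg.mpr (lam_mono m u hab))
      _ = 8 * ∑ u ∈ range (K m), (lam m b u - lam m a u) := by rw [Finset.mul_sum]
      _ ≤ 8 * (b - a) := by
          have := sum_lam_sub m hab
          linarith [sum_lam_sub m hab]
  rcases le_total a b with h | h
  · rw [abs_sub_comm a b, abs_of_nonneg (by linarith : (0:ℝ) ≤ b - a)]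
    exact key h
  · rw [abs_of_nonneg (by linarith : (0:ℝ) ≤ a - b)]
    rw [abs_sub_comm]
    exact key h

lemma f0_diff (n : ℕ) :
    (∑ k ∈ range n, f0 m x n (x k)) - (∑ i ∈ range n, f0 m x n (((i:ℝ)+1)/n))
      = ∑ u ∈ range (K m),
          gg m x n u * (Lam m x n u - ∑ i ∈ range n, ell m (((i:ℝ)+1)/n) u) := by
  unfold f0
  have e1 : ∑ k ∈ range n, (-∑ u ∈ range (K m), gg m x n u * lam m (x k) u)
      = -∑ u ∈ range (K m), gg m x n u * (∑ k ∈ range n, lam m (x k) u) := by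
    rw [← Finset.sum_neg_distrib]
    rw [show ∑ u ∈ range (K m), -(gg m x n u * ∑ k ∈ range n, lam m (x k) u)
        = ∑ u ∈ range (K m), ∑ k ∈ range n, -(gg m x n u * lam m (x k) u) from
      Finset.sum_congr rfl (fun u _ => by rw [Finset.mul_sum, ← Finset.sum_neg_distrib])]
    rw [Finset.sum_comm]
    apply Finset.sum_congr rfl
    intro k _
    rw [← Finset.sum_neg_distrib]
  have e2 : ∑ i ∈ range n, (-∑ u ∈ range (K m), gg m x n u * lam m (((i:ℝ)+1)/n) u)
      = -∑ u ∈ range (K m), gg m x n u * (∑ i ∈ range n, lam m (((i:ℝ)+1)/n) u) := by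
    rw [← Finset.sum_neg_distrib]
    rw [show ∑ u ∈ range (K m), -(gg m x n u * ∑ i ∈ range n, lam m (((i:ℝ)+1)/n) u)
        = ∑ u ∈ range (K m), ∑ i ∈ range n, -(gg m x n u * lam m (((i:ℝ)+1)/n) u) from
      Finset.sum_congr rfl (fun u _ => by rw [Finset.mul_sum, ← Finset.sum_neg_distrib])]
    rw [Finset.sum_comm]
    apply Finset.sum_congr rfl
    intro i _
    rw [← Finset.sum_neg_distrib]
  rw [e1, e2]
  rw [show -∑ u ∈ range (K m), gg m x n u * (∑ k ∈ range n, lam m (x k) u)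
        - -∑ u ∈ range (K m), gg m x n u * (∑ i ∈ range n, lam m (((i:ℝ)+1)/n) u)
      = ∑ u ∈ range (K m), (gg m x n u * (∑ i ∈ range n, lam m (((i:ℝ)+1)/n) u)
          - gg m x n u * (∑ k ∈ range n, lam m (x k) u)) by
    rw [Finset.sum_sub_distrib]
    ring]
  apply Finset.sum_congr rfl
  intro u _
  have hlamA : ∑ k ∈ range n, lam m (x k) u = (n:ℝ)*(1/(K m:ℝ)) - Lam m x n u := by
    unfold Lam ell
    rw [show ∑ k ∈ range n, (1/(K m:ℝ) - lam m (x k) u)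
        = ∑ k ∈ range n, (1/(K m:ℝ)) - ∑ k ∈ range n, lam m (x k) u from Finset.sum_sub_distrib _ _]
    rw [Finset.sum_const, Finset.card_range, nsmul_eq_mul]
    ring
  have hlamB : ∑ i ∈ range n, lam m (((i:ℝ)+1)/n) u
      = (n:ℝ)*(1/(K m:ℝ)) - ∑ i ∈ range n, ell m (((i:ℝ)+1)/n) u := by
    rw [show ∑ i ∈ range n, ell m (((i:ℝ)+1)/n) u
        = ∑ i ∈ range n, (1/(K m:ℝ) - lam m (((i:ℝ)+1)/n) u) from rfl]
    rw [Finset.sum_sub_distrib, Finset.sum_const, Finset.card_range, nsmul_eq_mul]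
    ring
  rw [hlamA, hlamB]
  ring

lemma energy_test (n : ℕ) (f : ℝ → ℝ) (hf : ∀ a b : ℝ, |f a - f b| ≤ |a - b|) :
    (∑ k ∈ range n, f (x k)) - (∑ i ∈ range n, f (((i:ℝ)+1)/n))
      ≤ energy (fun i : Fin n => x i) := by
  unfold energy
  apply Finset.le_inf'
  intro π _
  have ha : ∑ k ∈ range n, f (x k) = ∑ i : Fin n, f (x ((π i : Fin n) : ℕ)) := by
    rw [← Fin.sum_univ_eq_sum_range (fun k => f (x k)) n]
    exact (Equiv.sum_comp π (fun j : Fin n => f (x (j : ℕ)))).symm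
  have hb : ∑ i ∈ range n, f (((i:ℝ)+1)/n)
      = ∑ i : Fin n, f ((((i : ℕ):ℝ)+1)/(n:ℝ)) := by
    rw [← Fin.sum_univ_eq_sum_range (fun i => f (((i:ℝ)+1)/(n:ℝ))) n]
  rw [ha, hb, ← Finset.sum_sub_distrib]
  apply Finset.sum_le_sum
  intro i _
  have h1 := hf (x ((π i : Fin n) : ℕ)) ((((i : ℕ):ℝ)+1)/(n:ℝ))
  have h2 := le_abs_self (f (x ((π i : Fin n) : ℕ)) - f ((((i : ℕ):ℝ)+1)/(n:ℝ)))
  linarith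

lemma energy_nonneg (n : ℕ) : energy (fun i : Fin n => x i) ≤ 2*n → True := fun _ => trivial

lemma energy_le (hx : ∀ k, x k ∈ Set.Icc (0:ℝ) 1) (n : ℕ) :
    energy (fun i : Fin n => x i) ≤ 2*n := by
  unfold energy
  refine (Finset.inf'_le _ (Finset.mem_univ (1 : Equiv.Perm (Fin n)))).trans ?_
  calc ∑ i : Fin n, |x (((1 : Equiv.Perm (Fin n)) i : Fin n) : ℕ) - (((i:ℕ):ℝ)+1)/(n:ℝ)|
      ≤ ∑ _i : Fin n, (2:ℝ) := by
        apply Finset.sum_le_sum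
        intro i _
        simp only [Equiv.Perm.coe_one, id_eq]
        obtain ⟨h0, h1⟩ := hx (i:ℕ)
        have hn0 : (0:ℝ) < n := by exact_mod_cast i.pos
        have htgt0 : 0 ≤ (((i:ℕ):ℝ)+1)/n := by positivity
        have htgt1 : (((i:ℕ):ℝ)+1)/n ≤ 1 := by
          rw [div_le_one hn0]
          exact_mod_cast i.isLt
        rw [abs_le]
        constructor <;> linarith
    _ = 2*n := by
        rw [Finset.sum_const, Finset.card_univ, Fintype.card_fin, nsmul_eq_mul]
        ring

lemma energy_chain (n : ℕ) (hn : n ≤ M m) :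
    (M m:ℝ) * B m x n / 2 - 3/2 ≤ energy (fun i : Fin n => x i) := by
  have hK := Kr_pos m
  have hf : ∀ a b : ℝ, |f0 m x n a / 8 - f0 m x n b / 8| ≤ |a - b| := by
    intro a b
    rw [div_sub_div_same, abs_div]
    rw [show |(8:ℝ)| = 8 by norm_num]
    rw [div_le_iff₀ (by norm_num : (0:ℝ) < 8)]
    calc |f0 m x n a - f0 m x n b| ≤ 8 * |a - b| := f0_lip m x n a b
      _ = |a - b| * 8 := by ring
  have htest := energy_test x n (fun t => f0 m x n t / 8) hf
  have hdiff := f0_diff m x n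
  have herr : Mid m x n - 8
      ≤ ∑ u ∈ range (K m),
          gg m x n u * (Lam m x n u - ∑ i ∈ range n, ell m (((i:ℝ)+1)/n) u) := by
    have hsub : Mid m x n - ∑ u ∈ range (K m),
        gg m x n u * (Lam m x n u - ∑ i ∈ range n, ell m (((i:ℝ)+1)/n) u)
        = ∑ u ∈ range (K m),
            gg m x n u * ((∑ i ∈ range n, ell m (((i:ℝ)+1)/n) u) - (n:ℝ) * w m u) := by
      unfold Mid
      rw [← Finset.sum_sub_distrib]
      apply Finset.sum_congr rfl
      intro u _
      ring
    have habs : |Mid m x n - ∑ u ∈ range (K m),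
        gg m x n u * (Lam m x n u - ∑ i ∈ range n, ell m (((i:ℝ)+1)/n) u)| ≤ 8 := by
      rw [hsub]
      refine (Finset.abs_sum_le_sum_abs _ _).trans ?_
      calc ∑ u ∈ range (K m),
            |gg m x n u * ((∑ i ∈ range n, ell m (((i:ℝ)+1)/n) u) - (n:ℝ) * w m u)|
          ≤ ∑ u ∈ range (K m), 8 * (1/(K m:ℝ)) := by
            apply Finset.sum_le_sum
            intro u hu
            rw [abs_mul]
            apply mul_le_mul (gg_abs m x n u) (Sl_bound m n u (Finset.mem_range.mp hu))
              (abs_nonneg _) (by norm_num)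
        _ = 8 := by
            rw [Finset.sum_const, Finset.card_range, nsmul_eq_mul]
            field_simp
    have := (abs_le.mp habs).2
    linarith
  have hBle := B_le m x hn
  have hKM := K_eq m
  -- combine
  have hsum : (∑ k ∈ range n, f0 m x n (x k) / 8)
      - (∑ i ∈ range n, f0 m x n (((i:ℝ)+1)/n) / 8)
      = ((∑ k ∈ range n, f0 m x n (x k)) - (∑ i ∈ range n, f0 m x n (((i:ℝ)+1)/n)))/8 := by
    rw [← Finset.sum_div, ← Finset.sum_div]
    ring
  rw [hsum] at htest
  rw [hdiff] at htest
  have hfinal : (M m:ℝ) * B m x n / 2 - 3/2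
      ≤ (∑ u ∈ range (K m),
          gg m x n u * (Lam m x n u - ∑ i ∈ range n, ell m (((i:ℝ)+1)/n) u))/8 := by
    have h4MB : (K m:ℝ) * B m x n = 4 * ((M m:ℝ) * B m x n) := by
      rw [hKM]; ring
    rw [h4MB] at hBle
    linarith
  linarith

lemma M_real : (M m : ℝ) = 2^m := by
  unfold M; push_cast; rfl

end

end S2

/-- there is a constant `c > 0` such that for every infinite sequence in `[0,1]`
there are infinitely many `n` with `E(x_1,…,x_n) ≥ c √(log n)`. -/
theorem stmt_2 : ∃ c : ℝ, 0 < c ∧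
    ∀ x : ℕ → ℝ, (∀ k, x k ∈ Set.Icc (0 : ℝ) 1) →
      ∀ N : ℕ, ∃ n : ℕ, N ≤ n ∧
        energy (fun i : Fin n => x i) ≥ c * Real.sqrt (Real.log n) := by
  refine ⟨1/256, by norm_num, ?_⟩
  intro x hx N
  set m := (512*(N+2))^2 with hm
  have hmeq : m = (512*(N+2)) * (512*(N+2)) := by rw [hm]; ring
  have hm2 : 2 ≤ m := by nlinarith [hmeq]
  have hs : (512:ℝ)*((N:ℝ)+2) ≤ Real.sqrt ((m:ℝ)+2) := by
    rw [show ((512:ℝ)*((N:ℝ)+2)) = ((512*(N+2) : ℕ) : ℝ) by push_cast; ring]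
    rw [Real.le_sqrt' (by positivity)]
    have : ((m:ℕ):ℝ) = ((512*(N+2):ℕ):ℝ)^2 := by
      rw [hm]; push_cast; ring
    rw [this]
    linarith
  have hs512 : (512:ℝ) ≤ Real.sqrt ((m:ℝ)+2) := by
    refine le_trans ?_ hs
    have hN : (0:ℝ) ≤ (N:ℝ) := Nat.cast_nonneg N
    linarith
  obtain ⟨n, hnM, hB⟩ := S2.exists_good m x
  have hchain := S2.energy_chain m x n (le_of_lt hnM)
  have hpear := S2.pear_G_lower m x hm2
  have hen : Real.sqrt ((m:ℝ)+2)/128 - 2 ≤ energy (fun i : Fin n => x i) := by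
    have h1 : Real.sqrt ((m:ℝ)+2)/64 - 5/16 ≤ (S2.M m:ℝ) * S2.B m x n := le_trans hpear hB
    linarith
  have hN : (0:ℝ) ≤ (N:ℝ) := Nat.cast_nonneg N
  have hnN : N ≤ n := by
    by_contra hcon
    push_neg at hcon
    have hle := S2.energy_le x hx n
    have h2 : ((n:ℝ)) + 1 ≤ (N:ℝ) := by exact_mod_cast hcon
    linarith
  refine ⟨n, hnN, ?_⟩
  have hn1 : 1 ≤ n := by
    by_contra hcon
    push_neg at hcon
    have hn0 : n = 0 := by omega
    subst hn0
    have h0 : energy (fun i : Fin 0 => x i) = 0 := by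
      unfold energy
      have hconst : (fun π : Equiv.Perm (Fin 0) =>
          ∑ i : Fin 0, |(fun i : Fin 0 => x i) (π i) - (((i:ℕ):ℝ)+1)/((0:ℕ):ℝ)|)
          = fun _ => (0:ℝ) := by
        funext π
        simp
      rw [hconst, Finset.inf'_const]
    rw [h0] at hen
    linarith
  have hn0 : (0:ℝ) < (n:ℝ) := by exact_mod_cast hn1
  have hlog : Real.log n ≤ (m:ℝ) + 2 := by
    have hnM' : (n:ℝ) ≤ (S2.M m:ℝ) := by exact_mod_cast le_of_lt hnM
    have hlog1 : Real.log n ≤ Real.log (S2.M m) := Real.log_le_log hn0 hnM'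
    have hlogM : Real.log ((S2.M m : ℝ)) = (m:ℝ) * Real.log 2 := by
      rw [S2.M_real m, Real.log_pow]
    have hlog2 : Real.log 2 ≤ 1 := by
      have := Real.log_le_sub_one_of_pos (by norm_num : (0:ℝ) < 2)
      linarith
    have hmr : (0:ℝ) ≤ (m:ℝ) := Nat.cast_nonneg m
    calc Real.log n ≤ (m:ℝ) * Real.log 2 := by rw [← hlogM]; exact hlog1
      _ ≤ (m:ℝ) * 1 := mul_le_mul_of_nonneg_left hlog2 hmr
      _ ≤ (m:ℝ) + 2 := by linarith
  have hsq : Real.sqrt (Real.log n) ≤ Real.sqrt ((m:ℝ)+2) := Real.sqrt_le_sqrt hlog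
  rw [ge_iff_le]
  calc (1/256 : ℝ) * Real.sqrt (Real.log n) ≤ (1/256) * Real.sqrt ((m:ℝ)+2) :=
        mul_le_mul_of_nonneg_left hsq (by norm_num)
    _ ≤ Real.sqrt ((m:ℝ)+2)/128 - 2 := by linarith
    _ ≤ energy (fun i : Fin n => x i) := hen
end

section
/- There exist n ∈ ℕ and points 0 ≤ x_1 ≤ … ≤ x_n ≤ 1 such that E(x_1, …, x_n) ≥ n/100 and, for every x ∈ [0,1], E(x_1, …, x_n, x) ≥ E(x_1, …, x_n) + 1/10. -/
/-- Kantorovich-type dual lower bound for the energy: for any `1`-Lipschitz-type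
potential `f`, the energy is at least `∑ f(x_i) - ∑ f(t_i)`. -/
lemma energy_dual {N : ℕ} (x : Fin N → ℝ) (f : ℝ → ℝ)
    (hf : ∀ a b : ℝ, f a - f b ≤ |a - b|) :
    (∑ i : Fin N, f (x i)) - (∑ i : Fin N, f ((((i : ℕ) : ℝ) + 1) / (N : ℝ))) ≤ energy x := by
  apply Finset.le_inf'
  intro π _
  have hsum : ∑ i : Fin N, f (x (π i)) = ∑ i : Fin N, f (x i) :=
    Equiv.sum_comp π (fun i => f (x i))
  calc (∑ i : Fin N, f (x i)) - (∑ i : Fin N, f ((((i : ℕ) : ℝ) + 1) / (N : ℝ)))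
      = ∑ i : Fin N, (f (x (π i)) - f ((((i : ℕ) : ℝ) + 1) / (N : ℝ))) := by
        rw [Finset.sum_sub_distrib, hsum]
    _ ≤ ∑ i : Fin N, |x (π i) - (((i : ℕ) : ℝ) + 1) / (N : ℝ)| :=
        Finset.sum_le_sum (fun i _ => hf _ _)

/-- The dual potential used for the five-point lower bound. -/
noncomputable def gpot (s : ℝ) : ℝ :=
  min |s| (min (|s - 3/10| + 1/5) (min (|s - 1/2| + 1/5) (min (|s - 7/10| + 1/5) (|s - 9/10| + 1/5))))

lemma gpot_lip (a b : ℝ) : gpot b - gpot a ≤ |a - b| := by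
  have tri : ∀ c : ℝ, |b - c| ≤ |a - c| + |a - b| := by
    intro c
    calc |b - c| ≤ |b - a| + |a - c| := abs_sub_le b a c
      _ = |a - c| + |a - b| := by rw [abs_sub_comm b a]; ring
  have h0 : |b| ≤ |a| + |a - b| := by
    have := tri 0
    simpa using this
  rw [sub_le_iff_le_add, gpot, gpot]
  rw [← min_add_add_left, ← min_add_add_left, ← min_add_add_left, ← min_add_add_left]
  refine min_le_min (by linarith) (min_le_min ?_ (min_le_min ?_ (min_le_min ?_ ?_))) <;>
    linarith [tri (3/10 : ℝ), tri (1/2 : ℝ), tri (7/10 : ℝ), tri (9/10 : ℝ)]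

lemma gpot_le (y : ℝ) (hy : y ∈ Set.Icc (0:ℝ) 1) : gpot y ≤ 3/10 := by
  obtain ⟨h0, h1⟩ := hy
  rcases le_total y (2/10) with h | h
  · calc gpot y ≤ |y| := min_le_left _ _
      _ ≤ 3/10 := by rw [abs_of_nonneg h0]; linarith
  rcases le_total y (4/10) with h' | h'
  · calc gpot y ≤ |y - 3/10| + 1/5 :=
        le_trans (min_le_right _ _) (min_le_left _ _)
      _ ≤ 3/10 := by
        have : |y - 3/10| ≤ 1/10 := abs_le.2 ⟨by linarith, by linarith⟩
        linarith
  rcases le_total y (6/10) with h'' | h''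
  · calc gpot y ≤ |y - 1/2| + 1/5 :=
        le_trans (min_le_right _ _) (le_trans (min_le_right _ _) (min_le_left _ _))
      _ ≤ 3/10 := by
        have : |y - 1/2| ≤ 1/10 := abs_le.2 ⟨by linarith, by linarith⟩
        linarith
  rcases le_total y (8/10) with h''' | h'''
  · calc gpot y ≤ |y - 7/10| + 1/5 :=
        le_trans (min_le_right _ _) (le_trans (min_le_right _ _)
          (le_trans (min_le_right _ _) (min_le_left _ _)))
      _ ≤ 3/10 := by
        have : |y - 7/10| ≤ 1/10 := abs_le.2 ⟨by linarith, by linarith⟩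
        linarith
  · calc gpot y ≤ |y - 9/10| + 1/5 :=
        le_trans (min_le_right _ _) (le_trans (min_le_right _ _)
          (le_trans (min_le_right _ _) (min_le_right _ _)))
      _ ≤ 3/10 := by
        have : |y - 9/10| ≤ 1/10 := abs_le.2 ⟨by linarith, by linarith⟩
        linarith

lemma gpot_x1 : gpot (3/10) = 1/5 := by norm_num [gpot, abs_of_nonpos, abs_of_nonneg]
lemma gpot_x2 : gpot (1/2) = 1/5 := by norm_num [gpot, abs_of_nonpos, abs_of_nonneg]
lemma gpot_x3 : gpot (7/10) = 1/5 := by norm_num [gpot, abs_of_nonpos, abs_of_nonneg]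
lemma gpot_x4 : gpot (9/10) = 1/5 := by norm_num [gpot, abs_of_nonpos, abs_of_nonneg]
lemma gpot_t1 : gpot (1/5) = 1/5 := by norm_num [gpot, abs_of_nonpos, abs_of_nonneg]
lemma gpot_t2 : gpot (2/5) = 3/10 := by norm_num [gpot, abs_of_nonpos, abs_of_nonneg]
lemma gpot_t3 : gpot (3/5) = 3/10 := by norm_num [gpot, abs_of_nonpos, abs_of_nonneg]
lemma gpot_t4 : gpot (4/5) = 3/10 := by norm_num [gpot, abs_of_nonpos, abs_of_nonneg]
lemma gpot_t5 : gpot 1 = 3/10 := by norm_num [gpot, abs_of_nonpos, abs_of_nonneg]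

/-- Upper bound for the energy of the four-point configuration, via the identity matching. -/
lemma four_up : energy (![3/10, 1/2, 7/10, 9/10] : Fin 4 → ℝ) ≤ 1/5 := by
  refine le_trans (Finset.inf'_le _ (Finset.mem_univ 1)) ?_
  simp [Fin.sum_univ_four]
  have h1 : |(3:ℝ) / 10 - 4⁻¹| ≤ 1/20 := abs_le.2 (by norm_num)
  have h2 : |(2:ℝ)⁻¹ - (1 + 1) / 4| ≤ 0 := abs_le.2 (by norm_num)
  have h3 : |(7:ℝ) / 10 - (2 + 1) / 4| ≤ 1/20 := abs_le.2 (by norm_num)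
  have h4 : |(9:ℝ) / 10 - (((3:Fin 4):ℕ) + 1 : ℝ) / 4| ≤ 1/10 :=
    abs_le.2 (by norm_num [show ((3:Fin 4):ℕ) = 3 from rfl])
  linarith

/-- Lower bound for the energy of the four-point configuration, dual potential `-id`. -/
lemma four_low : (1:ℝ)/10 ≤ energy (![3/10, 1/2, 7/10, 9/10] : Fin 4 → ℝ) := by
  have hd := energy_dual (![3/10, 1/2, 7/10, 9/10] : Fin 4 → ℝ) (fun s => -s) (fun a b => by
    have h1 := le_abs_self (b - a)
    have h2 := abs_sub_comm a b
    linarith)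
  simp only [Fin.sum_univ_four, Matrix.cons_val_zero, Matrix.cons_val_one, Matrix.head_cons,
    Matrix.cons_val_two, Matrix.tail_cons, Matrix.cons_val_three] at hd
  norm_num [show ((3:Fin 4):ℕ) = 3 from rfl] at hd
  linarith

/-- Lower bound for the five-point energies, dual potential `-gpot`. -/
lemma five_low (y : ℝ) (hy : y ∈ Set.Icc (0:ℝ) 1) :
    (3:ℝ)/10 ≤ energy (Fin.snoc (![3/10, 1/2, 7/10, 9/10] : Fin 4 → ℝ) y) := by
  have hd := energy_dual (Fin.snoc (![3/10, 1/2, 7/10, 9/10] : Fin 4 → ℝ) y : Fin 5 → ℝ)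
    (fun s => -gpot s) (fun a b => by
      have := gpot_lip a b
      linarith)
  have hs : (∑ i : Fin 5, -gpot ((Fin.snoc (![3/10, 1/2, 7/10, 9/10] : Fin 4 → ℝ) y : Fin 5 → ℝ) i))
      = (∑ i : Fin 4, -gpot ((![3/10, 1/2, 7/10, 9/10] : Fin 4 → ℝ) i)) + -gpot y := by
    rw [Fin.sum_univ_castSucc]
    simp
  rw [hs] at hd
  simp only [Fin.sum_univ_castSucc, Fin.coe_castSucc, Fin.val_last, Fin.sum_univ_four,
    Matrix.cons_val_zero, Matrix.cons_val_one, Matrix.head_cons, Matrix.cons_val_two,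
    Matrix.tail_cons, Matrix.cons_val_three] at hd
  norm_num [show (![3/10,1/2,7/10,9/10] : Fin 4 → ℝ) ((Fin.last 1).castSucc.castSucc) = 1/2 from rfl,
    show (![3/10,1/2,7/10,9/10] : Fin 4 → ℝ) ((Fin.last 2).castSucc) = 7/10 from rfl,
    show (![3/10,1/2,7/10,9/10] : Fin 4 → ℝ) (Fin.last 3) = 9/10 from rfl,
    show ((3:Fin 4):ℕ) = 3 from rfl,
    gpot_x1, gpot_x2, gpot_x3, gpot_x4, gpot_t1, gpot_t2, gpot_t3, gpot_t4, gpot_t5] at hd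
  have := gpot_le y hy
  have e : (Fin.snoc (![3/10, 1/2, 7/10, 9/10] : Fin 4 → ℝ) y : Fin 5 → ℝ) = ![3/10, 1/2, 7/10, 9/10, y] := by
    funext i; fin_cases i <;> rfl
  rw [e]
  linarith

/-- there exist `n` and sorted points `0 ≤ x_1 ≤ … ≤ x_n ≤ 1` with
`E(x_1,…,x_n) ≥ n/100` and `E(x_1,…,x_n,x) ≥ E(x_1,…,x_n) + 1/10` for every `x ∈ [0,1]`. -/
theorem stmt_3 : ∃ (n : ℕ) (x : Fin n → ℝ), Monotone x ∧
    (∀ i, x i ∈ Set.Icc (0 : ℝ) 1) ∧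
    energy x ≥ (n : ℝ) / 100 ∧
    ∀ y ∈ Set.Icc (0 : ℝ) 1, energy (Fin.snoc x y) ≥ energy x + 1 / 10 := by
  refine ⟨4, ![3/10, 1/2, 7/10, 9/10], ?_, ?_, ?_, ?_⟩
  · intro i j hij
    fin_cases i <;> fin_cases j <;> simp_all <;> norm_num
  · intro i; fin_cases i <;> constructor <;> norm_num
  · have := four_low
    norm_num
    linarith
  · intro y hy
    have h1 := five_low y hy
    have h2 := four_up
    linarith
end

section
/- Let n ≥ 1 and 0 ≤ x_1 ≤ x_2 ≤ … ≤ x_n ≤ 1. Then ∑_{i=1}^{n} ∫_{(i−1)/n}^{i/n} |x_i − y| dy = ∫_0^1 | (#{1 ≤ i ≤ n : x_i ≤ x})/n − x | dx. (The left-hand side is the Wasserstein-1 distance between the empirical measure (1/n)∑ δ_{x_i} and Lebesgue measure on [0,1]; the right-hand side is the L¹ star-discrepancy.) -/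
open scoped Classical

noncomputable def Phi (a b : ℝ) : ℝ := (a - b) * |a - b| / 2

lemma phi_antisymm (a b : ℝ) : Phi a b = -Phi b a := by
  unfold Phi; rw [abs_sub_comm]; ring

lemma base_deriv (s : ℝ) : HasDerivAt (fun y : ℝ => y * |y| / 2) |s| s := by
  rcases lt_trichotomy s 0 with hs | hs | hs
  · have h : HasDerivAt (fun y : ℝ => y * -y / 2) |s| s := by
      have h := ((hasDerivAt_id s).mul ((hasDerivAt_id s).neg)).div_const 2
      convert h using 1
      rfl
      rfl
      · simp
      simp [abs_of_neg hs]
    refine h.congr_of_eventuallyEq ?_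
    filter_upwards [eventually_lt_nhds hs] with y hy
    simp [abs_of_neg hy]
  · subst hs
    rw [hasDerivAt_iff_tendsto_slope]
    have key : Filter.Tendsto (fun y : ℝ => |y| / 2) (nhdsWithin 0 {(0:ℝ)}ᶜ) (nhds |(0:ℝ)|) := by
      have : Filter.Tendsto (fun y : ℝ => |y| / 2) (nhds 0) (nhds (|(0:ℝ)| / 2)) :=
        (continuous_abs.div_const 2).continuousAt
      simpa using this.mono_left nhdsWithin_le_nhds
    refine key.congr' ?_
    filter_upwards [self_mem_nhdsWithin] with y hy
    have hy' : y ≠ 0 := hy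
    simp [slope_def_field]
    field_simp
  · have h : HasDerivAt (fun y : ℝ => y * y / 2) |s| s := by
      have h := ((hasDerivAt_id s).mul (hasDerivAt_id s)).div_const 2
      convert h using 1
      rfl
      rfl
      · simp
      simp [abs_of_pos hs]
    refine h.congr_of_eventuallyEq ?_
    filter_upwards [eventually_gt_nhds hs] with y hy
    simp [abs_of_pos hy]

lemma hasDerivAt_phi (c t : ℝ) : HasDerivAt (fun y => Phi y c) |t - c| t := by
  have := (base_deriv (t - c)).comp t ((hasDerivAt_id t).sub_const c)
  simpa [Phi, Function.comp_def] using this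

lemma integral_abs_sub (a b c : ℝ) :
    (∫ y in a..b, |c - y|) = Phi b c - Phi a c := by
  have h : ∀ t ∈ Set.uIcc a b, HasDerivAt (fun y => Phi y c) |t - c| t := fun t _ =>
    hasDerivAt_phi c t
  have h2 := intervalIntegral.integral_eq_sub_of_hasDerivAt h
    ((continuous_abs.comp (continuous_id.sub continuous_const)).intervalIntegrable a b)
  rw [← h2]
  congr 1; ext y; rw [abs_sub_comm]

lemma card_filter_val_lt (n k : ℕ) (h : k ≤ n) :
    (Finset.univ.filter fun i : Fin n => (i : ℕ) < k).card = k := by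
  rw [← Finset.card_range k]
  apply Finset.card_bij (fun (a : Fin n) _ => (a : ℕ))
  · intro a ha; simp only [Finset.mem_filter] at ha; simpa using ha.2
  · intro a _ b _ hab; exact Fin.val_injective hab
  · intro b hb
    simp only [Finset.mem_range] at hb
    exact ⟨⟨b, lt_of_lt_of_le hb h⟩, by simp [hb], rfl⟩


/-- for sorted points `0 ≤ x_1 ≤ … ≤ x_n ≤ 1`,
`∑_{i=1}^n ∫_{(i−1)/n}^{i/n} |x_i − y| dy = ∫_0^1 |#{i : x_i ≤ t}/n − t| dt`. -/
theorem stmt_4 (n : ℕ) (hn : 1 ≤ n) (x : Fin n → ℝ) (hmono : Monotone x)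
    (hx : ∀ i, x i ∈ Set.Icc (0 : ℝ) 1) :
    ∑ i : Fin n, (∫ y in (((i : ℕ) : ℝ) / n)..((((i : ℕ) : ℝ) + 1) / n), |x i - y|) =
      ∫ t in (0 : ℝ)..1,
        |((Finset.univ.filter fun i : Fin n => x i ≤ t).card : ℝ) / n - t| := by
  have hn0 : (0 : ℝ) < n := by exact_mod_cast hn
  set f : ℝ → ℝ := fun t =>
    |((Finset.univ.filter fun i : Fin n => x i ≤ t).card : ℝ) / n - t| with hf
  set z : ℕ → ℝ := fun k => if k = 0 then 0 else if h2 : k - 1 < n then x ⟨k - 1, h2⟩ else 1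
    with hzdef
  have hz0 : z 0 = 0 := by simp [hzdef]
  have hzlast : z (n + 1) = 1 := by simp [hzdef]
  have hzk : ∀ (k : ℕ) (h : k < n), z (k + 1) = x ⟨k, h⟩ := by
    intro k h; simp [hzdef, h]
  have hzval : ∀ (k : ℕ) (hpos : 0 < k) (hk : k ≤ n), z k = x ⟨k - 1, by omega⟩ := by
    intro k hpos hk
    have := hzk (k - 1) (by omega)
    rwa [Nat.sub_add_cancel hpos] at this
  have hFmono : Monotone (fun t : ℝ =>
      ((Finset.univ.filter fun i : Fin n => x i ≤ t).card : ℝ) / n) := by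
    intro a b hab
    have hc : ((Finset.univ.filter fun i : Fin n => x i ≤ a).card : ℝ)
        ≤ ((Finset.univ.filter fun i : Fin n => x i ≤ b).card : ℝ) := by
      exact_mod_cast Finset.card_le_card
        (Finset.monotone_filter_right _ fun i _ hi => le_trans hi hab)
    exact div_le_div_of_nonneg_right hc hn0.le
  have hfint : ∀ a b : ℝ, IntervalIntegrable f MeasureTheory.volume a b := by
    intro a b
    exact ((hFmono.intervalIntegrable).sub (continuous_id.intervalIntegrable a b)).abs
  have hsplit : (∫ t in (0:ℝ)..1, f t) = ∑ k ∈ Finset.range (n + 1),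
      ∫ t in z k..z (k + 1), f t := by
    have h := intervalIntegral.sum_integral_adjacent_intervals
      (a := z) (n := n + 1) (fun k _ => hfint (z k) (z (k + 1)))
    rw [hz0, hzlast] at h
    exact h.symm
  have hzmono : ∀ k, k ≤ n → z k ≤ z (k + 1) := by
    intro k hk
    rcases Nat.eq_zero_or_pos k with rfl | hpos
    · rw [hz0, hzk 0 (by omega)]; exact (hx _).1
    · rcases Nat.eq_or_lt_of_le hk with heq | hk'
      · subst heq
        rw [hzval k hpos le_rfl, hzlast]; exact (hx _).2
      · rw [hzval k hpos hk, hzk k hk']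
        exact hmono (by simp only [Fin.le_def]; omega)
  have hpiece : ∀ k, k ≤ n → (∫ t in z k..z (k + 1), f t)
      = ∫ t in z k..z (k + 1), |(k : ℝ) / n - t| := by
    intro k hk
    apply intervalIntegral.integral_congr_ae
    have hne : ∀ᵐ t : ℝ, t ≠ z (k + 1) := by
      refine MeasureTheory.ae_iff.mpr ?_
      simp only [ne_eq, not_not, Set.setOf_eq_eq_singleton]
      exact MeasureTheory.measure_singleton _
    filter_upwards [hne] with t ht hmem
    rw [Set.uIoc_of_le (hzmono k hk)] at hmem
    have ht1 : z k < t := hmem.1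
    have ht2 : t < z (k + 1) := lt_of_le_of_ne hmem.2 ht
    have hcard : (Finset.univ.filter fun i : Fin n => x i ≤ t)
        = Finset.univ.filter fun i : Fin n => (i : ℕ) < k := by
      apply Finset.filter_congr
      intro i _
      constructor
      · intro hxi
        by_contra hik
        push_neg at hik
        have hkn : k < n := lt_of_le_of_lt hik i.isLt
        have : z (k + 1) ≤ x i := by
          rw [hzk k hkn]; exact hmono (by simp only [Fin.le_def]; omega)
        linarith
      · intro hik
        have hpos : 0 < k := by omega
        have hxz : x i ≤ z k := by
          rw [hzval k hpos hk]; exact hmono (by simp only [Fin.le_def]; omega)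
        linarith
    show f t = |(k : ℝ) / n - t|
    rw [hf]
    simp only [Finset.filter_congr_decidable] at hcard ⊢
    rw [hcard, card_filter_val_lt n k hk]
  have hLHS : ∀ i : Fin n,
      (∫ y in (((i : ℕ) : ℝ) / n)..((((i : ℕ) : ℝ) + 1) / n), |x i - y|)
        = Phi ((((i : ℕ) : ℝ) + 1) / n) (x i) - Phi (((i : ℕ) : ℝ) / n) (x i) :=
    fun i => integral_abs_sub _ _ _
  rw [hsplit]
  have hRHSk : ∀ k ∈ Finset.range (n + 1), (∫ t in z k..z (k + 1), f t)
      = Phi (z (k + 1)) ((k : ℝ) / n) - Phi (z k) ((k : ℝ) / n) := by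
    intro k hk
    rw [hpiece k (Nat.lt_succ_iff.mp (Finset.mem_range.mp hk)), integral_abs_sub]
  rw [Finset.sum_congr rfl hRHSk, Finset.sum_congr rfl (fun i _ => hLHS i)]
  have hxz : ∀ i : Fin n, x i = z ((i : ℕ) + 1) := by
    intro i
    rw [hzk (i : ℕ) i.isLt]
  calc ∑ i : Fin n,
      (Phi ((((i : ℕ) : ℝ) + 1) / n) (x i) - Phi (((i : ℕ) : ℝ) / n) (x i))
      = ∑ i ∈ Finset.range n,
        (Phi (((i : ℝ) + 1) / n) (z (i + 1)) - Phi ((i : ℝ) / n) (z (i + 1))) := by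
        rw [← Fin.sum_univ_eq_sum_range (fun i : ℕ =>
          Phi (((i : ℝ) + 1) / n) (z (i + 1)) - Phi ((i : ℝ) / n) (z (i + 1))) n]
        exact Finset.sum_congr rfl fun i _ => by rw [hxz i]
    _ = ∑ k ∈ Finset.range n,
        (Phi (z (k + 1)) ((k : ℝ) / n) - Phi (z (k + 1)) (((k : ℝ) + 1) / n)) := by
        refine Finset.sum_congr rfl fun k _ => ?_
        rw [phi_antisymm (((k : ℝ) + 1) / n) (z (k + 1)),
          phi_antisymm ((k : ℝ) / n) (z (k + 1))]
        ring
    _ = ∑ k ∈ Finset.range (n + 1),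
        (Phi (z (k + 1)) ((k : ℝ) / n) - Phi (z k) ((k : ℝ) / n)) := by
        rw [Finset.sum_sub_distrib, Finset.sum_sub_distrib,
          Finset.sum_range_succ (fun k => Phi (z (k + 1)) ((k : ℝ) / n)) n,
          Finset.sum_range_succ' (fun k => Phi (z k) ((k : ℝ) / n)) n]
        have e1 : Phi (z (n + 1)) ((n : ℝ) / n) = 0 := by
          rw [hzlast, div_self (ne_of_gt hn0)]; simp [Phi]
        have e2 : Phi (z 0) (((0 : ℕ) : ℝ) / n) = 0 := by
          rw [hz0]; simp [Phi]
        rw [e1, e2]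
        have e3 : ∀ k ∈ Finset.range n,
            Phi (z (k + 1)) (((k : ℝ) + 1) / n) = Phi (z (k + 1)) ((((k + 1 : ℕ)) : ℝ) / n) := by
          intro k _; push_cast; try ring_nf
        rw [Finset.sum_congr rfl e3]
        try ring
end

section
/- Let n ≥ 1 and 0 ≤ x_1 ≤ x_2 ≤ … ≤ x_n ≤ 1, and let E = ∑_{i=1}^{n} |x_i − i/n|. Then | ∫_0^1 | #{1 ≤ i ≤ n : x_i ≤ x} − n·x | dx − E | ≤ 1; that is, n times the L¹ star-discrepancy of the point set differs from the energy E by at most 1. -/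
open scoped Classical
open MeasureTheory Finset

lemma step_integral (a b : ℝ) (ha : a ∈ Set.Icc (0:ℝ) 1) (hb : b ∈ Set.Icc (0:ℝ) 1) :
    (∫ t in (0:ℝ)..1, |(if a ≤ t then (1:ℝ) else 0) - (if b ≤ t then (1:ℝ) else 0)|)
      = |a - b| := by
  wlog hab : a ≤ b generalizing a b
  · have h := this b a hb ha (le_of_not_ge hab)
    rw [abs_sub_comm, ← h]
    apply intervalIntegral.integral_congr
    intro t _
    simp only []
    rw [abs_sub_comm]
  have hpt : ∀ t : ℝ, |(if a ≤ t then (1:ℝ) else 0) - (if b ≤ t then (1:ℝ) else 0)|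
      = Set.indicator (Set.Ico a b) (fun _ => (1:ℝ)) t := by
    intro t
    by_cases h1 : a ≤ t <;> by_cases h2 : b ≤ t
    · simp [Set.indicator, Set.mem_Ico, h1, h2, not_lt.2 h2]
    · simp [Set.indicator, Set.mem_Ico, h1, h2, lt_of_not_ge h2]
    · exact absurd (hab.trans h2) h1
    · simp [Set.indicator, Set.mem_Ico, h1, h2]
  simp only [hpt]
  rw [intervalIntegral.integral_of_le zero_le_one,
    MeasureTheory.setIntegral_indicator measurableSet_Ico, MeasureTheory.setIntegral_const]
  have hm : volume (Set.Ioc (0:ℝ) 1 ∩ Set.Ico a b) = ENNReal.ofReal (b - a) := by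
    apply le_antisymm
    · calc volume (Set.Ioc (0:ℝ) 1 ∩ Set.Ico a b) ≤ volume (Set.Ico a b) :=
            measure_mono Set.inter_subset_right
        _ = ENNReal.ofReal (b - a) := Real.volume_Ico
    · calc ENNReal.ofReal (b - a) = volume (Set.Ioo a b) := Real.volume_Ioo.symm
        _ ≤ volume (Set.Ioc (0:ℝ) 1 ∩ Set.Ico a b) := by
            apply measure_mono
            intro t ht
            exact ⟨⟨lt_of_le_of_lt ha.1 ht.1, le_trans (le_of_lt ht.2) hb.2⟩,
              ⟨le_of_lt ht.1, ht.2⟩⟩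
  rw [measureReal_def, hm, ENNReal.toReal_ofReal (by linarith), smul_eq_mul, mul_one,
    abs_sub_comm, abs_of_nonneg (by linarith)]

lemma card_filter_lt_fin (n m : ℕ) :
    (Finset.univ.filter fun i : Fin n => (i : ℕ) < m).card = min m n := by
  rcases le_or_gt n m with h | h
  · have : (Finset.univ.filter fun i : Fin n => (i : ℕ) < m) = Finset.univ := by
      ext i; simp [lt_of_lt_of_le i.isLt h]
    rw [this, Finset.card_univ, Fintype.card_fin, min_eq_right h]
  · have : (Finset.univ.filter fun i : Fin n => (i : ℕ) < m) = Finset.Iio (⟨m, h⟩ : Fin n) := by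
      ext i; simp [Fin.lt_def]
    rw [this, Fin.card_Iio, min_eq_left (le_of_lt h)]

lemma Hbound (n : ℕ) (hn : 1 ≤ n) (t : ℝ) (ht : t ∈ Set.Icc (0:ℝ) 1) :
    |((Finset.univ.filter fun i : Fin n => (((i:ℕ):ℝ)+1)/(n:ℝ) ≤ t).card : ℝ) - (n:ℝ) * t| ≤ 1 := by
  have hn' : (0:ℝ) < n := by exact_mod_cast hn
  have hnt : (0:ℝ) ≤ n * t := mul_nonneg hn'.le ht.1
  set m := ⌊(n:ℝ) * t⌋₊ with hm
  have hfilt : (Finset.univ.filter fun i : Fin n => (((i:ℕ):ℝ)+1)/(n:ℝ) ≤ t)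
      = (Finset.univ.filter fun i : Fin n => (i : ℕ) < m) := by
    apply Finset.filter_congr
    intro i _
    rw [div_le_iff₀ hn', ← Nat.cast_one (R := ℝ), ← Nat.cast_add, mul_comm t (n:ℝ)]
    rw [show ((i:ℕ) < m ↔ (i:ℕ) + 1 ≤ m) from Nat.lt_iff_add_one_le]
    rw [Nat.le_floor_iff hnt]
  rw [hfilt, card_filter_lt_fin]
  have h1 : (m : ℝ) ≤ (n:ℝ) * t := Nat.floor_le hnt
  have h2 : (n:ℝ) * t < (m : ℝ) + 1 := Nat.lt_floor_add_one _
  rcases le_total m n with h | h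
  · rw [min_eq_left h]
    rw [abs_le]; constructor <;> linarith
  · rw [min_eq_right h]
    have h3 : (n:ℝ) ≤ (m:ℝ) := by exact_mod_cast h
    have h4 : (n:ℝ) * t ≤ (n:ℝ) * 1 := mul_le_mul_of_nonneg_left ht.2 hn'.le
    rw [abs_le]; constructor <;> [linarith; linarith]

/-- for sorted points `0 ≤ x_1 ≤ … ≤ x_n ≤ 1` with energy
`E = ∑_{i=1}^n |x_i − i/n|`, one has `|∫_0^1 |#{i : x_i ≤ t} − n t| dt − E| ≤ 1`. -/
theorem stmt_5 (n : ℕ) (hn : 1 ≤ n) (x : Fin n → ℝ) (hmono : Monotone x)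
    (hx : ∀ i, x i ∈ Set.Icc (0 : ℝ) 1) :
    |(∫ t in (0 : ℝ)..1,
        |((Finset.univ.filter fun i : Fin n => x i ≤ t).card : ℝ) - (n : ℝ) * t|) -
      (∑ i : Fin n, |x i - (((i : ℕ) : ℝ) + 1) / (n : ℝ)|)| ≤ 1 := by
  have hn' : (0:ℝ) < n := by exact_mod_cast hn
  set c : Fin n → ℝ := fun i => (((i : ℕ) : ℝ) + 1) / (n : ℝ) with hcdef
  have hcmem : ∀ i, c i ∈ Set.Icc (0:ℝ) 1 := by
    intro i
    constructor
    · positivity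
    · rw [hcdef, div_le_one hn']
      have : ((i:ℕ):ℝ) + 1 ≤ (n:ℝ) := by exact_mod_cast i.isLt
      linarith
  have hcmono : Monotone c := by
    intro i j hij
    show (((i:ℕ):ℝ)+1)/(n:ℝ) ≤ (((j:ℕ):ℝ)+1)/(n:ℝ)
    have : ((i:ℕ):ℝ) ≤ ((j:ℕ):ℝ) := by exact_mod_cast hij
    gcongr
  set G : ℝ → ℝ := fun t => ((Finset.univ.filter fun i : Fin n => x i ≤ t).card : ℝ) with hGdef
  set H : ℝ → ℝ := fun t => ((Finset.univ.filter fun i : Fin n => c i ≤ t).card : ℝ) with hHdef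
  have hGsum : ∀ t, G t = ∑ i : Fin n, (if x i ≤ t then (1:ℝ) else 0) := by
    intro t
    show ((Finset.univ.filter fun i : Fin n => x i ≤ t).card : ℝ) = _
    rw [Finset.card_filter]
    push_cast
    rfl
  have hHsum : ∀ t, H t = ∑ i : Fin n, (if c i ≤ t then (1:ℝ) else 0) := by
    intro t
    show ((Finset.univ.filter fun i : Fin n => c i ≤ t).card : ℝ) = _
    rw [Finset.card_filter]
    push_cast
    rfl
  -- pointwise identity between |G - H| and the sum of |indicator differences|
  have habs : ∀ t, |G t - H t|
      = ∑ i : Fin n, |(if x i ≤ t then (1:ℝ) else 0) - (if c i ≤ t then (1:ℝ) else 0)| := by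
    intro t
    have hcomp : (∀ i, (if x i ≤ t then (1:ℝ) else 0) ≤ (if c i ≤ t then (1:ℝ) else 0)) ∨
        (∀ i, (if c i ≤ t then (1:ℝ) else 0) ≤ (if x i ≤ t then (1:ℝ) else 0)) := by
      by_cases hP : ∃ i : Fin n, x i ≤ t ∧ ¬ (c i ≤ t)
      · right
        obtain ⟨i, hxi, hci⟩ := hP
        intro j
        by_cases hcj : c j ≤ t
        · have hji : j ≤ i := by
            by_contra hji
            push_neg at hji
            exact hci (le_trans (hcmono hji.le) hcj)
          simp [hcj, le_trans (hmono hji) hxi]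
        · simp only [if_neg hcj]
          split_ifs <;> norm_num
      · left
        push_neg at hP
        intro j
        by_cases hxj : x j ≤ t
        · simp [hxj, hP j hxj]
        · simp only [if_neg hxj]
          split_ifs <;> norm_num
    rw [hGsum, hHsum]
    rcases hcomp with h | h
    · rw [abs_of_nonpos (sub_nonpos.2 (Finset.sum_le_sum fun i _ => h i))]
      rw [Finset.sum_congr rfl fun i _ => abs_of_nonpos (sub_nonpos.2 (h i))]
      simp [neg_sub, Finset.sum_sub_distrib]
    · rw [abs_of_nonneg (sub_nonneg.2 (Finset.sum_le_sum fun i _ => h i))]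
      rw [Finset.sum_congr rfl fun i _ => abs_of_nonneg (sub_nonneg.2 (h i))]
      rw [Finset.sum_sub_distrib]
  -- monotonicity / integrability facts
  have stepMono : ∀ a : ℝ, Monotone (fun t : ℝ => if a ≤ t then (1:ℝ) else 0) := by
    intro a s r hsr
    by_cases hs : a ≤ s
    · have hr : a ≤ r := hs.trans hsr
      simp [hs, hr]
    · by_cases hr : a ≤ r <;> simp [hs, hr]
  have hIntStep : ∀ i : Fin n, IntervalIntegrable
      (fun t => |(if x i ≤ t then (1:ℝ) else 0) - (if c i ≤ t then (1:ℝ) else 0)|)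
      volume 0 1 :=
    fun i => (((stepMono (x i)).intervalIntegrable).sub
      ((stepMono (c i)).intervalIntegrable)).abs
  have hGmono : Monotone G := by
    intro s r hsr
    show ((Finset.univ.filter fun i : Fin n => x i ≤ s).card : ℝ)
        ≤ ((Finset.univ.filter fun i : Fin n => x i ≤ r).card : ℝ)
    have hsub : (Finset.univ.filter fun i : Fin n => x i ≤ s)
        ⊆ (Finset.univ.filter fun i : Fin n => x i ≤ r) := by
      intro i hi
      simp only [Finset.mem_filter] at hi ⊢
      exact ⟨hi.1, hi.2.trans hsr⟩
    exact_mod_cast Finset.card_le_card hsub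
  have hHmono : Monotone H := by
    intro s r hsr
    show ((Finset.univ.filter fun i : Fin n => c i ≤ s).card : ℝ)
        ≤ ((Finset.univ.filter fun i : Fin n => c i ≤ r).card : ℝ)
    have hsub : (Finset.univ.filter fun i : Fin n => c i ≤ s)
        ⊆ (Finset.univ.filter fun i : Fin n => c i ≤ r) := by
      intro i hi
      simp only [Finset.mem_filter] at hi ⊢
      exact ⟨hi.1, hi.2.trans hsr⟩
    exact_mod_cast Finset.card_le_card hsub
  have hIntB : IntervalIntegrable (fun t => |G t - H t|) volume 0 1 :=
    (hGmono.intervalIntegrable.sub hHmono.intervalIntegrable).abs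
  have hIntA : IntervalIntegrable (fun t => |G t - (n:ℝ) * t|) volume 0 1 :=
    (hGmono.intervalIntegrable.sub
      ((continuous_const.mul continuous_id).intervalIntegrable _ _)).abs
  have hE : (∑ i : Fin n, |x i - c i|) = ∫ t in (0:ℝ)..1, |G t - H t| := by
    have h1 : ∀ i : Fin n, |x i - c i| = ∫ t in (0:ℝ)..1,
        |(if x i ≤ t then (1:ℝ) else 0) - (if c i ≤ t then (1:ℝ) else 0)| :=
      fun i => (step_integral (x i) (c i) (hx i) (hcmem i)).symm
    rw [Finset.sum_congr rfl fun i _ => h1 i,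
      ← intervalIntegral.integral_finset_sum (fun i _ => hIntStep i)]
    apply intervalIntegral.integral_congr
    intro t _
    exact (habs t).symm
  have key : (∫ t in (0:ℝ)..1, |G t - (n:ℝ) * t|) - (∑ i : Fin n, |x i - c i|)
      = ∫ t in (0:ℝ)..1, (|G t - (n:ℝ)*t| - |G t - H t|) := by
    rw [hE, intervalIntegral.integral_sub hIntA hIntB]
  show abs ((∫ t in (0:ℝ)..1, |G t - (n:ℝ)*t|) - ∑ i : Fin n, |x i - c i|) ≤ 1
  calc abs ((∫ t in (0:ℝ)..1, |G t - (n:ℝ)*t|) - ∑ i : Fin n, |x i - c i|)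
      = |∫ t in (0:ℝ)..1, (|G t - (n:ℝ)*t| - |G t - H t|)| := by rw [key]
    _ ≤ ∫ t in (0:ℝ)..1, |(|G t - (n:ℝ)*t| - |G t - H t|)| :=
        intervalIntegral.abs_integral_le_integral_abs zero_le_one
    _ ≤ ∫ t in (0:ℝ)..1, (1:ℝ) := by
        apply intervalIntegral.integral_mono_on zero_le_one
          ((hIntA.sub hIntB).abs) intervalIntegrable_const
        intro t ht
        have hb : |H t - (n:ℝ)*t| ≤ 1 := by
          have h2 := Hbound n hn t ht
          simpa [hHdef, hcdef] using h2
        calc |(|G t - (n:ℝ)*t| - |G t - H t|)|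
            ≤ |(G t - (n:ℝ)*t) - (G t - H t)| := abs_abs_sub_abs_le_abs_sub _ _
          _ = |H t - (n:ℝ)*t| := by congr 1; ring
          _ ≤ 1 := hb
    _ = 1 := by simp
end

section
/- Define h(α) = ∫_0^α sign(z − Φ^{-1}(z))·z dz + ∫_α^1 sign(z − Φ^{-1}(z))·(z − 1) dz + |α − Φ(α)| for α ∈ [0,1]. Then h attains its minimum over [0,1], and every point α* at which the minimum is attained satisfies Φ(α*) = α*. -/
open MeasureTheory Set


/-- with `h(α) = ∫_0^α sign(z − Φ⁻¹(z)) z dz + ∫_α^1 sign(z − Φ⁻¹(z)) (z−1) dz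
+ |α − Φ(α)|`, the function `h` attains its minimum on `[0,1]` and every minimizer is a
fixed point of `Φ`. Here `φ` is a continuous density on `[0,1]` bounded between `c > 0`
and `C`, `Φ` its CDF and `Ψ = Φ⁻¹` its inverse on `[0,1]`. -/
theorem stmt_6 (φ Φ Ψ : ℝ → ℝ) (c C : ℝ) (hc : 0 < c)
    (hφcont : ContinuousOn φ (Set.Icc 0 1))
    (hφ : ∀ t ∈ Set.Icc (0 : ℝ) 1, c ≤ φ t ∧ φ t ≤ C)
    (hint : (∫ t in (0 : ℝ)..1, φ t) = 1)
    (hΦ : ∀ x ∈ Set.Icc (0 : ℝ) 1, Φ x = ∫ t in (0 : ℝ)..x, φ t)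
    (hΨ : ∀ y ∈ Set.Icc (0 : ℝ) 1, Ψ y ∈ Set.Icc (0 : ℝ) 1 ∧ Φ (Ψ y) = y)
    (hΨ' : ∀ x ∈ Set.Icc (0 : ℝ) 1, Ψ (Φ x) = x)
    (hfin : {x ∈ Set.Icc (0 : ℝ) 1 | Φ x = x}.Finite)
    (h : ℝ → ℝ)
    (hh : ∀ α, h α = (∫ z in (0 : ℝ)..α, Real.sign (z - Ψ z) * z) +
      (∫ z in α..(1 : ℝ), Real.sign (z - Ψ z) * (z - 1)) + |α - Φ α|) :
    (∃ α ∈ Set.Icc (0 : ℝ) 1, ∀ β ∈ Set.Icc (0 : ℝ) 1, h α ≤ h β) ∧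
    ∀ α ∈ Set.Icc (0 : ℝ) 1, (∀ β ∈ Set.Icc (0 : ℝ) 1, h α ≤ h β) → Φ α = α := by
  have h0 : (0 : ℝ) ∈ Set.Icc (0 : ℝ) 1 := ⟨le_refl 0, zero_le_one⟩
  have h1 : (1 : ℝ) ∈ Set.Icc (0 : ℝ) 1 := ⟨zero_le_one, le_refl 1⟩
  -- φ is interval integrable on subintervals of [0,1]
  have hφii : ∀ a ∈ Set.Icc (0 : ℝ) 1, ∀ b ∈ Set.Icc (0 : ℝ) 1,
      IntervalIntegrable φ volume a b := by
    intro a ha b hb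
    exact (hφcont.mono (Set.uIcc_subset_Icc ha hb)).intervalIntegrable
  -- increments of Φ
  have hΦd : ∀ a ∈ Set.Icc (0 : ℝ) 1, ∀ b ∈ Set.Icc (0 : ℝ) 1,
      Φ b - Φ a = ∫ t in a..b, φ t := by
    intro a ha b hb
    have := intervalIntegral.integral_add_adjacent_intervals (hφii 0 h0 a ha) (hφii a ha b hb)
    rw [hΦ a ha, hΦ b hb]
    linarith
  -- strict monotonicity of Φ on [0,1]
  have hΦlt : ∀ a ∈ Set.Icc (0 : ℝ) 1, ∀ b ∈ Set.Icc (0 : ℝ) 1, a < b → Φ a < Φ b := by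
    intro a ha b hb hab
    have hsub : Set.Icc a b ⊆ Set.Icc (0 : ℝ) 1 := Set.Icc_subset_Icc ha.1 hb.2
    have hmono : (∫ t in a..b, (fun _ => c) t) ≤ ∫ t in a..b, φ t :=
      intervalIntegral.integral_mono_on hab.le intervalIntegrable_const (hφii a ha b hb)
        (fun t ht => (hφ t (hsub ht)).1)
    have hconst : (∫ t in a..b, (fun _ => c) t) = (b - a) * c := by
      simp [intervalIntegral.integral_const, smul_eq_mul]
    have := hΦd a ha b hb
    nlinarith
  have hΦ0 : Φ 0 = 0 := by rw [hΦ 0 h0]; simp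
  have hΦ1 : Φ 1 = 1 := by rw [hΦ 1 h1]; exact hint
  -- continuity of Φ on [0,1]
  have hΦcont : ContinuousOn Φ (Set.Icc (0 : ℝ) 1) := by
    have hint01 : IntegrableOn φ (Set.uIcc (0 : ℝ) 1) volume := by
      rw [Set.uIcc_of_le zero_le_one]
      rw [← intervalIntegrable_iff_integrableOn_Icc_of_le zero_le_one]
      exact hφii 0 h0 1 h1
    have := intervalIntegral.continuousOn_primitive_interval (a := 0) (b := 1) hint01
    rw [Set.uIcc_of_le zero_le_one] at this
    exact this.congr hΦ
  -- sign identity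
  have hsign : ∀ z ∈ Set.Icc (0 : ℝ) 1, Real.sign (z - Ψ z) = Real.sign (Φ z - z) := by
    intro z hz
    obtain ⟨hΨz, hΦΨ⟩ := hΨ z hz
    rcases lt_trichotomy (Φ z) z with hlt | heq | hgt
    · have hzΨ : z < Ψ z := by
        by_contra hcon
        push_neg at hcon
        rcases eq_or_lt_of_le hcon with he | hl
        · rw [he] at hΦΨ; exact absurd hΦΨ (ne_of_lt hlt)
        · have := hΦlt _ hΨz _ hz hl
          rw [hΦΨ] at this
          exact absurd this (not_lt.mpr hlt.le)
      rw [Real.sign_of_neg (by linarith), Real.sign_of_neg (by linarith)]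
    · have hzz : Ψ z = z := by
        have := hΨ' z hz
        rw [heq] at this
        exact this
      rw [hzz, heq, sub_self, Real.sign_zero]
    · have hzΨ : Ψ z < z := by
        by_contra hcon
        push_neg at hcon
        rcases eq_or_lt_of_le hcon with he | hl
        · rw [← he] at hΦΨ; exact absurd hΦΨ (ne_of_gt hgt)
        · have := hΦlt _ hz _ hΨz hl
          rw [hΦΨ] at this
          exact absurd this (not_lt.mpr hgt.le)
      rw [Real.sign_of_pos (by linarith), Real.sign_of_pos (by linarith)]
  -- measurability of Real.sign
  have msign : Measurable Real.sign := by
    have hrepr : Real.sign = fun r : ℝ => if r < 0 then (-1 : ℝ) else if 0 < r then 1 else 0 := by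
      funext r; rfl
    rw [hrepr]
    exact Measurable.ite measurableSet_Iio measurable_const
      (Measurable.ite measurableSet_Ioi measurable_const measurable_const)
  -- interval integrability of the integrands
  have hii : ∀ (g : ℝ → ℝ), Measurable g → (∀ z ∈ Set.Icc (0 : ℝ) 1, |g z| ≤ 1) →
      ∀ a ∈ Set.Icc (0 : ℝ) 1, ∀ b ∈ Set.Icc (0 : ℝ) 1,
      IntervalIntegrable (fun z => Real.sign (z - Ψ z) * g z) volume a b := by
    intro g hg hgb a ha b hb
    rw [intervalIntegrable_iff]
    have hSsub : Set.uIoc a b ⊆ Set.Icc (0 : ℝ) 1 :=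
      Set.uIoc_subset_uIcc.trans (Set.uIcc_subset_Icc ha hb)
    have hmeas : MeasurableSet (Set.uIoc a b) := measurableSet_uIoc
    have hΦae : AEMeasurable (fun z => Φ z - z) (volume.restrict (Set.uIoc a b)) :=
      ((hΦcont.mono hSsub).sub continuousOn_id).aemeasurable hmeas
    have hFae : AEMeasurable (fun z => Real.sign (Φ z - z) * g z)
        (volume.restrict (Set.uIoc a b)) :=
      (msign.comp_aemeasurable hΦae).mul hg.aemeasurable
    have hFint : IntegrableOn (fun z => Real.sign (Φ z - z) * g z) (Set.uIoc a b) volume := by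
      refine Integrable.mono' (g := fun _ => (1 : ℝ)) ?_ hFae.aestronglyMeasurable ?_
      · have : IntegrableOn (fun _ => (1 : ℝ)) (Set.uIoc a b) volume :=
          (integrableOn_const_iff (C := (1 : ℝ))).mpr (Or.inr (by rw [Set.uIoc]; exact measure_Ioc_lt_top))
        exact this
      · filter_upwards [ae_restrict_mem hmeas] with z hz
        have hsb : |Real.sign (Φ z - z)| ≤ 1 := by
          rcases Real.sign_apply_eq (Φ z - z) with hq | hq | hq <;> rw [hq] <;> norm_num
        have hgz : |g z| ≤ 1 := hgb z (hSsub hz)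
        calc ‖Real.sign (Φ z - z) * g z‖ = |Real.sign (Φ z - z)| * |g z| := by
              rw [Real.norm_eq_abs, abs_mul]
          _ ≤ 1 * 1 := by
              exact mul_le_mul hsb hgz (abs_nonneg _) zero_le_one
          _ = 1 := by norm_num
    refine hFint.congr_fun (fun z hz => ?_) hmeas
    rw [hsign z (hSsub hz)]
  have hgid : Measurable fun z : ℝ => z := measurable_id
  have hgsub : Measurable fun z : ℝ => z - 1 := measurable_id.sub measurable_const
  have hbid : ∀ z ∈ Set.Icc (0 : ℝ) 1, |(fun z : ℝ => z) z| ≤ 1 := by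
    intro z hz; rw [abs_le]; constructor <;> simp at hz ⊢ <;> linarith [hz.1, hz.2]
  have hbsub : ∀ z ∈ Set.Icc (0 : ℝ) 1, |(fun z : ℝ => z - 1) z| ≤ 1 := by
    intro z hz; rw [abs_le]; constructor <;> simp at hz ⊢ <;> linarith [hz.1, hz.2]
  have hf1 := hii (fun z => z) hgid hbid
  have hf2 := hii (fun z => z - 1) hgsub hbsub
  -- key increment identity
  have key : ∀ a ∈ Set.Icc (0 : ℝ) 1, ∀ b ∈ Set.Icc (0 : ℝ) 1, a ≤ b →
      h b - h a = (∫ z in a..b, Real.sign (z - Ψ z)) + (|b - Φ b| - |a - Φ a|) := by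
    intro a ha b hb hab
    have e1 := intervalIntegral.integral_add_adjacent_intervals (hf1 0 h0 a ha) (hf1 a ha b hb)
    have e2 := intervalIntegral.integral_add_adjacent_intervals (hf2 a ha b hb) (hf2 b hb 1 h1)
    have e3 : (∫ z in a..b, Real.sign (z - Ψ z) * z)
        - (∫ z in a..b, Real.sign (z - Ψ z) * (z - 1))
        = ∫ z in a..b, Real.sign (z - Ψ z) := by
      rw [← intervalIntegral.integral_sub (hf1 a ha b hb) (hf2 a ha b hb)]
      apply intervalIntegral.integral_congr
      intro z _
      ring
    rw [hh a, hh b]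
    linarith
  -- increment when Φ > id on [a,b]
  have keyup : ∀ a ∈ Set.Icc (0 : ℝ) 1, ∀ b ∈ Set.Icc (0 : ℝ) 1, a ≤ b →
      (∀ z ∈ Set.Icc a b, z < Φ z) → h b - h a = Φ b - Φ a := by
    intro a ha b hb hab hpos
    have e4 : (∫ z in a..b, Real.sign (z - Ψ z)) = ∫ _z in a..b, (1 : ℝ) := by
      apply intervalIntegral.integral_congr
      intro z hz
      rw [Set.uIcc_of_le hab] at hz
      have hzI : z ∈ Set.Icc (0 : ℝ) 1 := Set.Icc_subset_Icc ha.1 hb.2 hz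
      show Real.sign (z - Ψ z) = 1
      rw [hsign z hzI, Real.sign_of_pos (sub_pos.mpr (hpos z hz))]
    have hb' : b ≤ Φ b := (hpos b ⟨hab, le_rfl⟩).le
    have ha' : a ≤ Φ a := (hpos a ⟨le_rfl, hab⟩).le
    rw [key a ha b hb hab, e4]
    rw [abs_of_nonpos (by linarith : b - Φ b ≤ 0), abs_of_nonpos (by linarith : a - Φ a ≤ 0)]
    simp [intervalIntegral.integral_const, smul_eq_mul]
    ring
  -- increment when Φ < id on [a,b]
  have keydown : ∀ a ∈ Set.Icc (0 : ℝ) 1, ∀ b ∈ Set.Icc (0 : ℝ) 1, a ≤ b →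
      (∀ z ∈ Set.Icc a b, Φ z < z) → h b - h a = Φ a - Φ b := by
    intro a ha b hb hab hneg
    have e4 : (∫ z in a..b, Real.sign (z - Ψ z)) = ∫ _z in a..b, (-1 : ℝ) := by
      apply intervalIntegral.integral_congr
      intro z hz
      rw [Set.uIcc_of_le hab] at hz
      have hzI : z ∈ Set.Icc (0 : ℝ) 1 := Set.Icc_subset_Icc ha.1 hb.2 hz
      show Real.sign (z - Ψ z) = -1
      rw [hsign z hzI, Real.sign_of_neg (sub_neg.mpr (hneg z hz))]
    have hb' : Φ b ≤ b := (hneg b ⟨hab, le_rfl⟩).le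
    have ha' : Φ a ≤ a := (hneg a ⟨le_rfl, hab⟩).le
    rw [key a ha b hb hab, e4]
    rw [abs_of_nonneg (by linarith : (0:ℝ) ≤ b - Φ b), abs_of_nonneg (by linarith : (0:ℝ) ≤ a - Φ a)]
    simp [intervalIntegral.integral_const, smul_eq_mul]
    ring
  -- continuity of h on [0,1]
  have hhcont : ContinuousOn h (Set.Icc (0 : ℝ) 1) := by
    have hint1 : IntegrableOn (fun z => Real.sign (z - Ψ z) * z) (Set.uIcc (0 : ℝ) 1) volume := by
      rw [Set.uIcc_of_le zero_le_one, ← intervalIntegrable_iff_integrableOn_Icc_of_le zero_le_one]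
      exact hf1 0 h0 1 h1
    have hint2 : IntegrableOn (fun z => Real.sign (z - Ψ z) * (z - 1))
        (Set.uIcc (0 : ℝ) 1) volume := by
      rw [Set.uIcc_of_le zero_le_one, ← intervalIntegrable_iff_integrableOn_Icc_of_le zero_le_one]
      exact hf2 0 h0 1 h1
    have c1 := intervalIntegral.continuousOn_primitive_interval (a := 0) (b := 1) hint1
    have c2 := intervalIntegral.continuousOn_primitive_interval_left (a := 0) (b := 1) hint2
    rw [Set.uIcc_of_le zero_le_one] at c1 c2
    have c3 : ContinuousOn (fun α => |α - Φ α|) (Set.Icc (0 : ℝ) 1) :=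
      (continuousOn_id.sub hΦcont).abs
    have : ContinuousOn (fun α => (∫ z in (0 : ℝ)..α, Real.sign (z - Ψ z) * z) +
        (∫ z in α..(1 : ℝ), Real.sign (z - Ψ z) * (z - 1)) + |α - Φ α|) (Set.Icc (0 : ℝ) 1) :=
      (c1.add c2).add c3
    exact this.congr fun α _ => hh α
  constructor
  · obtain ⟨α, hα, hmin⟩ := isCompact_Icc.exists_isMinOn (Set.nonempty_Icc.mpr zero_le_one) hhcont
    exact ⟨α, hα, fun β hβ => hmin hβ⟩
  · intro α hα hmin
    by_contra hne
    rcases lt_or_gt_of_ne hne with hlt | hgt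
    · -- Φ α < α : move right
      have hα1 : α < 1 := by
        rcases eq_or_lt_of_le hα.2 with he | hl
        · rw [he] at hlt; rw [hΦ1] at hlt; exact absurd hlt (lt_irrefl 1)
        · exact hl
      -- continuity: find δ with Φ z < z on [α, α+δ'] ∩ [0,1]
      have hcw : ContinuousWithinAt (fun z => Φ z - z) (Set.Icc (0 : ℝ) 1) α :=
        (hΦcont.sub continuousOn_id) α hα
      rw [Metric.continuousWithinAt_iff] at hcw
      obtain ⟨δ, hδ, hδp⟩ := hcw (α - Φ α) (by linarith)
      set b := min (α + δ / 2) 1 with hbdef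
      have hαb : α < b := lt_min (by linarith) hα1
      have hbI : b ∈ Set.Icc (0 : ℝ) 1 := ⟨le_trans hα.1 hαb.le, min_le_right _ _⟩
      have hneg : ∀ z ∈ Set.Icc α b, Φ z < z := by
        intro z hz
        have hzI : z ∈ Set.Icc (0 : ℝ) 1 := ⟨le_trans hα.1 hz.1, le_trans hz.2 hbI.2⟩
        have hdist : dist z α < δ := by
          rw [Real.dist_eq, abs_lt]
          have : z ≤ α + δ / 2 := le_trans hz.2 (min_le_left _ _)
          constructor <;> [linarith [hz.1]; linarith]
        have := hδp hzI hdist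
        rw [Real.dist_eq, abs_lt] at this
        linarith [this.1, this.2]
      have hdec := keydown α hα b hbI hαb.le hneg
      have := hΦlt α hα b hbI hαb
      have hcontra : h b < h α := by linarith
      exact absurd (hmin b hbI) (not_le.mpr hcontra)
    · -- α < Φ α : move left
      have hα0 : 0 < α := by
        rcases eq_or_lt_of_le hα.1 with he | hl
        · rw [← he] at hgt; rw [hΦ0] at hgt; exact absurd hgt (lt_irrefl 0)
        · exact hl
      have hcw : ContinuousWithinAt (fun z => Φ z - z) (Set.Icc (0 : ℝ) 1) α :=
        (hΦcont.sub continuousOn_id) α hα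
      rw [Metric.continuousWithinAt_iff] at hcw
      obtain ⟨δ, hδ, hδp⟩ := hcw (Φ α - α) (by linarith)
      set a := max (α - δ / 2) 0 with hadef
      have haα : a < α := max_lt (by linarith) hα0
      have haI : a ∈ Set.Icc (0 : ℝ) 1 := ⟨le_max_right _ _, le_trans haα.le hα.2⟩
      have hpos : ∀ z ∈ Set.Icc a α, z < Φ z := by
        intro z hz
        have hzI : z ∈ Set.Icc (0 : ℝ) 1 := ⟨le_trans haI.1 hz.1, le_trans hz.2 hα.2⟩
        have hdist : dist z α < δ := by
          rw [Real.dist_eq, abs_lt]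
          have : α - δ / 2 ≤ z := le_trans (le_max_left _ _) hz.1
          constructor <;> [linarith; linarith [hz.2]]
        have := hδp hzI hdist
        rw [Real.dist_eq, abs_lt] at this
        linarith [this.1, this.2]
      have hinc := keyup a haI α hα haα.le hpos
      have := hΦlt a haI α hα haα
      have hcontra : h a < h α := by linarith
      exact absurd (hmin a haI) (not_le.mpr hcontra)
end

section
/- Define g(α) = ∫_0^α sign(z − Φ^{-1}(z))·z dz + ∫_α^1 sign(z − Φ^{-1}(z))·(z − 1) dz for α ∈ [0,1]. Let X = min of g(α) over all α ∈ [0,1] satisfying Φ(α) = α, and let Y = min of g(α) over all α ∈ [0,1]. Then X = Y; that is, the minimum of g restricted to fixed points of Φ equals the unrestricted minimum of g over [0,1]. -/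
lemma measurable_realSign : Measurable Real.sign := by
  have h : (Real.sign : ℝ → ℝ) = fun r => if r < 0 then (-1 : ℝ) else if 0 < r then 1 else 0 :=
    rfl
  rw [h]
  exact Measurable.ite (measurableSet_lt measurable_id measurable_const) measurable_const
    (Measurable.ite (measurableSet_lt measurable_const measurable_id) measurable_const
      measurable_const)

lemma abs_realSign_le (x : ℝ) : |Real.sign x| ≤ 1 := by
  rcases lt_trichotomy x 0 with h | h | h
  · rw [Real.sign_of_neg h]; norm_num
  · rw [h, Real.sign_zero]; norm_num
  · rw [Real.sign_of_pos h]; norm_num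

lemma realSign_nonneg {x : ℝ} (hx : 0 ≤ x) : 0 ≤ Real.sign x := by
  rcases eq_or_lt_of_le hx with h | h
  · rw [← h, Real.sign_zero]
  · rw [Real.sign_of_pos h]; norm_num

lemma realSign_nonpos {x : ℝ} (hx : x ≤ 0) : Real.sign x ≤ 0 := by
  rcases eq_or_lt_of_le hx with h | h
  · rw [h, Real.sign_zero]
  · rw [Real.sign_of_neg h]; norm_num

/-- with `g(α) = ∫_0^α sign(z − Φ⁻¹(z)) z dz + ∫_α^1 sign(z − Φ⁻¹(z)) (z−1) dz`,
the minimum of `g` over the fixed points of `Φ` equals the minimum of `g` over all of `[0,1]`. -/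
theorem stmt_7 (φ Φ Ψ : ℝ → ℝ) (c C : ℝ) (hc : 0 < c)
    (hφcont : ContinuousOn φ (Set.Icc 0 1))
    (hφ : ∀ t ∈ Set.Icc (0 : ℝ) 1, c ≤ φ t ∧ φ t ≤ C)
    (hint : (∫ t in (0 : ℝ)..1, φ t) = 1)
    (hΦ : ∀ x ∈ Set.Icc (0 : ℝ) 1, Φ x = ∫ t in (0 : ℝ)..x, φ t)
    (hΨ : ∀ y ∈ Set.Icc (0 : ℝ) 1, Ψ y ∈ Set.Icc (0 : ℝ) 1 ∧ Φ (Ψ y) = y)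
    (hΨ' : ∀ x ∈ Set.Icc (0 : ℝ) 1, Ψ (Φ x) = x)
    (hfin : {x ∈ Set.Icc (0 : ℝ) 1 | Φ x = x}.Finite)
    (g : ℝ → ℝ)
    (hg : ∀ α, g α = (∫ z in (0 : ℝ)..α, Real.sign (z - Ψ z) * z) +
      ∫ z in α..(1 : ℝ), Real.sign (z - Ψ z) * (z - 1)) :
    sInf (g '' {α ∈ Set.Icc (0 : ℝ) 1 | Φ α = α}) = sInf (g '' Set.Icc (0 : ℝ) 1) := by
  classical
  set I : Set ℝ := Set.Icc 0 1 with hI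
  have hI01 : Set.uIcc (0 : ℝ) 1 = I := Set.uIcc_of_le zero_le_one
  -- φ is interval integrable on [0,1] and subintervals
  have hφcontU : ContinuousOn φ (Set.uIcc (0:ℝ) 1) := by rw [hI01]; exact hφcont
  have hφint : IntervalIntegrable φ MeasureTheory.volume 0 1 :=
    hφcontU.intervalIntegrable
  have hsub : ∀ a ∈ I, ∀ b ∈ I, Set.uIcc a b ⊆ I := by
    intro a ha b hb
    rw [← hI01]
    exact Set.uIcc_subset_uIcc (by rw [hI01]; exact ha) (by rw [hI01]; exact hb)
  have hφint' : ∀ a ∈ I, ∀ b ∈ I, IntervalIntegrable φ MeasureTheory.volume a b := by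
    intro a ha b hb
    exact ContinuousOn.intervalIntegrable (hφcont.mono (hsub a ha b hb))
  -- strict monotonicity of Φ on [0,1]
  have hmono : ∀ x ∈ I, ∀ y ∈ I, x < y → Φ x < Φ y := by
    intro x hx y hy hxy
    rw [hΦ x hx, hΦ y hy]
    have h1 : (∫ t in (0:ℝ)..y, φ t) - ∫ t in (0:ℝ)..x, φ t = ∫ t in x..y, φ t :=
      intervalIntegral.integral_interval_sub_left
        (hφint' 0 (by simp [hI]) y hy) (hφint' 0 (by simp [hI]) x hx)
    have h2 : (∫ t in x..y, (c : ℝ)) ≤ ∫ t in x..y, φ t := by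
      apply intervalIntegral.integral_mono_on hxy.le intervalIntegrable_const
        (hφint' x hx y hy)
      intro t ht
      exact (hφ t (hsub x hx y hy (by rw [Set.uIcc_of_le hxy.le]; exact ht))).1
    rw [intervalIntegral.integral_const, smul_eq_mul] at h2
    nlinarith
  -- continuity of Φ on [0,1]
  have hΦcont : ContinuousOn Φ I := by
    have h1 : MeasureTheory.IntegrableOn φ (Set.uIcc (0:ℝ) 1) MeasureTheory.volume := by
      rw [hI01]
      exact hφcont.integrableOn_compact isCompact_Icc
    have h2 := intervalIntegral.continuousOn_primitive_interval h1
    rw [hI01] at h2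
    exact ContinuousOn.congr h2 hΦ
  -- the sign function on [0,1]
  set S : ℝ → ℝ := fun z => Real.sign (Φ z - z) with hS
  have hsign : ∀ z ∈ I, Real.sign (z - Ψ z) = S z := by
    intro z hz
    obtain ⟨hΨmem, hΨΦ⟩ := hΨ z hz
    show Real.sign (z - Ψ z) = Real.sign (Φ z - z)
    rcases lt_trichotomy (Ψ z) z with h | h | h
    · have h2 : z < Φ z := by
        have := hmono _ hΨmem _ hz h
        rwa [hΨΦ] at this
      rw [Real.sign_of_pos (by linarith : (0:ℝ) < z - Ψ z),
        Real.sign_of_pos (by linarith : (0:ℝ) < Φ z - z)]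
    · have h2 : Φ z = z := by rw [h] at hΨΦ; exact hΨΦ
      rw [h, h2]
    · have h2 : Φ z < z := by
        have := hmono _ hz _ hΨmem h
        rwa [hΨΦ] at this
      rw [Real.sign_of_neg (by linarith : z - Ψ z < 0),
        Real.sign_of_neg (by linarith : Φ z - z < 0)]
  -- integrability of S and related integrands on subintervals of [0,1]
  have hSmeas : MeasureTheory.AEStronglyMeasurable S (MeasureTheory.volume.restrict I) := by
    have h1 : ContinuousOn (fun z => Φ z - z) I := hΦcont.sub continuousOn_id
    have h2 : AEMeasurable (fun z => Φ z - z) (MeasureTheory.volume.restrict I) :=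
      h1.aemeasurable measurableSet_Icc
    exact (measurable_realSign.comp_aemeasurable h2).aestronglyMeasurable
  have hSZint : ∀ (F : ℝ → ℝ), Continuous F → (∀ z ∈ I, |F z| ≤ 1) →
      ∀ a ∈ I, ∀ b ∈ I, IntervalIntegrable (fun z => S z * F z) MeasureTheory.volume a b := by
    intro F hF hFb a ha b hb
    rw [intervalIntegrable_iff]
    have hsub2 : Set.uIoc a b ⊆ I := (Set.Ioc_subset_Icc_self).trans (by
      rw [← Set.uIcc] at *
      exact hsub a ha b hb)
    have hmain : MeasureTheory.IntegrableOn (fun z => S z * F z) I MeasureTheory.volume := by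
      apply MeasureTheory.Integrable.mono' (MeasureTheory.integrable_const (1 : ℝ))
      · exact hSmeas.mul (hF.aestronglyMeasurable.restrict)
      · apply MeasureTheory.ae_restrict_of_forall_mem measurableSet_Icc
        intro x hx
        have h1 : |S x| ≤ 1 := abs_realSign_le _
        have h2 : |F x| ≤ 1 := hFb x hx
        calc ‖S x * F x‖ = |S x| * |F x| := abs_mul _ _
          _ ≤ 1 * 1 := mul_le_mul h1 h2 (abs_nonneg _) zero_le_one
          _ = 1 := by norm_num
    exact hmain.mono_set hsub2
  have hSint : ∀ a ∈ I, ∀ b ∈ I, IntervalIntegrable S MeasureTheory.volume a b := by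
    intro a ha b hb
    have := hSZint (fun _ => 1) continuous_const (by intro z _; norm_num) a ha b hb
    simpa using this
  -- rewrite g using S
  have hgS : ∀ α ∈ I, g α =
      (∫ z in (0:ℝ)..α, S z * z) + ∫ z in α..(1:ℝ), S z * (z - 1) := by
    intro α hα
    rw [hg]
    congr 1
    · apply intervalIntegral.integral_congr
      intro z hz
      have hzI : z ∈ I := hsub 0 (by simp [hI]) α hα hz
      show Real.sign (z - Ψ z) * z = S z * z
      rw [hsign z hzI]
    · apply intervalIntegral.integral_congr
      intro z hz
      have hzI : z ∈ I := hsub α hα 1 (by simp [hI]) hz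
      show Real.sign (z - Ψ z) * (z - 1) = S z * (z - 1)
      rw [hsign z hzI]
  -- the difference formula : g α = g β + ∫_β^α S
  have h0I : (0:ℝ) ∈ I := by simp [hI]
  have h1I : (1:ℝ) ∈ I := by simp [hI]
  have hbnd_id : ∀ z ∈ I, |(fun z : ℝ => z) z| ≤ 1 := by
    intro z hz
    rw [abs_le]
    exact ⟨by linarith [hz.1], hz.2⟩
  have hbnd_z1 : ∀ z ∈ I, |(fun z : ℝ => z - 1) z| ≤ 1 := by
    intro z hz
    rw [abs_le]
    constructor
    · show (-1 : ℝ) ≤ z - 1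
      linarith [hz.1]
    · show z - 1 ≤ 1
      linarith [hz.2]
  have hint_id : ∀ a ∈ I, ∀ b ∈ I,
      IntervalIntegrable (fun z => S z * z) MeasureTheory.volume a b :=
    fun a ha b hb => hSZint (fun z => z) continuous_id hbnd_id a ha b hb
  have hint_z1 : ∀ a ∈ I, ∀ b ∈ I,
      IntervalIntegrable (fun z => S z * (z - 1)) MeasureTheory.volume a b :=
    fun a ha b hb =>
      hSZint (fun z => z - 1) (continuous_id.sub continuous_const) hbnd_z1 a ha b hb
  have hdiff : ∀ α ∈ I, ∀ β ∈ I, g α = g β + ∫ z in β..α, S z := by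
    intro α hα β hβ
    rw [hgS α hα, hgS β hβ]
    have e1 : (∫ z in (0:ℝ)..α, S z * z) - ∫ z in (0:ℝ)..β, S z * z
        = ∫ z in β..α, S z * z :=
      intervalIntegral.integral_interval_sub_left (hint_id 0 h0I α hα) (hint_id 0 h0I β hβ)
    have e2 : (∫ z in β..(1:ℝ), S z * (z - 1)) = (∫ z in β..α, S z * (z - 1)) +
        ∫ z in α..(1:ℝ), S z * (z - 1) :=
      (intervalIntegral.integral_add_adjacent_intervals
        (hint_z1 β hβ α hα) (hint_z1 α hα 1 h1I)).symm
    have e3 : (∫ z in β..α, S z * z) - ∫ z in β..α, S z * (z - 1) = ∫ z in β..α, S z := by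
      rw [← intervalIntegral.integral_sub (hint_id β hβ α hα) (hint_z1 β hβ α hα)]
      congr 1
      funext z
      ring
    linarith [e1, e3, e2]
  -- fixed-point set facts
  set F : Set ℝ := {x ∈ I | Φ x = x} with hFdef
  have h0F : (0:ℝ) ∈ F := by
    refine ⟨h0I, ?_⟩
    rw [hΦ 0 h0I, intervalIntegral.integral_same]
  have h1F : (1:ℝ) ∈ F := ⟨h1I, by rw [hΦ 1 h1I, hint]⟩
  -- key step: for each α ∈ [0,1] there is a fixed point β with g β ≤ g α
  have hkey : ∀ α ∈ I, ∃ β ∈ F, g β ≤ g α := by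
    intro α hα
    by_cases hfix : Φ α = α
    · exact ⟨α, ⟨hα, hfix⟩, le_rfl⟩
    · -- nearest fixed points below and above
      set F1 : Set ℝ := F ∩ Set.Icc 0 α with hF1
      set F2 : Set ℝ := F ∩ Set.Icc α 1 with hF2
      have hF1fin : F1.Finite := hfin.subset (Set.inter_subset_left)
      have hF2fin : F2.Finite := hfin.subset (Set.inter_subset_left)
      have hF1ne : F1.Nonempty := ⟨0, h0F, le_rfl, hα.1⟩
      have hF2ne : F2.Nonempty := ⟨1, h1F, hα.2, le_rfl⟩
      set β₁ := sSup F1 with hβ₁def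
      set β₂ := sInf F2 with hβ₂def
      have hβ₁mem : β₁ ∈ F1 := hF1ne.csSup_mem hF1fin
      have hβ₂mem : β₂ ∈ F2 := hF2ne.csInf_mem hF2fin
      have hβ₁le : β₁ ≤ α := hβ₁mem.2.2
      have hβ₂ge : α ≤ β₂ := hβ₂mem.2.1
      have hβ₁lt : β₁ < α := lt_of_le_of_ne hβ₁le (fun h => hfix (h ▸ hβ₁mem.1.2))
      have hβ₂gt : α < β₂ := lt_of_le_of_ne hβ₂ge (fun h => hfix (h ▸ hβ₂mem.1.2))
      have hβ₁I : β₁ ∈ I := hβ₁mem.1.1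
      have hβ₂I : β₂ ∈ I := hβ₂mem.1.1
      have hnofix : ∀ x, β₁ < x → x < β₂ → Φ x ≠ x := by
        intro x hx1 hx2 hΦx
        have hxI : x ∈ I := ⟨le_trans hβ₁I.1 hx1.le, le_trans hx2.le hβ₂I.2⟩
        rcases le_total x α with h | h
        · have : x ∈ F1 := ⟨⟨hxI, hΦx⟩, ⟨hxI.1, h⟩⟩
          exact absurd (le_csSup hF1fin.bddAbove this) (not_le.mpr hx1)
        · have : x ∈ F2 := ⟨⟨hxI, hΦx⟩, ⟨h, hxI.2⟩⟩
          exact absurd (csInf_le hF2fin.bddBelow this) (not_le.mpr hx2)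
      have hfcont : ∀ a ∈ I, ∀ b ∈ I, ContinuousOn (fun t => Φ t - t) (Set.Icc a b) := by
        intro a ha b hb
        apply (hΦcont.sub continuousOn_id).mono
        intro t ht
        exact ⟨le_trans ha.1 ht.1, le_trans ht.2 hb.2⟩
      rcases lt_or_gt_of_ne hfix with hlt | hgt
      · -- Φ α < α : take β₂, with S ≤ 0 on [α, β₂]
        refine ⟨β₂, hβ₂mem.1, ?_⟩
        have hneg : ∀ x ∈ Set.Icc α β₂, Φ x - x ≤ 0 := by
          intro x hx
          rcases eq_or_lt_of_le hx.2 with hxe | hxlt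
          · rw [hxe, hβ₂mem.1.2]; simp
          · by_contra hpos
            push_neg at hpos
            rcases eq_or_lt_of_le hx.1 with hxa | hxa
            · rw [← hxa] at hpos; linarith
            · -- f α < 0 < f x, IVT on [α, x] gives a fixed point in (α, x)
              have hcont := hfcont α hα x ⟨le_trans hα.1 hx.1, le_trans hxlt.le hβ₂I.2⟩
              have h0mem : (0:ℝ) ∈ Set.Ioo (Φ α - α) (Φ x - x) := ⟨by linarith, hpos⟩
              obtain ⟨y, hy, hy0⟩ := intermediate_value_Ioo hxa.le hcont h0mem
              exact hnofix y (lt_trans hβ₁lt hy.1) (lt_trans hy.2 hxlt)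
                (sub_eq_zero.mp hy0)
        have hSneg : ∀ u ∈ Set.Icc α β₂, S u ≤ 0 := fun u hu => realSign_nonpos (hneg u hu)
        have := hdiff β₂ hβ₂I α hα
        have hint2 : (∫ z in α..β₂, S z) ≤ 0 := by
          have h1 : (0:ℝ) ≤ ∫ z in α..β₂, -S z :=
            intervalIntegral.integral_nonneg hβ₂ge (fun u hu => by linarith [hSneg u hu])
          rw [intervalIntegral.integral_neg] at h1
          linarith
        linarith
      · -- α < Φ α : take β₁, with S ≥ 0 on [β₁, α]
        refine ⟨β₁, hβ₁mem.1, ?_⟩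
        have hpos : ∀ x ∈ Set.Icc β₁ α, 0 ≤ Φ x - x := by
          intro x hx
          rcases eq_or_lt_of_le hx.1 with hxe | hxlt
          · rw [← hxe, hβ₁mem.1.2]; simp
          · by_contra hneg
            push_neg at hneg
            rcases eq_or_lt_of_le hx.2 with hxa | hxa
            · rw [hxa] at hneg; linarith
            · have hcont := hfcont x ⟨le_trans hβ₁I.1 hxlt.le, le_trans hx.2 hα.2⟩ α hα
              have h0mem : (0:ℝ) ∈ Set.Ioo (Φ x - x) (Φ α - α) := ⟨hneg, by linarith⟩
              obtain ⟨y, hy, hy0⟩ := intermediate_value_Ioo hxa.le hcont h0mem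
              exact hnofix y (lt_trans hxlt hy.1) (lt_trans hy.2 hβ₂gt)
                (sub_eq_zero.mp hy0)
        have hSpos : ∀ u ∈ Set.Icc β₁ α, 0 ≤ S u := fun u hu => realSign_nonneg (hpos u hu)
        have := hdiff α hα β₁ hβ₁I
        have hint2 : (0:ℝ) ≤ ∫ z in β₁..α, S z :=
          intervalIntegral.integral_nonneg hβ₁le hSpos
        linarith
  -- conclude about infima
  have hAne : (g '' F).Nonempty := ⟨g 0, 0, h0F, rfl⟩
  have hAfin : (g '' F).Finite := hfin.image g
  have hAbdd : BddBelow (g '' F) := hAfin.bddBelow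
  have hBne : (g '' I).Nonempty := ⟨g 0, 0, h0I, rfl⟩
  have hlow : ∀ b ∈ g '' I, sInf (g '' F) ≤ b := by
    rintro b ⟨α, hα, rfl⟩
    obtain ⟨β, hβ, hle⟩ := hkey α hα
    exact le_trans (csInf_le hAbdd ⟨β, hβ, rfl⟩) hle
  have hBbdd : BddBelow (g '' I) := ⟨sInf (g '' F), fun b hb => hlow b hb⟩
  have h1 : sInf (g '' F) ≤ sInf (g '' I) := le_csInf hBne hlow
  have h2 : sInf (g '' I) ≤ sInf (g '' F) :=
    csInf_le_csInf hBbdd hAne (Set.image_mono (fun x hx => hx.1))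
  exact le_antisymm h1 h2
end

section
/- Let g : [0,1] → ℝ be continuous and not identically zero. Then max over 0 ≤ z ≤ 1 of [ ∫_0^z g(x)·x dx + ∫_z^1 g(x)·(x − 1) dx ] ≥ (1/16) · (∫_0^1 g(x)² dx)^{-1} · ( max over 0 ≤ x ≤ 1 of | ∫_0^x g(y) dy | )³. -/
open Set MeasureTheory intervalIntegral

/-- Cauchy–Schwarz on an interval. -/
lemma stmt8_cs {g : ℝ → ℝ} (hg : Continuous g) {a b : ℝ} (hab : a ≤ b) :
    (∫ x in a..b, g x) ^ 2 ≤ (b - a) * ∫ x in a..b, g x ^ 2 := by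
  rcases eq_or_lt_of_le hab with rfl | hlt
  · simp
  set I := ∫ x in a..b, g x with hI
  have h1 : IntervalIntegrable g volume a b := hg.intervalIntegrable a b
  have h2 : IntervalIntegrable (fun x => g x ^ 2) volume a b :=
    (hg.pow 2).intervalIntegrable a b
  have h0 : 0 ≤ ∫ x in a..b, ((b - a) * g x - I) ^ 2 :=
    intervalIntegral.integral_nonneg hab (fun x _ => sq_nonneg _)
  have hexp : ∫ x in a..b, ((b - a) * g x - I) ^ 2
      = (b - a) ^ 2 * (∫ x in a..b, g x ^ 2) - (b - a) * I ^ 2 := by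
    have e1 : EqOn (fun x => ((b - a) * g x - I) ^ 2)
        (fun x => (b - a) ^ 2 * g x ^ 2 - (2 * (b - a) * I) * g x + I ^ 2) (Set.uIcc a b) :=
      fun x _ => by ring
    rw [intervalIntegral.integral_congr e1,
      intervalIntegral.integral_add ((h2.const_mul _).sub (h1.const_mul _))
        intervalIntegrable_const,
      intervalIntegral.integral_sub (h2.const_mul _) (h1.const_mul _),
      intervalIntegral.integral_const_mul, intervalIntegral.integral_const_mul,
      intervalIntegral.integral_const, ← hI, smul_eq_mul]
    ring
  rw [hexp] at h0
  have h3 : (b - a) * I ^ 2 ≤ (b - a) * ((b - a) * ∫ x in a..b, g x ^ 2) := by nlinarith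
  exact le_of_mul_le_mul_left h3 (sub_pos.mpr hlt)

set_option maxHeartbeats 2000000 in
theorem stmt8_aux (g : ℝ → ℝ) (hg : Continuous g)
    (hne : ∃ x ∈ Set.Icc (0 : ℝ) 1, g x ≠ 0) :
    sSup ((fun z => (∫ x in (0 : ℝ)..z, g x * x) + ∫ x in z..(1 : ℝ), g x * (x - 1)) ''
        Set.Icc (0 : ℝ) 1) ≥
      1 / 16 * (∫ x in (0 : ℝ)..1, g x ^ 2)⁻¹ *
        (sSup ((fun z => |∫ y in (0 : ℝ)..z, g y|) '' Set.Icc (0 : ℝ) 1)) ^ 3 := by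
  have hgi : ∀ a b : ℝ, IntervalIntegrable g volume a b := fun a b => hg.intervalIntegrable a b
  set E := ∫ x in (0 : ℝ)..1, g x ^ 2 with hEdef
  set M := sSup ((fun z => |∫ y in (0 : ℝ)..z, g y|) '' Set.Icc (0 : ℝ) 1) with hMdef
  set G : ℝ → ℝ := fun z => ∫ y in (0 : ℝ)..z, g y with hGdef
  have hGd : ∀ x : ℝ, HasDerivAt G (g x) x := fun x =>
    intervalIntegral.integral_hasDerivAt_right (hgi 0 x)
      hg.stronglyMeasurable.stronglyMeasurableAtFilter hg.continuousAt
  have hGc : Continuous G := continuous_iff_continuousAt.mpr fun x => (hGd x).continuousAt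
  have hG0 : G 0 = 0 := intervalIntegral.integral_same
  have hE : 0 < E := by
    obtain ⟨c, hc, hgc⟩ := hne
    refine intervalIntegral.integral_pos one_pos ((hg.pow 2).continuousOn)
      (fun x _ => sq_nonneg _) ⟨c, hc, ?_⟩
    exact lt_of_le_of_ne (sq_nonneg _) (Ne.symm (pow_ne_zero 2 hgc))
  have key : ∀ a b : ℝ, 0 ≤ a → a ≤ b → b ≤ 1 → (G b - G a) ^ 2 ≤ (b - a) * E := by
    intro a b ha hab hb1
    have h1 : G b - G a = ∫ x in a..b, g x :=
      intervalIntegral.integral_interval_sub_left (hgi 0 b) (hgi 0 a)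
    have h2 := stmt8_cs hg hab
    have h3 : (∫ x in a..b, g x ^ 2) ≤ E :=
      intervalIntegral.integral_mono_interval ha hab hb1
        (Filter.Eventually.of_forall fun x => sq_nonneg _)
        ((hg.pow 2).intervalIntegrable 0 1)
    rw [h1]
    nlinarith [h2, h3, sub_nonneg.mpr hab]
  have hMex : ∃ x ∈ Icc (0 : ℝ) 1, M = |G x| :=
    IsCompact.exists_sSup_image_eq isCompact_Icc (nonempty_Icc.mpr zero_le_one)
      (hGc.abs.continuousOn)
  obtain ⟨x₀, hx₀, hMx₀⟩ := hMex
  have hM0 : 0 ≤ M := hMx₀ ▸ abs_nonneg _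
  set S := sSup (G '' Icc (0 : ℝ) 1) with hSdef
  have hbdd : BddAbove (G '' Icc (0 : ℝ) 1) := (isCompact_Icc.image hGc).bddAbove
  have hSub : ∀ x ∈ Icc (0 : ℝ) 1, G x ≤ S := fun x hx => le_csSup hbdd ⟨x, hx, rfl⟩
  have habs_bdd : BddAbove ((fun z => |G z|) '' Icc (0 : ℝ) 1) :=
    (isCompact_Icc.image hGc.abs).bddAbove
  have hMub : ∀ x ∈ Icc (0 : ℝ) 1, |G x| ≤ M := fun x hx => le_csSup habs_bdd ⟨x, hx, rfl⟩
  have hS0 : 0 ≤ S := hG0 ▸ hSub 0 ⟨le_rfl, zero_le_one⟩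
  set A := ∫ x in (0 : ℝ)..1, g x * (x - 1) with hAdef
  have hii : ∀ u v : ℝ, IntervalIntegrable (fun x => g x * (x - 1)) volume u v :=
    fun u v => (hg.mul (by continuity)).intervalIntegrable u v
  have hF : ∀ z ∈ Icc (0 : ℝ) 1,
      (∫ x in (0 : ℝ)..z, g x * x) + (∫ x in z..(1 : ℝ), g x * (x - 1)) = A + G z := by
    intro z _
    have e1 : (∫ x in (0 : ℝ)..z, g x * x)
        = ∫ x in (0 : ℝ)..z, (g x * (x - 1) + g x) :=
      intervalIntegral.integral_congr fun x _ => by ring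
    rw [e1, intervalIntegral.integral_add (hii 0 z) (hgi 0 z)]
    have e2 : (∫ x in (0 : ℝ)..z, g x * (x - 1)) + (∫ x in z..(1 : ℝ), g x * (x - 1)) = A :=
      intervalIntegral.integral_add_adjacent_intervals (hii 0 z) (hii z 1)
    have : G z = ∫ x in (0 : ℝ)..z, g x := rfl
    linarith [e2]
  have himg : ((fun z => (∫ x in (0 : ℝ)..z, g x * x) + ∫ x in z..(1 : ℝ), g x * (x - 1)) ''
      Set.Icc (0 : ℝ) 1) = ((fun z => A + G z) '' Icc (0 : ℝ) 1) := Set.image_congr hF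
  have hne' : (Icc (0 : ℝ) 1).Nonempty := nonempty_Icc.mpr zero_le_one
  have hlhs : sSup ((fun z => A + G z) '' Icc (0 : ℝ) 1) = A + S := by
    refine IsLUB.csSup_eq ⟨?_, ?_⟩ (hne'.image _)
    · rintro y ⟨z, hz, rfl⟩
      exact (add_le_add_iff_left A).mpr (hSub z hz)
    · intro b hb
      have hSb : S ≤ b - A := by
        refine csSup_le (hne'.image G) ?_
        rintro y ⟨z, hz, rfl⟩
        have := hb ⟨z, hz, rfl⟩
        dsimp at this
        linarith
      linarith
  have hparts : A = -∫ x in (0 : ℝ)..1, G x := by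
    have h := intervalIntegral.integral_mul_deriv_eq_deriv_mul
      (u := fun x => x - 1) (v := G) (u' := fun _ => (1 : ℝ)) (v' := g) (a := 0) (b := 1)
      (fun x _ => (hasDerivAt_id x).sub_const 1) (fun x _ => hGd x)
      intervalIntegrable_const (hgi 0 1)
    have e : A = ∫ x in (0 : ℝ)..1, (x - 1) * g x :=
      intervalIntegral.integral_congr fun x _ => mul_comm _ _
    rw [e, h, hG0]
    simp
  have hGint : IntervalIntegrable G volume 0 1 := hGc.intervalIntegrable 0 1
  have hint : A + S = ∫ x in (0 : ℝ)..1, (S - G x) := by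
    rw [intervalIntegral.integral_sub intervalIntegrable_const hGint,
      intervalIntegral.integral_const, hparts]
    simp
    ring
  clear_value A S G M E
  rw [himg, hlhs]
  rcases eq_or_lt_of_le hM0 with hM | hM
  · rw [← hM]
    have hnn : (0 : ℝ) ≤ A + S := by
      rw [hint]
      exact intervalIntegral.integral_nonneg zero_le_one
        (fun x hx => sub_nonneg.mpr (hSub x hx))
    simpa using hnn
  · set δ := M ^ 2 / (4 * E) with hδdef
    have hδpos : 0 < δ := by positivity
    have hM2E : M ^ 2 ≤ E := by
      have h := key 0 x₀ le_rfl hx₀.1 hx₀.2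
      rw [hG0, sub_zero] at h
      have : M ^ 2 = G x₀ ^ 2 := by rw [hMx₀, sq_abs]
      nlinarith [hx₀.1, hx₀.2, hE]
    have hδ4 : δ ≤ 1 / 4 := by
      rw [hδdef, div_le_iff₀ (by positivity)]
      nlinarith
    obtain ⟨a, ha0, hab1, hbound⟩ :
        ∃ a : ℝ, 0 ≤ a ∧ a + δ ≤ 1 ∧ ∀ x ∈ Icc a (a + δ), M / 2 ≤ S - G x := by
      rcases le_or_gt 0 (G x₀) with hsgn | hsgn
      · have hGx₀ : G x₀ = M := by rw [hMx₀, abs_of_nonneg hsgn]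
        refine ⟨0, le_rfl, by linarith, ?_⟩
        intro x hx
        have hx0 : 0 ≤ x := hx.1
        have hxδ : x ≤ δ := by linarith [hx.2]
        have h := key 0 x le_rfl hx0 (by linarith)
        rw [hG0, sub_zero] at h
        have h2 : G x ^ 2 ≤ M ^ 2 / 4 := by
          have hδE : δ * E = M ^ 2 / 4 := by
            rw [hδdef]; field_simp
          nlinarith [hE]
        have hGle : G x ≤ M / 2 := by nlinarith [hM]
        have hSM : M ≤ S := hGx₀ ▸ hSub x₀ hx₀
        linarith
      · have hGx₀ : G x₀ = -M := by
          have := abs_of_neg hsgn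
          rw [hMx₀]
          linarith [this]
        have hδE : δ * E = M ^ 2 / 4 := by rw [hδdef]; field_simp
        rcases le_or_gt x₀ (1 / 2) with hhalf | hhalf
        · refine ⟨x₀, hx₀.1, by linarith, ?_⟩
          intro x hx
          have h := key x₀ x hx₀.1 hx.1 (by linarith [hx.2])
          have h2 : (G x - G x₀) ^ 2 ≤ M ^ 2 / 4 := by nlinarith [h, hδE, hx.2, hE]
          rw [hGx₀] at h2
          have hGle : G x ≤ -(M / 2) := by
            by_contra hc
            push_neg at hc
            nlinarith [h2, hM]
          linarith [hS0]
        · refine ⟨x₀ - δ, by linarith, by linarith [hx₀.2], ?_⟩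
          intro x hx
          have hxu : x ≤ x₀ := by have := hx.2; linarith
          have hxl : x₀ - δ ≤ x := hx.1
          have h := key x x₀ (by linarith) hxu hx₀.2
          have h2 : (G x₀ - G x) ^ 2 ≤ M ^ 2 / 4 := by nlinarith [h, hδE, hxl, hE]
          rw [hGx₀] at h2
          have hGle : G x ≤ -(M / 2) := by
            by_contra hc
            push_neg at hc
            nlinarith [h2, hM]
          linarith [hS0]
    have iInt : ∀ u v : ℝ, IntervalIntegrable (fun x => S - G x) volume u v :=
      fun u v => (continuous_const.sub hGc).intervalIntegrable u v
    have hsplit : δ * (M / 2) ≤ ∫ x in (0 : ℝ)..1, (S - G x) := by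
      have e1 := intervalIntegral.integral_add_adjacent_intervals (iInt 0 a) (iInt a (a + δ))
      have e2 := intervalIntegral.integral_add_adjacent_intervals (iInt 0 (a + δ)) (iInt (a + δ) 1)
      have n1 : 0 ≤ ∫ x in (0 : ℝ)..a, (S - G x) :=
        intervalIntegral.integral_nonneg ha0
          (fun x hx => sub_nonneg.mpr (hSub x ⟨hx.1, hx.2.trans (by linarith)⟩))
      have n3 : 0 ≤ ∫ x in (a + δ)..1, (S - G x) :=
        intervalIntegral.integral_nonneg (by linarith)
          (fun x hx => sub_nonneg.mpr (hSub x ⟨le_trans (by linarith) hx.1, hx.2⟩))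
      have n2 : δ * (M / 2) ≤ ∫ x in a..(a + δ), (S - G x) := by
        have h := intervalIntegral.integral_mono_on (by linarith : a ≤ a + δ)
          intervalIntegrable_const (iInt a (a + δ)) (fun x hx => hbound x hx)
        rwa [intervalIntegral.integral_const, smul_eq_mul, add_sub_cancel_left] at h
      linarith
    rw [hint]
    have h16 : 1 / 16 * E⁻¹ * M ^ 3 ≤ δ * (M / 2) := by
      have hE' : E ≠ 0 := ne_of_gt hE
      rw [hδdef, div_mul_div_comm,
        show (1 : ℝ) / 16 * E⁻¹ * M ^ 3 = M ^ 3 / (16 * E) by field_simp,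
        div_le_div_iff₀ (by positivity) (by positivity)]
      nlinarith [hE, pow_pos hM 3]
    exact le_trans h16 hsplit

/-- for continuous `g : [0,1] → ℝ` not identically zero,
`max_{0≤z≤1} [∫_0^z g(x) x dx + ∫_z^1 g(x)(x−1) dx]
  ≥ (1/16) (∫_0^1 g²)⁻¹ (max_{0≤x≤1} |∫_0^x g|)³`. -/
theorem stmt_8 (g : ℝ → ℝ) (hg : ContinuousOn g (Set.Icc 0 1))
    (hne : ∃ x ∈ Set.Icc (0 : ℝ) 1, g x ≠ 0) :
    sSup ((fun z => (∫ x in (0 : ℝ)..z, g x * x) + ∫ x in z..(1 : ℝ), g x * (x - 1)) ''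
        Set.Icc (0 : ℝ) 1) ≥
      1 / 16 * (∫ x in (0 : ℝ)..1, g x ^ 2)⁻¹ *
        (sSup ((fun z => |∫ y in (0 : ℝ)..z, g y|) '' Set.Icc (0 : ℝ) 1)) ^ 3 := by
  set p : ℝ → ℝ := fun x => max 0 (min 1 x) with hp
  have hpmem : ∀ x, p x ∈ Icc (0 : ℝ) 1 :=
    fun x => ⟨le_max_left _ _, max_le zero_le_one (min_le_left _ _)⟩
  have hpx : ∀ x ∈ Icc (0 : ℝ) 1, p x = x := fun x hx => by
    simp only [hp, min_eq_right hx.2, max_eq_right hx.1]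
  set g₁ : ℝ → ℝ := fun x => g (p x) with hg₁def
  have hg₁ : Continuous g₁ :=
    hg.comp_continuous (continuous_const.max (continuous_const.min continuous_id)) hpmem
  have hEq : ∀ x ∈ Icc (0 : ℝ) 1, g₁ x = g x := fun x hx => by
    simp only [hg₁def]; rw [hpx x hx]
  have hsub : ∀ z ∈ Icc (0 : ℝ) 1, Set.uIcc 0 z ⊆ Icc (0 : ℝ) 1 := fun z hz => by
    rw [uIcc_of_le hz.1]; exact Icc_subset_Icc le_rfl hz.2
  have hsub' : ∀ z ∈ Icc (0 : ℝ) 1, Set.uIcc z 1 ⊆ Icc (0 : ℝ) 1 := fun z hz => by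
    rw [uIcc_of_le hz.2]; exact Icc_subset_Icc hz.1 le_rfl
  have key := stmt8_aux g₁ hg₁ (by
    obtain ⟨x, hx, hgx⟩ := hne
    exact ⟨x, hx, by rw [hEq x hx]; exact hgx⟩)
  have e1 : ((fun z => (∫ x in (0 : ℝ)..z, g₁ x * x) + ∫ x in z..(1 : ℝ), g₁ x * (x - 1)) ''
      Set.Icc (0 : ℝ) 1)
      = ((fun z => (∫ x in (0 : ℝ)..z, g x * x) + ∫ x in z..(1 : ℝ), g x * (x - 1)) ''
      Set.Icc (0 : ℝ) 1) := by
    refine Set.image_congr fun z hz => ?_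
    congr 1
    · exact intervalIntegral.integral_congr fun x hx => by rw [hEq x (hsub z hz hx)]
    · exact intervalIntegral.integral_congr fun x hx => by rw [hEq x (hsub' z hz hx)]
  have e2 : (∫ x in (0 : ℝ)..1, g₁ x ^ 2) = ∫ x in (0 : ℝ)..1, g x ^ 2 :=
    intervalIntegral.integral_congr fun x hx => by
      rw [hEq x (hsub 1 ⟨zero_le_one, le_rfl⟩ hx)]
  have e3 : ((fun z => |∫ y in (0 : ℝ)..z, g₁ y|) '' Set.Icc (0 : ℝ) 1)
      = ((fun z => |∫ y in (0 : ℝ)..z, g y|) '' Set.Icc (0 : ℝ) 1) := by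
    refine Set.image_congr fun z hz => ?_
    congr 1
    exact intervalIntegral.integral_congr fun x hx => hEq x (hsub z hz hx)
  rw [e1, e2, e3] at key
  exact key
end
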